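/- arXiv:1112.1313 — 4 statements merged into one kernel-verified Lean document; each statement's English description precedes it below -/
import Mathlib

section
/- If m ≥ 8 is even and s ≥ 2 is odd, then ms + 1 ≤ min-seed(C_m ⊘ C_{3s}, 3) ≤ ms + 2. -/
set_option linter.unusedSectionVars false
set_option linter.unusedVariables false
set_option linter.unnecessarySeqFocus false
set_option linter.unreachableTactic false
set_option linter.unusedTactic false
set_option maxHeartbeats 1000000

/-- Activation closure: `v` eventually becomes active when starting from seed set `S`
in graph `G` with thresholds `θ` (a vertex activates once at least `θ v` of its
neighbors are active). -/
inductive Activated {V : Type*} (G : SimpleGraph V) (θ : V → ℕ) (S : Set V) : V → Prop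
  | base {v : V} : v ∈ S → Activated G θ S v
  | step {v : V} (T : Finset V) (hadj : ∀ u ∈ T, G.Adj u v) (hcard : θ v ≤ T.card)
      (hact : ∀ u ∈ T, Activated G θ S u) : Activated G θ S v

/-- Minimum size of a target set whose activation closure is all of `V`. -/
noncomputable def minSeed {V : Type*} [Fintype V] (G : SimpleGraph V) (θ : V → ℕ) : ℕ :=
  sInf {k | ∃ S : Finset V, S.card = k ∧ ∀ v, Activated G θ (↑S) v}

/-- The torus cordalis `C_m ⊘ C_n` on vertices `(i,j)`, `i : ZMod m`, `j : Fin n`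
(`j` playing the role of `1,…,n`): edges `(i,j)(i±1,j)`, `(i,j)(i,j+1)` for `j < n`,
and the shifted wrap-around edge `(i,n)(i+1,1)`. -/
def torusCordalis (m n : ℕ) [NeZero m] : SimpleGraph (ZMod m × Fin n) :=
  SimpleGraph.fromRel (fun a b =>
    (b.1 = a.1 + 1 ∧ b.2 = a.2) ∨
    (a.1 = b.1 ∧ (b.2 : ℕ) = (a.2 : ℕ) + 1) ∨
    ((a.2 : ℕ) = n - 1 ∧ (b.2 : ℕ) = 0 ∧ b.1 = a.1 + 1))

namespace TCAux


open Finset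

variable {V : Type*} [Fintype V] [DecidableEq V] (G : SimpleGraph V) [DecidableRel G.Adj]

/-- one-step spread operator -/
def spread (A : Finset V) : Finset V :=
  A ∪ Finset.univ.filter (fun v => 3 ≤ (G.neighborFinset v ∩ A).card)

lemma subset_spread (A : Finset V) : A ⊆ spread G A := Finset.subset_union_left

lemma spread_mono : Monotone (spread G) := by
  intro A B h
  unfold spread
  apply Finset.union_subset_union h
  intro v hv
  simp only [Finset.mem_filter] at *
  exact ⟨hv.1, le_trans hv.2 (Finset.card_le_card (Finset.inter_subset_inter le_rfl h))⟩

lemma subset_spread_iter (A : Finset V) (t : ℕ) : A ⊆ (spread G)^[t] A := by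
  induction t with
  | zero => simp
  | succ t ih =>
    rw [Function.iterate_succ_apply']
    exact ih.trans (subset_spread G _)

lemma spread_iter_mono_t (A : Finset V) {t t' : ℕ} (h : t ≤ t') :
    (spread G)^[t] A ⊆ (spread G)^[t'] A := by
  obtain ⟨d, rfl⟩ := Nat.exists_eq_add_of_le h
  rw [Nat.add_comm, Function.iterate_add_apply]
  exact subset_spread_iter G _ d

lemma activated_mem_iter (S : Finset V) (v : V)
    (h : Activated G (fun _ => 3) (↑S) v) : ∃ t, v ∈ (spread G)^[t] S := by
  induction h with
  | base hv => exact ⟨0, by simpa using hv⟩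
  | @step v T hadj hcard hact ih =>
    choose f hf using ih
    classical
    refine ⟨(T.sup fun u => if h : u ∈ T then f u h else 0) + 1, ?_⟩
    set t0 := T.sup fun u => if h : u ∈ T then f u h else 0 with ht0
    rw [Function.iterate_succ_apply']
    apply Finset.mem_union_right
    simp only [Finset.mem_filter, Finset.mem_univ, true_and]
    refine le_trans hcard (Finset.card_le_card ?_)
    intro u hu
    refine Finset.mem_inter.2 ⟨?_, ?_⟩
    · rw [SimpleGraph.mem_neighborFinset]
      exact (hadj u hu).symm
    · refine spread_iter_mono_t G S (t' := t0) ?_ (hf u hu)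
      calc f u hu = if h : u ∈ T then f u h else 0 := by simp [hu]
        _ ≤ t0 := Finset.le_sup (f := fun u => if h : u ∈ T then f u h else 0) hu

lemma exists_iter_univ (S : Finset V)
    (h : ∀ v, Activated G (fun _ => 3) (↑S) v) :
    ∃ t, (spread G)^[t] S = Finset.univ := by
  have hex : ∀ v : V, ∃ t, v ∈ (spread G)^[t] S := fun v => activated_mem_iter G S v (h v)
  refine ⟨Finset.univ.sup fun v => Nat.find (hex v), ?_⟩
  apply Finset.eq_univ_of_forall
  intro v
  exact spread_iter_mono_t G S (Finset.le_sup (Finset.mem_univ v)) (Nat.find_spec (hex v))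

/-- reachability of `univ` from `A` by single activations -/
inductive ChainTo : Finset V → Prop
  | univ : ChainTo Finset.univ
  | step (v : V) (A : Finset V) (hv : v ∉ A) (h3 : 3 ≤ (G.neighborFinset v ∩ A).card)
      (h : ChainTo (insert v A)) : ChainTo A

lemma chainTo_of_subset (k : ℕ) : ∀ (A B : Finset V), ChainTo G B → A ⊆ B →
    (∀ v ∈ B, v ∉ A → 3 ≤ (G.neighborFinset v ∩ A).card) → (B \ A).card = k →
    ChainTo G A := by
  induction k with
  | zero =>
    intro A B hB hAB _ hcard
    have : B ⊆ A := by
      intro v hv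
      by_contra hvA
      have : v ∈ B \ A := Finset.mem_sdiff.2 ⟨hv, hvA⟩
      rw [Finset.card_eq_zero] at hcard
      simp [hcard] at this
    rwa [Finset.Subset.antisymm hAB this]
  | succ k ih =>
    intro A B hB hAB hcnt hcard
    have hne : (B \ A).Nonempty := by
      rw [← Finset.card_pos, hcard]; omega
    obtain ⟨v, hv⟩ := hne
    rw [Finset.mem_sdiff] at hv
    refine ChainTo.step v A hv.2 (hcnt v hv.1 hv.2) ?_
    refine ih (insert v A) B hB (Finset.insert_subset hv.1 hAB) ?_ ?_
    · intro u hu huA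
      have huA' : u ∉ A := fun h => huA (Finset.mem_insert_of_mem h)
      exact le_trans (hcnt u hu huA')
        (Finset.card_le_card (Finset.inter_subset_inter le_rfl (Finset.subset_insert v A)))
    · rw [Finset.sdiff_insert, Finset.card_erase_of_mem (Finset.mem_sdiff.2 hv)]
      omega



open Finset

variable {V : Type*} [Fintype V] [DecidableEq V] (G : SimpleGraph V) [DecidableRel G.Adj]

/-- boundary potential: number of (vertex-in-A, neighbor-outside-A) incidences -/
def bd (A : Finset V) : ℕ := ∑ u ∈ A, ((G.neighborFinset u) \ A).card

lemma bd_univ : bd G (Finset.univ : Finset V) = 0 := by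
  unfold bd
  apply Finset.sum_eq_zero
  intro u _
  simp

lemma bd_insert (A : Finset V) (v : V) (hv : v ∉ A) :
    bd G (insert v A) + (G.neighborFinset v ∩ A).card
      = bd G A + ((G.neighborFinset v) \ insert v A).card := by
  classical
  unfold bd
  rw [Finset.sum_insert hv]
  have key : ∀ u ∈ A, ((G.neighborFinset u) \ A).card
      = ((G.neighborFinset u) \ insert v A).card + (if v ∈ G.neighborFinset u then 1 else 0) := by
    intro u hu
    have h1 : (G.neighborFinset u) \ insert v A = ((G.neighborFinset u) \ A).erase v := by
      rw [Finset.sdiff_insert]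
    rw [h1]
    by_cases hvu : v ∈ G.neighborFinset u
    · have : v ∈ (G.neighborFinset u) \ A := Finset.mem_sdiff.2 ⟨hvu, hv⟩
      rw [Finset.card_erase_of_mem this, if_pos hvu]
      have : 0 < ((G.neighborFinset u) \ A).card := Finset.card_pos.2 ⟨v, this⟩
      omega
    · rw [Finset.erase_eq_of_notMem (fun h => hvu (Finset.mem_sdiff.1 h).1), if_neg hvu]
      omega
  rw [Finset.sum_congr rfl key, Finset.sum_add_distrib]
  have h2 : (∑ u ∈ A, if v ∈ G.neighborFinset u then 1 else 0)
      = (G.neighborFinset v ∩ A).card := by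
    rw [← Finset.card_filter]
    congr 1
    ext u
    simp only [Finset.mem_filter, Finset.mem_inter, SimpleGraph.mem_neighborFinset]
    constructor
    · rintro ⟨hu, hadj⟩; exact ⟨hadj.symm, hu⟩
    · rintro ⟨hadj, hu⟩; exact ⟨hu, hadj.symm⟩
  rw [h2]
  ring

lemma bd_lower (hdeg : ∀ v : V, (G.neighborFinset v).card = 4)
    {A : Finset V} (h : ChainTo G A) :
    A = Finset.univ ∨ 2 * (Fintype.card V - A.card) + 2 ≤ bd G A := by
  induction h with
  | univ => exact Or.inl rfl
  | step v A hv h3 hins ih =>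
    right
    have hAcard : (insert v A).card = A.card + 1 := Finset.card_insert_of_notMem hv
    have hvnv : v ∉ G.neighborFinset v := by
      simp [SimpleGraph.mem_neighborFinset]
    have hpart : ((G.neighborFinset v) \ insert v A).card + (G.neighborFinset v ∩ A).card = 4 := by
      have h1 : (G.neighborFinset v) ∩ insert v A = (G.neighborFinset v) ∩ A := by
        ext u
        simp only [Finset.mem_inter, Finset.mem_insert]
        constructor
        · rintro ⟨hu, (rfl | hu2)⟩
          · exact absurd hu hvnv
          · exact ⟨hu, hu2⟩
        · rintro ⟨hu, hu2⟩; exact ⟨hu, Or.inr hu2⟩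
      rw [← h1, Finset.card_sdiff_add_card_inter, hdeg]
    have hins_le : (insert v A).card ≤ Fintype.card V := by
      rw [← Finset.card_univ]; exact Finset.card_le_card (Finset.subset_univ _)
    have hiden := bd_insert G A v hv
    rcases ih with heq | hle
    · -- insert v A = univ, so A = univ.erase v and bd A = 4
      have hU : Fintype.card V = A.card + 1 := by
        rw [← Finset.card_univ, ← heq, hAcard]
      have hNsub : G.neighborFinset v ∩ A = G.neighborFinset v := by
        apply Finset.inter_eq_left.2
        intro u hu
        have : u ∈ insert v A := heq ▸ Finset.mem_univ u
        rcases Finset.mem_insert.1 this with rfl | h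
        · exact absurd hu hvnv
        · exact h
      rw [heq, bd_univ, Finset.sdiff_eq_empty_iff_subset.2 (Finset.subset_univ _), Finset.card_empty, hNsub, hdeg] at hiden
      omega
    · have h4 : 3 ≤ (G.neighborFinset v ∩ A).card := h3
      omega

lemma bd_le (A : Finset V) (hdeg : ∀ v : V, (G.neighborFinset v).card = 4) :
    bd G A ≤ 4 * A.card := by
  unfold bd
  calc ∑ u ∈ A, ((G.neighborFinset u) \ A).card ≤ ∑ u ∈ A, 4 := by
        apply Finset.sum_le_sum
        intro u _
        calc ((G.neighborFinset u) \ A).card ≤ (G.neighborFinset u).card :=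
              Finset.card_le_card (Finset.sdiff_subset)
          _ = 4 := hdeg u
    _ = 4 * A.card := by rw [Finset.sum_const, smul_eq_mul, mul_comm]

/-- Main lower bound: any percolating set in a 4-regular graph has size
    at least (card V)/3 rounded strictly up when card V ≥ ... -/
theorem perc_lower (hdeg : ∀ v : V, (G.neighborFinset v).card = 4)
    (S : Finset V) (h : ∀ v, Activated G (fun _ => 3) (↑S) v) :
    2 * Fintype.card V + 2 ≤ 6 * S.card ∨ S = Finset.univ := by
  obtain ⟨t, ht⟩ := exists_iter_univ G S h
  have hchain : ChainTo G S := by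
    clear h
    induction t generalizing S with
    | zero => simp at ht; rw [ht]; exact ChainTo.univ
    | succ t ih =>
      rw [Function.iterate_succ_apply] at ht
      have hFS := ih (spread G S) ht
      refine chainTo_of_subset G _ S (spread G S) hFS (subset_spread G S) ?_ rfl
      intro v hv hvS
      rcases Finset.mem_union.1 hv with h1 | h1
      · exact absurd h1 hvS
      · exact (Finset.mem_filter.1 h1).2
  rcases bd_lower G hdeg hchain with heq | hle
  · exact Or.inr heq
  · left
    have h1 := bd_le G S hdeg
    have h2 : S.card ≤ Fintype.card V := by
      rw [← Finset.card_univ]; exact Finset.card_le_card (Finset.subset_univ _)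
    omega



section Geometry

variable {m n : ℕ} [NeZero m] [NeZero n]

lemma npos : 0 < n := Nat.pos_of_ne_zero (NeZero.ne n)

omit [NeZero n] in
lemma zm_cast_ne {a b : ℕ} (ha : a < m) (hb : b < m) (h : a ≠ b) :
    (a : ZMod m) ≠ (b : ZMod m) := by
  intro he
  have := congrArg ZMod.val he
  rw [ZMod.val_cast_of_lt ha, ZMod.val_cast_of_lt hb] at this
  exact h this

lemma zm_one_ne_zero (hm : 3 ≤ m) : (1 : ZMod m) ≠ 0 := by
  have := zm_cast_ne (m := m) (a := 1) (b := 0) (by omega) (by omega) (by omega)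
  simpa using this

lemma zm_two_ne_zero (hm : 3 ≤ m) : (2 : ZMod m) ≠ 0 := by
  have := zm_cast_ne (m := m) (a := 2) (b := 0) (by omega) (by omega) (by omega)
  simpa using this

lemma zm1 (hm : 3 ≤ m) (x : ZMod m) : x ≠ x + 1 := by
  intro h
  exact zm_one_ne_zero hm (by linear_combination -h)

lemma zm1' (hm : 3 ≤ m) (x : ZMod m) : x + 1 ≠ x := fun h => zm1 hm x h.symm

lemma zm3 (hm : 3 ≤ m) (x : ZMod m) : x ≠ x - 1 := by
  intro h
  exact zm_one_ne_zero hm (by linear_combination h)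

lemma zm2 (hm : 3 ≤ m) (x : ZMod m) : x + 1 ≠ x - 1 := by
  intro h
  exact zm_two_ne_zero hm (by linear_combination h)

lemma pne_fst {α β : Type*} {a c : α} {b d : β} (h : a ≠ c) : (a, b) ≠ (c, d) :=
  fun he => h (congrArg Prod.fst he)

lemma pne_snd {α β : Type*} {a c : α} {b d : β} (h : b ≠ d) : (a, b) ≠ (c, d) :=
  fun he => h (congrArg Prod.snd he)

lemma fne {k : ℕ} {a : Fin k} {b : ℕ} {h : b < k} (hne : (a : ℕ) ≠ b) :
    a ≠ (⟨b, h⟩ : Fin k) := fun he => hne (by rw [he])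

lemma fne' {k : ℕ} {a : Fin k} {b : ℕ} {h : b < k} (hne : b ≠ (a : ℕ)) :
    (⟨b, h⟩ : Fin k) ≠ a := fun he => hne (by rw [← he])

/-- spiral successor -/
def vsucc (v : ZMod m × Fin n) : ZMod m × Fin n :=
  if h : (v.2 : ℕ) + 1 < n then (v.1, ⟨(v.2 : ℕ) + 1, h⟩) else (v.1 + 1, ⟨0, npos⟩)

/-- spiral predecessor -/
def vpred (v : ZMod m × Fin n) : ZMod m × Fin n :=
  if h : 0 < (v.2 : ℕ) then (v.1, ⟨(v.2 : ℕ) - 1, by omega⟩)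
  else (v.1 - 1, ⟨n - 1, by have := npos (n := n); omega⟩)

lemma adj_iff (hm : 3 ≤ m) (v w : ZMod m × Fin n) :
    (torusCordalis m n).Adj v w ↔
      (w = (v.1 + 1, v.2) ∨ w = (v.1 - 1, v.2) ∨ w = vsucc v ∨ w = vpred v) := by
  rw [torusCordalis, SimpleGraph.fromRel_adj]
  constructor
  · rintro ⟨hne, h | h⟩
    · rcases h with ⟨h1, h2⟩ | ⟨h1, h2⟩ | ⟨h1, h2, h3⟩
      · left
        exact Prod.ext h1 h2
      · right; right; left
        rw [vsucc, dif_pos (h2 ▸ w.2.isLt)]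
        exact Prod.ext h1.symm (Fin.ext h2)
      · right; right; left
        rw [vsucc, dif_neg (by omega)]
        exact Prod.ext h3 (Fin.ext h2)
    · rcases h with ⟨h1, h2⟩ | ⟨h1, h2⟩ | ⟨h1, h2, h3⟩
      · right; left
        refine Prod.ext ?_ h2.symm
        rw [h1]; ring
      · right; right; right
        rw [vpred, dif_pos (by omega)]
        refine Prod.ext h1 (Fin.ext ?_)
        show (w.2 : ℕ) = (v.2 : ℕ) - 1
        omega
      · right; right; right
        rw [vpred, dif_neg (by omega)]
        refine Prod.ext ?_ (Fin.ext ?_)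
        · rw [h3]; ring
        · exact h1
  · intro h
    have hvlt := v.2.isLt
    rcases h with rfl | rfl | rfl | rfl
    · exact ⟨pne_fst (zm1 hm v.1), Or.inl (Or.inl ⟨rfl, rfl⟩)⟩
    · refine ⟨pne_fst (zm3 hm v.1), Or.inr (Or.inl ⟨by ring, rfl⟩)⟩
    · rw [vsucc]
      split_ifs with h
      · exact ⟨pne_snd (fne (by omega)),
          Or.inl (Or.inr (Or.inl ⟨rfl, rfl⟩))⟩
      · exact ⟨pne_fst (zm1 hm v.1),
          Or.inl (Or.inr (Or.inr ⟨by omega, rfl, rfl⟩))⟩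
    · rw [vpred]
      split_ifs with h
      · refine ⟨pne_snd (fne (by omega)),
          Or.inr (Or.inr (Or.inl ⟨rfl, ?_⟩))⟩
        show (v.2 : ℕ) = (v.2 : ℕ) - 1 + 1
        omega
      · refine ⟨pne_fst (zm3 hm v.1),
          Or.inr (Or.inr (Or.inr ⟨?_, by omega, by ring⟩))⟩
        show n - 1 = n - 1
        rfl

lemma deg_four (hm : 3 ≤ m) (hn : 3 ≤ n) [DecidableRel (torusCordalis m n).Adj]
    (v : ZMod m × Fin n) : ((torusCordalis m n).neighborFinset v).card = 4 := by
  classical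
  have hset : (torusCordalis m n).neighborFinset v =
      {(v.1 + 1, v.2), (v.1 - 1, v.2), vsucc v, vpred v} := by
    ext w
    rw [SimpleGraph.mem_neighborFinset, adj_iff hm]
    simp [Finset.mem_insert]
  rw [hset]
  have hvlt := v.2.isLt
  -- distinctness
  have d12 : ((v.1 + 1, v.2) : ZMod m × Fin n) ≠ (v.1 - 1, v.2) := pne_fst (zm2 hm v.1)
  have d13 : ((v.1 + 1, v.2) : ZMod m × Fin n) ≠ vsucc v := by
    rw [vsucc]; split_ifs with h
    · exact pne_fst (zm1' hm v.1)
    · exact pne_snd (fne (by omega))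
  have d14 : ((v.1 + 1, v.2) : ZMod m × Fin n) ≠ vpred v := by
    rw [vpred]; split_ifs with h
    · exact pne_fst (zm1' hm v.1)
    · exact pne_fst (zm2 hm v.1)
  have d23 : ((v.1 - 1, v.2) : ZMod m × Fin n) ≠ vsucc v := by
    rw [vsucc]; split_ifs with h
    · exact pne_fst fun he => zm3 hm v.1 he.symm
    · exact pne_fst fun he => zm2 hm v.1 he.symm
  have d24 : ((v.1 - 1, v.2) : ZMod m × Fin n) ≠ vpred v := by
    rw [vpred]; split_ifs with h
    · exact pne_fst fun he => zm3 hm v.1 he.symm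
    · exact pne_snd (fne (by omega))
  have d34 : (vsucc v : ZMod m × Fin n) ≠ vpred v := by
    rw [vsucc, vpred]
    split_ifs with h h2 h2
    · exact pne_snd (Fin.ne_of_val_ne (by show (v.2:ℕ)+1 ≠ (v.2:ℕ)-1; omega))
    · exact pne_fst (zm3 hm v.1)
    · exact pne_fst (zm1' hm v.1)
    · exact pne_fst (zm2 hm v.1)
  rw [Finset.card_insert_of_notMem (by simp [d12, d13, d14]),
    Finset.card_insert_of_notMem (by simp [d23, d24]),
    Finset.card_insert_of_notMem (by simp [d34]),
    Finset.card_singleton]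

end Geometry




section Constr

variable (m s : ℕ) [NeZero m] [NeZero s]

/-- vertex from natural-number coordinates -/
def mk (a b : ℕ) (hb : b < 3 * s) : ZMod m × Fin (3 * s) := ((a : ZMod m), ⟨b, hb⟩)

/-- class of column i -/
def clN (i : ℕ) : ℕ :=
  if i + 4 = m then 2 else if i + 3 = m then 0 else if i + 2 = m then 1
  else if i + 1 = m then 2 else i % 2

def seedCore : Finset (ZMod m × Fin (3 * s)) :=
  Finset.univ.filter (fun v => (v.2 : ℕ) % 3 = clN m v.1.val)

lemma spos : 0 < 3 * s := by
  have := Nat.pos_of_ne_zero (NeZero.ne s); omega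

def seedAll : Finset (ZMod m × Fin (3 * s)) :=
  seedCore m s ∪ {mk m s (m - 5) 0 (spos s), mk m s (m - 1) 0 (spos s)}

/-- `Act v`: v is eventually activated from the seed set -/
def Act (v : ZMod m × Fin (3 * s)) : Prop :=
  Activated (torusCordalis m (3 * s)) (fun _ => 3) (↑(seedAll m s)) v

variable {m s}
variable {p w : ℕ} (hp : m = p + 8) (hpe : p % 2 = 0) (hw : s = 2 * w + 3)

lemma mk_val_fst {a b : ℕ} (ha : a < m) (hb : b < 3 * s) : (mk m s a b hb).1.val = a :=
  ZMod.val_cast_of_lt ha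

lemma mk_ne_snd {a a' b b' : ℕ} {hb : b < 3 * s} {hb' : b' < 3 * s} (h : b ≠ b') :
    mk m s a b hb ≠ mk m s a' b' hb' := pne_snd (Fin.ne_of_val_ne h)

lemma mk_ne_fst {a a' b b' : ℕ} {hb : b < 3 * s} {hb' : b' < 3 * s}
    (ha : a < m) (ha' : a' < m) (h : a ≠ a') :
    mk m s a b hb ≠ mk m s a' b' hb' := pne_fst (zm_cast_ne ha ha' h)

lemma adjH (hm : 3 ≤ m) (a b : ℕ) (hb : b < 3 * s) :
    (torusCordalis m (3 * s)).Adj (mk m s a b hb) (mk m s (a + 1) b hb) := by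
  rw [torusCordalis, SimpleGraph.fromRel_adj]
  constructor
  · apply pne_fst
    intro he
    rw [Nat.cast_add, Nat.cast_one] at he
    have h1 : (1 : ZMod m) ≠ 0 := by
      have := zm_cast_ne (m := m) (a := 1) (b := 0) (by omega) (by omega) (by omega)
      simpa using this
    exact h1 (by linear_combination -he)
  · left; left
    refine ⟨?_, rfl⟩
    show ((a + 1 : ℕ) : ZMod m) = (a : ℕ) + 1
    push_cast; ring

lemma adjV (a b : ℕ) (hb : b < 3 * s) (hb1 : b + 1 < 3 * s) :
    (torusCordalis m (3 * s)).Adj (mk m s a b hb) (mk m s a (b + 1) hb1) := by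
  rw [torusCordalis, SimpleGraph.fromRel_adj]
  exact ⟨pne_snd (Fin.ne_of_val_ne (show b ≠ b + 1 by omega)),
    Or.inl (Or.inr (Or.inl ⟨rfl, rfl⟩))⟩

lemma adjW (hm : 3 ≤ m) (a b : ℕ) (hb : b < 3 * s) (hb1 : b + 1 = 3 * s) :
    (torusCordalis m (3 * s)).Adj (mk m s a b hb) (mk m s (a + 1) 0 (spos s)) := by
  rw [torusCordalis, SimpleGraph.fromRel_adj]
  constructor
  · exact pne_snd (Fin.ne_of_val_ne (show b ≠ 0 by have := spos s; omega))
  · left; right; right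
    refine ⟨show b = 3 * s - 1 by omega, rfl, ?_⟩
    show ((a + 1 : ℕ) : ZMod m) = (a : ℕ) + 1
    push_cast; ring

lemma mk_wrap {b : ℕ} {hb : b < 3 * s} : mk m s m b hb = mk m s 0 b hb := by
  unfold mk
  rw [ZMod.natCast_self, Nat.cast_zero]

lemma mk_congr {a a' b b' : ℕ} {hb : b < 3 * s} (h1 : a = a') (h2 : b = b') :
    mk m s a b hb = mk m s a' b' (h2 ▸ hb) := by subst h1; subst h2; rfl

lemma act3 {v a b c : ZMod m × Fin (3 * s)}
    (hab : a ≠ b) (hac : a ≠ c) (hbc : b ≠ c)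
    (ha : (torusCordalis m (3 * s)).Adj a v) (hb : (torusCordalis m (3 * s)).Adj b v)
    (hc : (torusCordalis m (3 * s)).Adj c v)
    (Aa : Act m s a) (Ab : Act m s b) (Ac : Act m s c) : Act m s v := by
  refine Activated.step {a, b, c} ?_ ?_ ?_
  · intro u hu
    rcases Finset.mem_insert.1 hu with rfl | hu
    · exact ha
    rcases Finset.mem_insert.1 hu with rfl | hu
    · exact hb
    · rw [Finset.mem_singleton] at hu; subst hu; exact hc
  · show 3 ≤ _
    rw [Finset.card_insert_of_notMem (by simp [hab, hac]),
      Finset.card_insert_of_notMem (by simp [hbc]), Finset.card_singleton]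
  · intro u hu
    rcases Finset.mem_insert.1 hu with rfl | hu
    · exact Aa
    rcases Finset.mem_insert.1 hu with rfl | hu
    · exact Ab
    · rw [Finset.mem_singleton] at hu; subst hu; exact Ac

lemma clN_lt3 (i : ℕ) : clN m i < 3 := by
  unfold clN
  split_ifs <;> omega

include hp in
lemma clN_low {a : ℕ} (ha : a ≤ p + 3) : clN m a = a % 2 := by
  unfold clN
  split_ifs <;> omega

include hp in
lemma clN_p4 : clN m (p + 4) = 2 := by unfold clN; split_ifs <;> omega
include hp in
lemma clN_p5 : clN m (p + 5) = 0 := by unfold clN; split_ifs <;> omega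
include hp in
lemma clN_p6 : clN m (p + 6) = 1 := by unfold clN; split_ifs <;> omega
include hp in
lemma clN_p7 : clN m (p + 7) = 2 := by unfold clN; split_ifs <;> omega

lemma mem_seed {a b : ℕ} (ha : a < m) (hb : b < 3 * s) (hcl : b % 3 = clN m a) :
    mk m s a b hb ∈ seedAll m s := by
  apply Finset.mem_union_left
  rw [seedCore, Finset.mem_filter]
  exact ⟨Finset.mem_univ _, by rw [mk_val_fst ha]; exact hcl⟩

lemma actS {a b : ℕ} (ha : a < m) (hb : b < 3 * s) (hcl : b % 3 = clN m a) :
    Act m s (mk m s a b hb) :=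
  Activated.base (by exact_mod_cast mem_seed ha hb hcl)

include hp in
lemma actX1 : Act m s (mk m s (p + 3) 0 (spos s)) := by
  apply Activated.base
  have h : mk m s (p + 3) 0 (spos s) = mk m s (m - 5) 0 (spos s) := mk_congr (by omega) rfl
  rw [h]
  exact_mod_cast Finset.mem_union_right _ (by simp)

include hp in
lemma actX2 : Act m s (mk m s (p + 7) 0 (spos s)) := by
  apply Activated.base
  have h : mk m s (p + 7) 0 (spos s) = mk m s (m - 1) 0 (spos s) := mk_congr (by omega) rfl
  rw [h]
  exact_mod_cast Finset.mem_union_right _ (by simp)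

include hp hpe in
lemma card_seedAll : (seedAll m s).card = m * s + 2 := by
  have hcore : (seedCore m s).card = m * s := by
    have hb : ∀ u : ZMod m × Fin s, 3 * (u.2 : ℕ) + clN m u.1.val < 3 * s := by
      intro u
      have h1 := clN_lt3 (m := m) u.1.val
      have h2 := u.2.isLt
      omega
    rw [Finset.card_bij' (i := fun v _ => ((v.1, ⟨(v.2 : ℕ) / 3, by
          have := v.2.isLt; omega⟩) : ZMod m × Fin s))
      (j := fun u _ => ((u.1, ⟨3 * (u.2 : ℕ) + clN m u.1.val, hb u⟩) : ZMod m × Fin (3 * s)))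
      (t := Finset.univ)]
    · rw [Finset.card_univ, Fintype.card_prod, ZMod.card, Fintype.card_fin]
    · intro v hv
      exact Finset.mem_univ _
    · intro u hu
      rw [seedCore, Finset.mem_filter]
      refine ⟨Finset.mem_univ _, ?_⟩
      have := clN_lt3 (m := m) u.1.val
      show (3 * (u.2 : ℕ) + clN m u.1.val) % 3 = clN m u.1.val
      omega
    · intro v hv
      rw [seedCore, Finset.mem_filter] at hv
      refine Prod.ext rfl (Fin.ext ?_)
      have hcl := hv.2
      show 3 * ((v.2 : ℕ) / 3) + clN m v.1.val = (v.2 : ℕ)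
      omega
    · intro u hu
      refine Prod.ext rfl (Fin.ext ?_)
      show (3 * (u.2 : ℕ) + clN m u.1.val) / 3 = (u.2 : ℕ)
      have := clN_lt3 (m := m) u.1.val
      omega
  rw [seedAll, Finset.card_union_of_disjoint, hcore]
  · rw [Finset.card_insert_of_notMem (Finset.notMem_singleton.2
      (mk_ne_fst (by omega) (by omega) (by omega))), Finset.card_singleton]
  · rw [Finset.disjoint_right]
    intro v hv
    rw [seedCore, Finset.mem_filter]
    rintro ⟨-, hcl⟩
    rcases Finset.mem_insert.1 hv with rfl | hv
    · rw [mk_val_fst (show m - 5 < m by omega)] at hcl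
      have h1 : clN m (m - 5) = 1 := by
        unfold clN; split_ifs <;> omega
      rw [h1] at hcl
      have h2 : (0 : ℕ) % 3 = 1 := hcl
      omega
    · rw [Finset.mem_singleton] at hv; subst hv
      rw [mk_val_fst (show m - 1 < m by omega)] at hcl
      have h1 : clN m (m - 1) = 2 := by
        unfold clN; split_ifs <;> omega
      rw [h1] at hcl
      have h2 : (0 : ℕ) % 3 = 2 := hcl
      omega


lemma adjH' (hm : 3 ≤ m) {a a' b : ℕ} (hb : b < 3 * s) (h : a' = a + 1) :
    (torusCordalis m (3 * s)).Adj (mk m s a b hb) (mk m s a' b hb) := by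
  subst h; exact adjH hm a b hb

lemma adjV' {a b b' : ℕ} (hb : b < 3 * s) (hb' : b' < 3 * s) (h : b' = b + 1) :
    (torusCordalis m (3 * s)).Adj (mk m s a b hb) (mk m s a b' hb') := by
  subst h; exact adjV a b hb hb'

lemma adjW' (hm : 3 ≤ m) {a a' b : ℕ} (hb : b < 3 * s) (h : b + 1 = 3 * s) (h2 : a' = a + 1) :
    (torusCordalis m (3 * s)).Adj (mk m s a b hb) (mk m s a' 0 (spos s)) := by
  subst h2; exact adjW hm a b hb h

include hp hpe hw

/-- column `p+7` is adjacent to column `0` -/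
lemma adjT (b : ℕ) (hb : b < 3 * s) :
    (torusCordalis m (3 * s)).Adj (mk m s (p + 7) b hb) (mk m s 0 b hb) := by
  have h := adjH (m := m) (s := s) (by omega) (p + 7) b hb
  rwa [mk_congr (show p + 7 + 1 = m by omega) rfl, mk_wrap] at h

omit hp hpe hw in
lemma act_congr {a a' b b' : ℕ} {hb : b < 3 * s} {hb' : b' < 3 * s}
    (h1 : a = a') (h2 : b = b') (h : Act m s (mk m s a b hb)) :
    Act m s (mk m s a' b' hb')
 := by subst h1; subst h2; exact h

lemma aI1 {c b : ℕ} (hc : c % 2 = 1) (hc2 : c ≤ p + 1) (hb3 : b % 3 = 0)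
    (hb : b + 1 < 3 * s) : Act m s (mk m s (c + 1) (b + 1) hb) := by
  apply act3 (a := mk m s (c + 1) (b) (by omega)) (b := mk m s (c) (b + 1) (by omega)) (c := mk m s (c + 2) (b + 1) (by omega))
  · exact mk_ne_snd (by omega)
  · exact mk_ne_snd (by omega)
  · exact mk_ne_fst (by omega) (by omega) (by omega)
  · exact adjV' (by omega) (by omega) (by omega)
  · exact adjH' (by omega) (by omega) (by omega)
  · exact (adjH' (by omega) (by omega) (by omega)).symm
  · exact actS (by omega) (by omega) (by rw [clN_low hp (show c + 1 ≤ p + 3 by omega)] <;> omega)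
  · exact actS (by omega) (by omega) (by rw [clN_low hp (show c ≤ p + 3 by omega)] <;> omega)
  · exact actS (by omega) (by omega) (by rw [clN_low hp (show c + 2 ≤ p + 3 by omega)] <;> omega)

lemma aI2 {c b : ℕ} (hc : c % 2 = 0) (hc2 : c ≤ p) (hb3 : b % 3 = 0)
    (hb : b < 3 * s) : Act m s (mk m s (c + 1) b hb) := by
  apply act3 (a := mk m s (c + 1) (b + 1) (by omega)) (b := mk m s (c) (b) (by omega)) (c := mk m s (c + 2) (b) (by omega))
  · exact mk_ne_snd (by omega)
  · exact mk_ne_snd (by omega)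
  · exact mk_ne_fst (by omega) (by omega) (by omega)
  · exact (adjV' (by omega) (by omega) (by omega)).symm
  · exact adjH' (by omega) (by omega) (by omega)
  · exact (adjH' (by omega) (by omega) (by omega)).symm
  · exact actS (by omega) (by omega) (by rw [clN_low hp (show c + 1 ≤ p + 3 by omega)] <;> omega)
  · exact actS (by omega) (by omega) (by rw [clN_low hp (show c ≤ p + 3 by omega)] <;> omega)
  · exact actS (by omega) (by omega) (by rw [clN_low hp (show c + 2 ≤ p + 3 by omega)] <;> omega)

lemma aG1 : Act m s (mk m s (p + 6) 0 (spos s)) := by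
  apply act3 (a := mk m s (p + 6) (1) (by omega)) (b := mk m s (p + 5) (0) (by omega)) (c := mk m s (p + 7) (0) (by omega))
  · exact mk_ne_snd (by omega)
  · exact mk_ne_snd (by omega)
  · exact mk_ne_fst (by omega) (by omega) (by omega)
  · exact (adjV' (by omega) (by omega) (by omega)).symm
  · exact adjH' (by omega) (by omega) (by omega)
  · exact (adjH' (by omega) (by omega) (by omega)).symm
  · exact actS (by omega) (by omega) (by rw [clN_p6 hp] <;> omega)
  · exact actS (by omega) (by omega) (by rw [clN_p5 hp] <;> omega)
  · exact actX2 hp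

lemma aG2 : Act m s (mk m s (p + 6) (6 * w + 8) (by omega)) := by
  apply act3 (a := mk m s (p + 6) (6 * w + 7) (by omega)) (b := mk m s (p + 7) (6 * w + 8) (by omega)) (c := mk m s (p + 7) (0) (by omega))
  · exact mk_ne_snd (by omega)
  · exact mk_ne_snd (by omega)
  · exact mk_ne_snd (by omega)
  · exact adjV' (by omega) (by omega) (by omega)
  · exact (adjH' (by omega) (by omega) (by omega)).symm
  · exact (adjW' (by omega) (by omega) (by omega) (by omega)).symm
  · exact actS (by omega) (by omega) (by rw [clN_p6 hp] <;> omega)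
  · exact actS (by omega) (by omega) (by rw [clN_p7 hp] <;> omega)
  · exact actX2 hp

lemma aG3 : Act m s (mk m s (p + 7) 1 (by omega)) := by
  apply act3 (a := mk m s (p + 7) (2) (by omega)) (b := mk m s (p + 6) (1) (by omega)) (c := mk m s (p + 7) (0) (by omega))
  · exact mk_ne_snd (by omega)
  · exact mk_ne_snd (by omega)
  · exact mk_ne_snd (by omega)
  · exact (adjV' (by omega) (by omega) (by omega)).symm
  · exact adjH' (by omega) (by omega) (by omega)
  · exact adjV' (by omega) (by omega) (by omega)
  · exact actS (by omega) (by omega) (by rw [clN_p7 hp] <;> omega)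
  · exact actS (by omega) (by omega) (by rw [clN_p6 hp] <;> omega)
  · exact actX2 hp

lemma aA0 : Act m s (mk m s 0 1 (by omega)) := by
  apply act3 (a := mk m s (0) (0) (by omega)) (b := mk m s (1) (1) (by omega)) (c := mk m s (p + 7) (1) (by omega))
  · exact mk_ne_snd (by omega)
  · exact mk_ne_snd (by omega)
  · exact mk_ne_fst (by omega) (by omega) (by omega)
  · exact adjV' (by omega) (by omega) (by omega)
  · exact (adjH' (by omega) (by omega) (by omega)).symm
  · exact adjT hp hpe hw _ _
  · exact actS (by omega) (by omega) (by rw [clN_low hp (show 0 ≤ p + 3 by omega)] <;> omega)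
  · exact actS (by omega) (by omega) (by rw [clN_low hp (show 1 ≤ p + 3 by omega)] <;> omega)
  · exact aG3 hp hpe hw

lemma aRow1start : Act m s (mk m s 0 2 (by omega)) := by
  apply act3 (a := mk m s (0) (1) (by omega)) (b := mk m s (0) (3) (by omega)) (c := mk m s (p + 7) (2) (by omega))
  · exact mk_ne_snd (by omega)
  · exact mk_ne_snd (by omega)
  · exact mk_ne_snd (by omega)
  · exact adjV' (by omega) (by omega) (by omega)
  · exact (adjV' (by omega) (by omega) (by omega)).symm
  · exact adjT hp hpe hw _ _
  · exact aA0 hp hpe hw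
  · exact actS (by omega) (by omega) (by rw [clN_low hp (show 0 ≤ p + 3 by omega)] <;> omega)
  · exact actS (by omega) (by omega) (by rw [clN_p7 hp] <;> omega)

lemma aRow1 {k : ℕ} (hk : k ≤ w) (h0 : Act m s (mk m s 0 (6 * k + 2) (by omega))) :
    ∀ i ≤ p + 3, Act m s (mk m s i (6 * k + 2) (by omega)) := by
  intro i hi
  induction i with
  | zero => exact h0
  | succ i ih =>
    have ihact := ih (by omega)
    by_cases hsp : i + 1 = p + 3
    · obtain rfl : i = p + 2 := by omega
      apply act3 (a := mk m s (p + 2) (6 * k + 2) (by omega)) (b := mk m s (p + 3) (6 * k + 1) (by omega)) (c := mk m s (p + 4) (6 * k + 2) (by omega))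
      · exact mk_ne_snd (by omega)
      · exact mk_ne_fst (by omega) (by omega) (by omega)
      · exact mk_ne_snd (by omega)
      · exact adjH' (by omega) (by omega) (by omega)
      · exact adjV' (by omega) (by omega) (by omega)
      · exact (adjH' (by omega) (by omega) (by omega)).symm
      · exact ihact
      · exact actS (by omega) (by omega) (by rw [clN_low hp (show p + 3 ≤ p + 3 by omega)] <;> omega)
      · exact actS (by omega) (by omega) (by rw [clN_p4 hp] <;> omega)
    · rcases Nat.even_or_odd (i + 1) with he | ho
      · have hi2 : (i + 1) % 2 = 0 := Nat.even_iff.1 he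
        apply act3 (a := mk m s (i) (6 * k + 2) (by omega)) (b := mk m s (i + 1) (6 * k + 1) (by omega)) (c := mk m s (i + 1) (6 * k + 3) (by omega))
        · exact mk_ne_snd (by omega)
        · exact mk_ne_snd (by omega)
        · exact mk_ne_snd (by omega)
        · exact adjH' (by omega) (by omega) (by omega)
        · exact adjV' (by omega) (by omega) (by omega)
        · exact (adjV' (by omega) (by omega) (by omega)).symm
        · exact ihact
        · exact act_congr rfl (by omega) (aI1 hp hpe hw (c := i) (b := 6 * k) (by omega) (by omega) (by omega) (by omega))
        · exact actS (by omega) (by omega) (by rw [clN_low hp (show i + 1 ≤ p + 3 by omega)] <;> omega)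
      · have hi2 : (i + 1) % 2 = 1 := Nat.odd_iff.1 ho
        apply act3 (a := mk m s (i) (6 * k + 2) (by omega)) (b := mk m s (i + 1) (6 * k + 1) (by omega)) (c := mk m s (i + 1) (6 * k + 3) (by omega))
        · exact mk_ne_snd (by omega)
        · exact mk_ne_snd (by omega)
        · exact mk_ne_snd (by omega)
        · exact adjH' (by omega) (by omega) (by omega)
        · exact adjV' (by omega) (by omega) (by omega)
        · exact (adjV' (by omega) (by omega) (by omega)).symm
        · exact ihact
        · exact actS (by omega) (by omega) (by rw [clN_low hp (show i + 1 ≤ p + 3 by omega)] <;> omega)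
        · exact aI2 hp hpe hw (c := i) (b := 6 * k + 3) (by omega) (by omega) (by omega) (by omega)

lemma aRowTop (h0 : Act m s (mk m s 0 (6 * w + 8) (by omega))) :
    ∀ i ≤ p + 3, Act m s (mk m s i (6 * w + 8) (by omega)) := by
  intro i hi
  induction i with
  | zero => exact h0
  | succ i ih =>
    have ihact := ih (by omega)
    by_cases hsp : i + 1 = p + 3
    · obtain rfl : i = p + 2 := by omega
      apply act3 (a := mk m s (p + 2) (6 * w + 8) (by omega)) (b := mk m s (p + 4) (6 * w + 8) (by omega)) (c := mk m s (p + 3) (6 * w + 7) (by omega))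
      · exact mk_ne_fst (by omega) (by omega) (by omega)
      · exact mk_ne_snd (by omega)
      · exact mk_ne_snd (by omega)
      · exact adjH' (by omega) (by omega) (by omega)
      · exact (adjH' (by omega) (by omega) (by omega)).symm
      · exact adjV' (by omega) (by omega) (by omega)
      · exact ihact
      · exact actS (by omega) (by omega) (by rw [clN_p4 hp] <;> omega)
      · exact actS (by omega) (by omega) (by rw [clN_low hp (show p + 3 ≤ p + 3 by omega)] <;> omega)
    · rcases Nat.even_or_odd (i + 1) with he | ho
      · have hi2 : (i + 1) % 2 = 0 := Nat.even_iff.1 he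
        by_cases hc2 : i + 1 ≤ p
        ·
          apply act3 (a := mk m s (i) (6 * w + 8) (by omega)) (b := mk m s (i + 1) (6 * w + 7) (by omega)) (c := mk m s (i + 2) (0) (by omega))
          · exact mk_ne_snd (by omega)
          · exact mk_ne_snd (by omega)
          · exact mk_ne_snd (by omega)
          · exact adjH' (by omega) (by omega) (by omega)
          · exact adjV' (by omega) (by omega) (by omega)
          · exact (adjW' (by omega) (by omega) (by omega) (by omega)).symm
          · exact ihact
          · exact act_congr rfl (by omega) (aI1 hp hpe hw (c := i) (b := 6 * w + 6) (by omega) (by omega) (by omega) (by omega))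
          · exact aI2 hp hpe hw (c := i + 1) (b := 0) (by omega) (by omega) (by omega) (by omega)
        · have hip : i + 1 = p + 2 := by omega
          apply act3 (a := mk m s (i) (6 * w + 8) (by omega)) (b := mk m s (i + 1) (6 * w + 7) (by omega)) (c := mk m s (i + 2) (0) (by omega))
          · exact mk_ne_snd (by omega)
          · exact mk_ne_snd (by omega)
          · exact mk_ne_snd (by omega)
          · exact adjH' (by omega) (by omega) (by omega)
          · exact adjV' (by omega) (by omega) (by omega)
          · exact (adjW' (by omega) (by omega) (by omega) (by omega)).symm
          · exact ihact
          · exact act_congr rfl (by omega) (aI1 hp hpe hw (c := i) (b := 6 * w + 6) (by omega) (by omega) (by omega) (by omega))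
          · exact act_congr (by omega) rfl (actX1 hp)
      · have hi2 : (i + 1) % 2 = 1 := Nat.odd_iff.1 ho
        apply act3 (a := mk m s (i) (6 * w + 8) (by omega)) (b := mk m s (i + 1) (6 * w + 7) (by omega)) (c := mk m s (i + 2) (0) (by omega))
        · exact mk_ne_snd (by omega)
        · exact mk_ne_snd (by omega)
        · exact mk_ne_snd (by omega)
        · exact adjH' (by omega) (by omega) (by omega)
        · exact adjV' (by omega) (by omega) (by omega)
        · exact (adjW' (by omega) (by omega) (by omega) (by omega)).symm
        · exact ihact
        · exact actS (by omega) (by omega) (by rw [clN_low hp (show i + 1 ≤ p + 3 by omega)] <;> omega)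
        · exact actS (by omega) (by omega) (by rw [clN_low hp (show i + 2 ≤ p + 3 by omega)] <;> omega)

lemma aStair1 {k : ℕ} (hk : k ≤ w)
    (hrow : ∀ i ≤ p + 3, Act m s (mk m s i (6 * k + 2) (by omega))) :
    Act m s (mk m s (p + 3) (6 * k + 3) (by omega)) ∧
    Act m s (mk m s (p + 4) (6 * k + 3) (by omega)) ∧
    Act m s (mk m s (p + 4) (6 * k + 4) (by omega)) ∧
    Act m s (mk m s (p + 5) (6 * k + 4) (by omega)) ∧
    Act m s (mk m s (p + 5) (6 * k + 5) (by omega)) ∧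
    Act m s (mk m s (p + 6) (6 * k + 5) (by omega)) ∧
    Act m s (mk m s (p + 6) (6 * k + 6) (by omega)) ∧
    Act m s (mk m s (p + 7) (6 * k + 6) (by omega)) ∧
    Act m s (mk m s (p + 7) (6 * k + 7) (by omega)) ∧
    Act m s (mk m s 0 (6 * k + 7) (by omega)) ∧
    Act m s (mk m s 0 (6 * k + 8) (by omega)) := by
  have hc1 : Act m s (mk m s (p + 3) (6 * k + 3) (by omega)) := by
    apply act3 (a := mk m s (p + 3) (6 * k + 2) (by omega)) (b := mk m s (p + 2) (6 * k + 3) (by omega)) (c := mk m s (p + 3) (6 * k + 4) (by omega))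
    · exact mk_ne_snd (by omega)
    · exact mk_ne_snd (by omega)
    · exact mk_ne_snd (by omega)
    · exact adjV' (by omega) (by omega) (by omega)
    · exact adjH' (by omega) (by omega) (by omega)
    · exact (adjV' (by omega) (by omega) (by omega)).symm
    · exact hrow (p + 3) (by omega)
    · exact actS (by omega) (by omega) (by rw [clN_low hp (show p + 2 ≤ p + 3 by omega)] <;> omega)
    · exact actS (by omega) (by omega) (by rw [clN_low hp (show p + 3 ≤ p + 3 by omega)] <;> omega)
  have hc2 : Act m s (mk m s (p + 4) (6 * k + 3) (by omega)) := by
    apply act3 (a := mk m s (p + 3) (6 * k + 3) (by omega)) (b := mk m s (p + 5) (6 * k + 3) (by omega)) (c := mk m s (p + 4) (6 * k + 2) (by omega))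
    · exact mk_ne_fst (by omega) (by omega) (by omega)
    · exact mk_ne_snd (by omega)
    · exact mk_ne_snd (by omega)
    · exact adjH' (by omega) (by omega) (by omega)
    · exact (adjH' (by omega) (by omega) (by omega)).symm
    · exact adjV' (by omega) (by omega) (by omega)
    · exact hc1
    · exact actS (by omega) (by omega) (by rw [clN_p5 hp] <;> omega)
    · exact actS (by omega) (by omega) (by rw [clN_p4 hp] <;> omega)
  have hc3 : Act m s (mk m s (p + 4) (6 * k + 4) (by omega)) := by
    apply act3 (a := mk m s (p + 4) (6 * k + 3) (by omega)) (b := mk m s (p + 3) (6 * k + 4) (by omega)) (c := mk m s (p + 4) (6 * k + 5) (by omega))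
    · exact mk_ne_snd (by omega)
    · exact mk_ne_snd (by omega)
    · exact mk_ne_snd (by omega)
    · exact adjV' (by omega) (by omega) (by omega)
    · exact adjH' (by omega) (by omega) (by omega)
    · exact (adjV' (by omega) (by omega) (by omega)).symm
    · exact hc2
    · exact actS (by omega) (by omega) (by rw [clN_low hp (show p + 3 ≤ p + 3 by omega)] <;> omega)
    · exact actS (by omega) (by omega) (by rw [clN_p4 hp] <;> omega)
  have hc4 : Act m s (mk m s (p + 5) (6 * k + 4) (by omega)) := by
    apply act3 (a := mk m s (p + 4) (6 * k + 4) (by omega)) (b := mk m s (p + 6) (6 * k + 4) (by omega)) (c := mk m s (p + 5) (6 * k + 3) (by omega))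
    · exact mk_ne_fst (by omega) (by omega) (by omega)
    · exact mk_ne_snd (by omega)
    · exact mk_ne_snd (by omega)
    · exact adjH' (by omega) (by omega) (by omega)
    · exact (adjH' (by omega) (by omega) (by omega)).symm
    · exact adjV' (by omega) (by omega) (by omega)
    · exact hc3
    · exact actS (by omega) (by omega) (by rw [clN_p6 hp] <;> omega)
    · exact actS (by omega) (by omega) (by rw [clN_p5 hp] <;> omega)
  have hc5 : Act m s (mk m s (p + 5) (6 * k + 5) (by omega)) := by
    apply act3 (a := mk m s (p + 5) (6 * k + 4) (by omega)) (b := mk m s (p + 5) (6 * k + 6) (by omega)) (c := mk m s (p + 4) (6 * k + 5) (by omega))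
    · exact mk_ne_snd (by omega)
    · exact mk_ne_snd (by omega)
    · exact mk_ne_snd (by omega)
    · exact adjV' (by omega) (by omega) (by omega)
    · exact (adjV' (by omega) (by omega) (by omega)).symm
    · exact adjH' (by omega) (by omega) (by omega)
    · exact hc4
    · exact actS (by omega) (by omega) (by rw [clN_p5 hp] <;> omega)
    · exact actS (by omega) (by omega) (by rw [clN_p4 hp] <;> omega)
  have hc6 : Act m s (mk m s (p + 6) (6 * k + 5) (by omega)) := by
    apply act3 (a := mk m s (p + 5) (6 * k + 5) (by omega)) (b := mk m s (p + 6) (6 * k + 4) (by omega)) (c := mk m s (p + 7) (6 * k + 5) (by omega))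
    · exact mk_ne_snd (by omega)
    · exact mk_ne_fst (by omega) (by omega) (by omega)
    · exact mk_ne_snd (by omega)
    · exact adjH' (by omega) (by omega) (by omega)
    · exact adjV' (by omega) (by omega) (by omega)
    · exact (adjH' (by omega) (by omega) (by omega)).symm
    · exact hc5
    · exact actS (by omega) (by omega) (by rw [clN_p6 hp] <;> omega)
    · exact actS (by omega) (by omega) (by rw [clN_p7 hp] <;> omega)
  have hc7 : Act m s (mk m s (p + 6) (6 * k + 6) (by omega)) := by
    apply act3 (a := mk m s (p + 6) (6 * k + 5) (by omega)) (b := mk m s (p + 5) (6 * k + 6) (by omega)) (c := mk m s (p + 6) (6 * k + 7) (by omega))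
    · exact mk_ne_snd (by omega)
    · exact mk_ne_snd (by omega)
    · exact mk_ne_snd (by omega)
    · exact adjV' (by omega) (by omega) (by omega)
    · exact adjH' (by omega) (by omega) (by omega)
    · exact (adjV' (by omega) (by omega) (by omega)).symm
    · exact hc6
    · exact actS (by omega) (by omega) (by rw [clN_p5 hp] <;> omega)
    · exact actS (by omega) (by omega) (by rw [clN_p6 hp] <;> omega)
  have hc8 : Act m s (mk m s (p + 7) (6 * k + 6) (by omega)) := by
    apply act3 (a := mk m s (p + 6) (6 * k + 6) (by omega)) (b := mk m s (p + 7) (6 * k + 5) (by omega)) (c := mk m s (0) (6 * k + 6) (by omega))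
    · exact mk_ne_snd (by omega)
    · exact mk_ne_fst (by omega) (by omega) (by omega)
    · exact mk_ne_snd (by omega)
    · exact adjH' (by omega) (by omega) (by omega)
    · exact adjV' (by omega) (by omega) (by omega)
    · exact (adjT hp hpe hw _ _).symm
    · exact hc7
    · exact actS (by omega) (by omega) (by rw [clN_p7 hp] <;> omega)
    · exact actS (by omega) (by omega) (by rw [clN_low hp (show 0 ≤ p + 3 by omega)] <;> omega)
  have hc9 : Act m s (mk m s (p + 7) (6 * k + 7) (by omega)) := by
    apply act3 (a := mk m s (p + 7) (6 * k + 6) (by omega)) (b := mk m s (p + 7) (6 * k + 8) (by omega)) (c := mk m s (p + 6) (6 * k + 7) (by omega))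
    · exact mk_ne_snd (by omega)
    · exact mk_ne_snd (by omega)
    · exact mk_ne_snd (by omega)
    · exact adjV' (by omega) (by omega) (by omega)
    · exact (adjV' (by omega) (by omega) (by omega)).symm
    · exact adjH' (by omega) (by omega) (by omega)
    · exact hc8
    · exact actS (by omega) (by omega) (by rw [clN_p7 hp] <;> omega)
    · exact actS (by omega) (by omega) (by rw [clN_p6 hp] <;> omega)
  have hc10 : Act m s (mk m s (0) (6 * k + 7) (by omega)) := by
    apply act3 (a := mk m s (p + 7) (6 * k + 7) (by omega)) (b := mk m s (0) (6 * k + 6) (by omega)) (c := mk m s (1) (6 * k + 7) (by omega))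
    · exact mk_ne_snd (by omega)
    · exact mk_ne_fst (by omega) (by omega) (by omega)
    · exact mk_ne_snd (by omega)
    · exact adjT hp hpe hw _ _
    · exact adjV' (by omega) (by omega) (by omega)
    · exact (adjH' (by omega) (by omega) (by omega)).symm
    · exact hc9
    · exact actS (by omega) (by omega) (by rw [clN_low hp (show 0 ≤ p + 3 by omega)] <;> omega)
    · exact actS (by omega) (by omega) (by rw [clN_low hp (show 1 ≤ p + 3 by omega)] <;> omega)
  have hc11 : Act m s (mk m s 0 (6 * k + 8) (by omega)) := by
    by_cases hkw : k = w
    ·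
      apply act3 (a := mk m s (0) (6 * k + 7) (by omega)) (b := mk m s (1) (0) (by omega)) (c := mk m s (p + 7) (6 * k + 8) (by omega))
      · exact mk_ne_snd (by omega)
      · exact mk_ne_snd (by omega)
      · exact mk_ne_snd (by omega)
      · exact adjV' (by omega) (by omega) (by omega)
      · exact (adjW' (by omega) (by omega) (by omega) (by omega)).symm
      · exact adjT hp hpe hw _ _
      · exact hc10
      · exact aI2 hp hpe hw (c := 0) (b := 0) (by omega) (by omega) (by omega) (by omega)
      · exact actS (by omega) (by omega) (by rw [clN_p7 hp] <;> omega)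
    · have hklt : k < w := by omega
      apply act3 (a := mk m s (0) (6 * k + 7) (by omega)) (b := mk m s (0) (6 * k + 9) (by omega)) (c := mk m s (p + 7) (6 * k + 8) (by omega))
      · exact mk_ne_snd (by omega)
      · exact mk_ne_snd (by omega)
      · exact mk_ne_snd (by omega)
      · exact adjV' (by omega) (by omega) (by omega)
      · exact (adjV' (by omega) (by omega) (by omega)).symm
      · exact adjT hp hpe hw _ _
      · exact hc10
      · exact actS (by omega) (by omega) (by rw [clN_low hp (show 0 ≤ p + 3 by omega)] <;> omega)
      · exact actS (by omega) (by omega) (by rw [clN_p7 hp] <;> omega)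
  exact ⟨hc1, hc2, hc3, hc4, hc5, hc6, hc7, hc8, hc9, hc10, hc11⟩

lemma aChain1 : ∀ k, ∀ hk : k ≤ w + 1, ∀ i, ∀ hi : i ≤ p + 3, Act m s (mk m s i (6 * k + 2) (by omega)) := by
  intro k
  induction k with
  | zero =>
    intro _ i hi
    exact aRow1 hp hpe hw (by omega) (aRow1start hp hpe hw) i hi
  | succ k ih =>
    intro hk1 i hi
    have hrowk := ih (by omega)
    have hst := aStair1 hp hpe hw (show k ≤ w by omega) hrowk
    have h0 : Act m s (mk m s 0 (6 * (k + 1) + 2) (by omega)) :=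
      act_congr rfl (by omega) hst.2.2.2.2.2.2.2.2.2.2
    by_cases hkw : k + 1 ≤ w
    · exact aRow1 hp hpe hw hkw h0 i hi
    · have hkw1 : k + 1 = w + 1 := by omega
      exact act_congr rfl (by omega)
        (aRowTop hp hpe hw (act_congr rfl (by omega) h0) i hi)

lemma aB0 : Act m s (mk m s (p + 5) (6 * w + 8) (by omega)) := by
  apply act3 (a := mk m s (p + 6) (6 * w + 8) (by omega)) (b := mk m s (p + 4) (6 * w + 8) (by omega)) (c := mk m s (p + 6) (0) (by omega))
  · exact mk_ne_fst (by omega) (by omega) (by omega)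
  · exact mk_ne_snd (by omega)
  · exact mk_ne_snd (by omega)
  · exact (adjH' (by omega) (by omega) (by omega)).symm
  · exact adjH' (by omega) (by omega) (by omega)
  · exact (adjW' (by omega) (by omega) (by omega) (by omega)).symm
  · exact aG2 hp hpe hw
  · exact actS (by omega) (by omega) (by rw [clN_p4 hp] <;> omega)
  · exact aG1 hp hpe hw

lemma aFS1 : Act m s (mk m s (p + 5) (6 * w + 7) (by omega)) := by
  apply act3 (a := mk m s (p + 5) (6 * w + 8) (by omega)) (b := mk m s (p + 6) (6 * w + 7) (by omega)) (c := mk m s (p + 5) (6 * w + 6) (by omega))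
  · exact mk_ne_snd (by omega)
  · exact mk_ne_snd (by omega)
  · exact mk_ne_snd (by omega)
  · exact (adjV' (by omega) (by omega) (by omega)).symm
  · exact (adjH' (by omega) (by omega) (by omega)).symm
  · exact adjV' (by omega) (by omega) (by omega)
  · exact aB0 hp hpe hw
  · exact actS (by omega) (by omega) (by rw [clN_p6 hp] <;> omega)
  · exact actS (by omega) (by omega) (by rw [clN_p5 hp] <;> omega)

lemma aFS2 : Act m s (mk m s (p + 4) (6 * w + 7) (by omega)) := by
  apply act3 (a := mk m s (p + 5) (6 * w + 7) (by omega)) (b := mk m s (p + 4) (6 * w + 8) (by omega)) (c := mk m s (p + 3) (6 * w + 7) (by omega))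
  · exact mk_ne_snd (by omega)
  · exact mk_ne_fst (by omega) (by omega) (by omega)
  · exact mk_ne_snd (by omega)
  · exact (adjH' (by omega) (by omega) (by omega)).symm
  · exact (adjV' (by omega) (by omega) (by omega)).symm
  · exact adjH' (by omega) (by omega) (by omega)
  · exact aFS1 hp hpe hw
  · exact actS (by omega) (by omega) (by rw [clN_p4 hp] <;> omega)
  · exact actS (by omega) (by omega) (by rw [clN_low hp (show p + 3 ≤ p + 3 by omega)] <;> omega)

lemma aFS3 : Act m s (mk m s (p + 4) (6 * w + 6) (by omega)) := by
  apply act3 (a := mk m s (p + 4) (6 * w + 7) (by omega)) (b := mk m s (p + 5) (6 * w + 6) (by omega)) (c := mk m s (p + 4) (6 * w + 5) (by omega))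
  · exact mk_ne_snd (by omega)
  · exact mk_ne_snd (by omega)
  · exact mk_ne_snd (by omega)
  · exact (adjV' (by omega) (by omega) (by omega)).symm
  · exact (adjH' (by omega) (by omega) (by omega)).symm
  · exact adjV' (by omega) (by omega) (by omega)
  · exact aFS2 hp hpe hw
  · exact actS (by omega) (by omega) (by rw [clN_p5 hp] <;> omega)
  · exact actS (by omega) (by omega) (by rw [clN_p4 hp] <;> omega)

lemma aFS4 : Act m s (mk m s (p + 3) (6 * w + 6) (by omega)) := by
  apply act3 (a := mk m s (p + 4) (6 * w + 6) (by omega)) (b := mk m s (p + 2) (6 * w + 6) (by omega)) (c := mk m s (p + 3) (6 * w + 7) (by omega))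
  · exact mk_ne_fst (by omega) (by omega) (by omega)
  · exact mk_ne_snd (by omega)
  · exact mk_ne_snd (by omega)
  · exact (adjH' (by omega) (by omega) (by omega)).symm
  · exact adjH' (by omega) (by omega) (by omega)
  · exact (adjV' (by omega) (by omega) (by omega)).symm
  · exact aFS3 hp hpe hw
  · exact actS (by omega) (by omega) (by rw [clN_low hp (show p + 2 ≤ p + 3 by omega)] <;> omega)
  · exact actS (by omega) (by omega) (by rw [clN_low hp (show p + 3 ≤ p + 3 by omega)] <;> omega)

lemma aFS5 : Act m s (mk m s (p + 3) (6 * w + 5) (by omega)) := by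
  apply act3 (a := mk m s (p + 3) (6 * w + 6) (by omega)) (b := mk m s (p + 4) (6 * w + 5) (by omega)) (c := mk m s (p + 3) (6 * w + 4) (by omega))
  · exact mk_ne_snd (by omega)
  · exact mk_ne_snd (by omega)
  · exact mk_ne_snd (by omega)
  · exact (adjV' (by omega) (by omega) (by omega)).symm
  · exact (adjH' (by omega) (by omega) (by omega)).symm
  · exact adjV' (by omega) (by omega) (by omega)
  · exact aFS4 hp hpe hw
  · exact actS (by omega) (by omega) (by rw [clN_p4 hp] <;> omega)
  · exact actS (by omega) (by omega) (by rw [clN_low hp (show p + 3 ≤ p + 3 by omega)] <;> omega)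

lemma aRow2 {u : ℕ} (hu : u ≤ w) (hstart : Act m s (mk m s (p + 3) (6 * u + 5) (by omega))) :
    ∀ i ≤ p + 3, Act m s (mk m s i (6 * u + 5) (by omega)) := by
  have key : ∀ d i, i + d = p + 3 → Act m s (mk m s i (6 * u + 5) (by omega)) := by
    intro d
    induction d with
    | zero =>
      intro i hi
      exact act_congr (by omega) rfl hstart
    | succ d ihd =>
      intro i hi
      have ihact : Act m s (mk m s (i + 1) (6 * u + 5) (by omega)) := ihd (i + 1) (by omega)
      rcases Nat.eq_zero_or_pos i with rfl | hipos
      ·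
        apply act3 (a := mk m s (1) (6 * u + 5) (by omega)) (b := mk m s (0) (6 * u + 6) (by omega)) (c := mk m s (p + 7) (6 * u + 5) (by omega))
        · exact mk_ne_snd (by omega)
        · exact mk_ne_fst (by omega) (by omega) (by omega)
        · exact mk_ne_snd (by omega)
        · exact (adjH' (by omega) (by omega) (by omega)).symm
        · exact (adjV' (by omega) (by omega) (by omega)).symm
        · exact adjT hp hpe hw _ _
        · exact ihact
        · exact actS (by omega) (by omega) (by rw [clN_low hp (show 0 ≤ p + 3 by omega)] <;> omega)
        · exact actS (by omega) (by omega) (by rw [clN_p7 hp] <;> omega)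
      · obtain ⟨c, rfl⟩ : ∃ c, i = c + 1 := ⟨i - 1, by omega⟩
        rcases Nat.even_or_odd (c + 1) with he | ho
        · have hi2 : (c + 1) % 2 = 0 := Nat.even_iff.1 he
          apply act3 (a := mk m s (c + 2) (6 * u + 5) (by omega)) (b := mk m s (c + 1) (6 * u + 4) (by omega)) (c := mk m s (c + 1) (6 * u + 6) (by omega))
          · exact mk_ne_snd (by omega)
          · exact mk_ne_snd (by omega)
          · exact mk_ne_snd (by omega)
          · exact (adjH' (by omega) (by omega) (by omega)).symm
          · exact adjV' (by omega) (by omega) (by omega)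
          · exact (adjV' (by omega) (by omega) (by omega)).symm
          · exact ihact
          · exact act_congr rfl (by omega) (aI1 hp hpe hw (c := c) (b := 6 * u + 3) (by omega) (by omega) (by omega) (by omega))
          · exact actS (by omega) (by omega) (by rw [clN_low hp (show c + 1 ≤ p + 3 by omega)] <;> omega)
        · have hi2 : (c + 1) % 2 = 1 := Nat.odd_iff.1 ho
          apply act3 (a := mk m s (c + 2) (6 * u + 5) (by omega)) (b := mk m s (c + 1) (6 * u + 4) (by omega)) (c := mk m s (c + 1) (6 * u + 6) (by omega))
          · exact mk_ne_snd (by omega)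
          · exact mk_ne_snd (by omega)
          · exact mk_ne_snd (by omega)
          · exact (adjH' (by omega) (by omega) (by omega)).symm
          · exact adjV' (by omega) (by omega) (by omega)
          · exact (adjV' (by omega) (by omega) (by omega)).symm
          · exact ihact
          · exact actS (by omega) (by omega) (by rw [clN_low hp (show c + 1 ≤ p + 3 by omega)] <;> omega)
          · exact aI2 hp hpe hw (c := c) (b := 6 * u + 6) (by omega) (by omega) (by omega) (by omega)
  intro i hi
  exact key (p + 3 - i) i (by omega)

lemma aStair2 {z : ℕ} (hz : z + 1 ≤ w)
    (hrow : ∀ i ≤ p + 3, Act m s (mk m s i (6 * z + 11) (by omega))) :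
    Act m s (mk m s 0 (6 * z + 10) (by omega)) ∧
    Act m s (mk m s (p + 7) (6 * z + 10) (by omega)) ∧
    Act m s (mk m s (p + 7) (6 * z + 9) (by omega)) ∧
    Act m s (mk m s (p + 6) (6 * z + 9) (by omega)) ∧
    Act m s (mk m s (p + 6) (6 * z + 8) (by omega)) ∧
    Act m s (mk m s (p + 5) (6 * z + 8) (by omega)) ∧
    Act m s (mk m s (p + 5) (6 * z + 7) (by omega)) ∧
    Act m s (mk m s (p + 4) (6 * z + 7) (by omega)) ∧
    Act m s (mk m s (p + 4) (6 * z + 6) (by omega)) ∧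
    Act m s (mk m s (p + 3) (6 * z + 6) (by omega)) ∧
    Act m s (mk m s (p + 3) (6 * z + 5) (by omega)) := by
  have hd1 : Act m s (mk m s (0) (6 * z + 10) (by omega)) := by
    apply act3 (a := mk m s (0) (6 * z + 11) (by omega)) (b := mk m s (0) (6 * z + 9) (by omega)) (c := mk m s (1) (6 * z + 10) (by omega))
    · exact mk_ne_snd (by omega)
    · exact mk_ne_snd (by omega)
    · exact mk_ne_snd (by omega)
    · exact (adjV' (by omega) (by omega) (by omega)).symm
    · exact adjV' (by omega) (by omega) (by omega)
    · exact (adjH' (by omega) (by omega) (by omega)).symm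
    · exact hrow 0 (by omega)
    · exact actS (by omega) (by omega) (by rw [clN_low hp (show 0 ≤ p + 3 by omega)] <;> omega)
    · exact actS (by omega) (by omega) (by rw [clN_low hp (show 1 ≤ p + 3 by omega)] <;> omega)
  have hd2 : Act m s (mk m s (p + 7) (6 * z + 10) (by omega)) := by
    apply act3 (a := mk m s (0) (6 * z + 10) (by omega)) (b := mk m s (p + 7) (6 * z + 11) (by omega)) (c := mk m s (p + 6) (6 * z + 10) (by omega))
    · exact mk_ne_snd (by omega)
    · exact mk_ne_fst (by omega) (by omega) (by omega)
    · exact mk_ne_snd (by omega)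
    · exact (adjT hp hpe hw _ _).symm
    · exact (adjV' (by omega) (by omega) (by omega)).symm
    · exact adjH' (by omega) (by omega) (by omega)
    · exact hd1
    · exact actS (by omega) (by omega) (by rw [clN_p7 hp] <;> omega)
    · exact actS (by omega) (by omega) (by rw [clN_p6 hp] <;> omega)
  have hd3 : Act m s (mk m s (p + 7) (6 * z + 9) (by omega)) := by
    apply act3 (a := mk m s (p + 7) (6 * z + 10) (by omega)) (b := mk m s (0) (6 * z + 9) (by omega)) (c := mk m s (p + 7) (6 * z + 8) (by omega))
    · exact mk_ne_snd (by omega)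
    · exact mk_ne_snd (by omega)
    · exact mk_ne_snd (by omega)
    · exact (adjV' (by omega) (by omega) (by omega)).symm
    · exact (adjT hp hpe hw _ _).symm
    · exact adjV' (by omega) (by omega) (by omega)
    · exact hd2
    · exact actS (by omega) (by omega) (by rw [clN_low hp (show 0 ≤ p + 3 by omega)] <;> omega)
    · exact actS (by omega) (by omega) (by rw [clN_p7 hp] <;> omega)
  have hd4 : Act m s (mk m s (p + 6) (6 * z + 9) (by omega)) := by
    apply act3 (a := mk m s (p + 7) (6 * z + 9) (by omega)) (b := mk m s (p + 6) (6 * z + 10) (by omega)) (c := mk m s (p + 5) (6 * z + 9) (by omega))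
    · exact mk_ne_snd (by omega)
    · exact mk_ne_fst (by omega) (by omega) (by omega)
    · exact mk_ne_snd (by omega)
    · exact (adjH' (by omega) (by omega) (by omega)).symm
    · exact (adjV' (by omega) (by omega) (by omega)).symm
    · exact adjH' (by omega) (by omega) (by omega)
    · exact hd3
    · exact actS (by omega) (by omega) (by rw [clN_p6 hp] <;> omega)
    · exact actS (by omega) (by omega) (by rw [clN_p5 hp] <;> omega)
  have hd5 : Act m s (mk m s (p + 6) (6 * z + 8) (by omega)) := by
    apply act3 (a := mk m s (p + 6) (6 * z + 9) (by omega)) (b := mk m s (p + 6) (6 * z + 7) (by omega)) (c := mk m s (p + 7) (6 * z + 8) (by omega))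
    · exact mk_ne_snd (by omega)
    · exact mk_ne_snd (by omega)
    · exact mk_ne_snd (by omega)
    · exact (adjV' (by omega) (by omega) (by omega)).symm
    · exact adjV' (by omega) (by omega) (by omega)
    · exact (adjH' (by omega) (by omega) (by omega)).symm
    · exact hd4
    · exact actS (by omega) (by omega) (by rw [clN_p6 hp] <;> omega)
    · exact actS (by omega) (by omega) (by rw [clN_p7 hp] <;> omega)
  have hd6 : Act m s (mk m s (p + 5) (6 * z + 8) (by omega)) := by
    apply act3 (a := mk m s (p + 6) (6 * z + 8) (by omega)) (b := mk m s (p + 5) (6 * z + 9) (by omega)) (c := mk m s (p + 4) (6 * z + 8) (by omega))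
    · exact mk_ne_snd (by omega)
    · exact mk_ne_fst (by omega) (by omega) (by omega)
    · exact mk_ne_snd (by omega)
    · exact (adjH' (by omega) (by omega) (by omega)).symm
    · exact (adjV' (by omega) (by omega) (by omega)).symm
    · exact adjH' (by omega) (by omega) (by omega)
    · exact hd5
    · exact actS (by omega) (by omega) (by rw [clN_p5 hp] <;> omega)
    · exact actS (by omega) (by omega) (by rw [clN_p4 hp] <;> omega)
  have hd7 : Act m s (mk m s (p + 5) (6 * z + 7) (by omega)) := by
    apply act3 (a := mk m s (p + 5) (6 * z + 8) (by omega)) (b := mk m s (p + 5) (6 * z + 6) (by omega)) (c := mk m s (p + 6) (6 * z + 7) (by omega))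
    · exact mk_ne_snd (by omega)
    · exact mk_ne_snd (by omega)
    · exact mk_ne_snd (by omega)
    · exact (adjV' (by omega) (by omega) (by omega)).symm
    · exact adjV' (by omega) (by omega) (by omega)
    · exact (adjH' (by omega) (by omega) (by omega)).symm
    · exact hd6
    · exact actS (by omega) (by omega) (by rw [clN_p5 hp] <;> omega)
    · exact actS (by omega) (by omega) (by rw [clN_p6 hp] <;> omega)
  have hd8 : Act m s (mk m s (p + 4) (6 * z + 7) (by omega)) := by
    apply act3 (a := mk m s (p + 5) (6 * z + 7) (by omega)) (b := mk m s (p + 4) (6 * z + 8) (by omega)) (c := mk m s (p + 3) (6 * z + 7) (by omega))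
    · exact mk_ne_snd (by omega)
    · exact mk_ne_fst (by omega) (by omega) (by omega)
    · exact mk_ne_snd (by omega)
    · exact (adjH' (by omega) (by omega) (by omega)).symm
    · exact (adjV' (by omega) (by omega) (by omega)).symm
    · exact adjH' (by omega) (by omega) (by omega)
    · exact hd7
    · exact actS (by omega) (by omega) (by rw [clN_p4 hp] <;> omega)
    · exact actS (by omega) (by omega) (by rw [clN_low hp (show p + 3 ≤ p + 3 by omega)] <;> omega)
  have hd9 : Act m s (mk m s (p + 4) (6 * z + 6) (by omega)) := by
    apply act3 (a := mk m s (p + 4) (6 * z + 7) (by omega)) (b := mk m s (p + 5) (6 * z + 6) (by omega)) (c := mk m s (p + 4) (6 * z + 5) (by omega))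
    · exact mk_ne_snd (by omega)
    · exact mk_ne_snd (by omega)
    · exact mk_ne_snd (by omega)
    · exact (adjV' (by omega) (by omega) (by omega)).symm
    · exact (adjH' (by omega) (by omega) (by omega)).symm
    · exact adjV' (by omega) (by omega) (by omega)
    · exact hd8
    · exact actS (by omega) (by omega) (by rw [clN_p5 hp] <;> omega)
    · exact actS (by omega) (by omega) (by rw [clN_p4 hp] <;> omega)
  have hd10 : Act m s (mk m s (p + 3) (6 * z + 6) (by omega)) := by
    apply act3 (a := mk m s (p + 4) (6 * z + 6) (by omega)) (b := mk m s (p + 2) (6 * z + 6) (by omega)) (c := mk m s (p + 3) (6 * z + 7) (by omega))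
    · exact mk_ne_fst (by omega) (by omega) (by omega)
    · exact mk_ne_snd (by omega)
    · exact mk_ne_snd (by omega)
    · exact (adjH' (by omega) (by omega) (by omega)).symm
    · exact adjH' (by omega) (by omega) (by omega)
    · exact (adjV' (by omega) (by omega) (by omega)).symm
    · exact hd9
    · exact actS (by omega) (by omega) (by rw [clN_low hp (show p + 2 ≤ p + 3 by omega)] <;> omega)
    · exact actS (by omega) (by omega) (by rw [clN_low hp (show p + 3 ≤ p + 3 by omega)] <;> omega)
  have hd11 : Act m s (mk m s (p + 3) (6 * z + 5) (by omega)) := by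
    apply act3 (a := mk m s (p + 3) (6 * z + 6) (by omega)) (b := mk m s (p + 4) (6 * z + 5) (by omega)) (c := mk m s (p + 3) (6 * z + 4) (by omega))
    · exact mk_ne_snd (by omega)
    · exact mk_ne_snd (by omega)
    · exact mk_ne_snd (by omega)
    · exact (adjV' (by omega) (by omega) (by omega)).symm
    · exact (adjH' (by omega) (by omega) (by omega)).symm
    · exact adjV' (by omega) (by omega) (by omega)
    · exact hd10
    · exact actS (by omega) (by omega) (by rw [clN_p4 hp] <;> omega)
    · exact actS (by omega) (by omega) (by rw [clN_low hp (show p + 3 ≤ p + 3 by omega)] <;> omega)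
  exact ⟨hd1, hd2, hd3, hd4, hd5, hd6, hd7, hd8, hd9, hd10, hd11⟩

lemma aFinal (hrow0 : ∀ i ≤ p + 3, Act m s (mk m s i 5 (by omega))) :
    Act m s (mk m s 0 4 (by omega)) ∧
    Act m s (mk m s (p + 7) 4 (by omega)) ∧
    Act m s (mk m s (p + 7) 3 (by omega)) ∧
    Act m s (mk m s (p + 6) 3 (by omega)) ∧
    Act m s (mk m s (p + 6) 2 (by omega)) ∧
    Act m s (mk m s (p + 5) 2 (by omega)) ∧
    Act m s (mk m s (p + 5) 1 (by omega)) ∧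
    Act m s (mk m s (p + 4) 1 (by omega)) ∧
    Act m s (mk m s (p + 4) 0 (spos s)) := by
  have he1 : Act m s (mk m s (0) (4) (by omega)) := by
    apply act3 (a := mk m s (0) (5) (by omega)) (b := mk m s (0) (3) (by omega)) (c := mk m s (1) (4) (by omega))
    · exact mk_ne_snd (by omega)
    · exact mk_ne_snd (by omega)
    · exact mk_ne_snd (by omega)
    · exact (adjV' (by omega) (by omega) (by omega)).symm
    · exact adjV' (by omega) (by omega) (by omega)
    · exact (adjH' (by omega) (by omega) (by omega)).symm
    · exact hrow0 0 (by omega)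
    · exact actS (by omega) (by omega) (by rw [clN_low hp (show 0 ≤ p + 3 by omega)] <;> omega)
    · exact actS (by omega) (by omega) (by rw [clN_low hp (show 1 ≤ p + 3 by omega)] <;> omega)
  have he2 : Act m s (mk m s (p + 7) (4) (by omega)) := by
    apply act3 (a := mk m s (0) (4) (by omega)) (b := mk m s (p + 7) (5) (by omega)) (c := mk m s (p + 6) (4) (by omega))
    · exact mk_ne_snd (by omega)
    · exact mk_ne_fst (by omega) (by omega) (by omega)
    · exact mk_ne_snd (by omega)
    · exact (adjT hp hpe hw _ _).symm
    · exact (adjV' (by omega) (by omega) (by omega)).symm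
    · exact adjH' (by omega) (by omega) (by omega)
    · exact he1
    · exact actS (by omega) (by omega) (by rw [clN_p7 hp] <;> omega)
    · exact actS (by omega) (by omega) (by rw [clN_p6 hp] <;> omega)
  have he3 : Act m s (mk m s (p + 7) (3) (by omega)) := by
    apply act3 (a := mk m s (p + 7) (4) (by omega)) (b := mk m s (0) (3) (by omega)) (c := mk m s (p + 7) (2) (by omega))
    · exact mk_ne_snd (by omega)
    · exact mk_ne_snd (by omega)
    · exact mk_ne_snd (by omega)
    · exact (adjV' (by omega) (by omega) (by omega)).symm
    · exact (adjT hp hpe hw _ _).symm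
    · exact adjV' (by omega) (by omega) (by omega)
    · exact he2
    · exact actS (by omega) (by omega) (by rw [clN_low hp (show 0 ≤ p + 3 by omega)] <;> omega)
    · exact actS (by omega) (by omega) (by rw [clN_p7 hp] <;> omega)
  have he4 : Act m s (mk m s (p + 6) (3) (by omega)) := by
    apply act3 (a := mk m s (p + 7) (3) (by omega)) (b := mk m s (p + 6) (4) (by omega)) (c := mk m s (p + 5) (3) (by omega))
    · exact mk_ne_snd (by omega)
    · exact mk_ne_fst (by omega) (by omega) (by omega)
    · exact mk_ne_snd (by omega)
    · exact (adjH' (by omega) (by omega) (by omega)).symm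
    · exact (adjV' (by omega) (by omega) (by omega)).symm
    · exact adjH' (by omega) (by omega) (by omega)
    · exact he3
    · exact actS (by omega) (by omega) (by rw [clN_p6 hp] <;> omega)
    · exact actS (by omega) (by omega) (by rw [clN_p5 hp] <;> omega)
  have he5 : Act m s (mk m s (p + 6) (2) (by omega)) := by
    apply act3 (a := mk m s (p + 6) (3) (by omega)) (b := mk m s (p + 6) (1) (by omega)) (c := mk m s (p + 7) (2) (by omega))
    · exact mk_ne_snd (by omega)
    · exact mk_ne_snd (by omega)
    · exact mk_ne_snd (by omega)
    · exact (adjV' (by omega) (by omega) (by omega)).symm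
    · exact adjV' (by omega) (by omega) (by omega)
    · exact (adjH' (by omega) (by omega) (by omega)).symm
    · exact he4
    · exact actS (by omega) (by omega) (by rw [clN_p6 hp] <;> omega)
    · exact actS (by omega) (by omega) (by rw [clN_p7 hp] <;> omega)
  have he6 : Act m s (mk m s (p + 5) (2) (by omega)) := by
    apply act3 (a := mk m s (p + 6) (2) (by omega)) (b := mk m s (p + 5) (3) (by omega)) (c := mk m s (p + 4) (2) (by omega))
    · exact mk_ne_snd (by omega)
    · exact mk_ne_fst (by omega) (by omega) (by omega)
    · exact mk_ne_snd (by omega)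
    · exact (adjH' (by omega) (by omega) (by omega)).symm
    · exact (adjV' (by omega) (by omega) (by omega)).symm
    · exact adjH' (by omega) (by omega) (by omega)
    · exact he5
    · exact actS (by omega) (by omega) (by rw [clN_p5 hp] <;> omega)
    · exact actS (by omega) (by omega) (by rw [clN_p4 hp] <;> omega)
  have he7 : Act m s (mk m s (p + 5) (1) (by omega)) := by
    apply act3 (a := mk m s (p + 5) (2) (by omega)) (b := mk m s (p + 5) (0) (by omega)) (c := mk m s (p + 6) (1) (by omega))
    · exact mk_ne_snd (by omega)
    · exact mk_ne_snd (by omega)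
    · exact mk_ne_snd (by omega)
    · exact (adjV' (by omega) (by omega) (by omega)).symm
    · exact adjV' (by omega) (by omega) (by omega)
    · exact (adjH' (by omega) (by omega) (by omega)).symm
    · exact he6
    · exact actS (by omega) (by omega) (by rw [clN_p5 hp] <;> omega)
    · exact actS (by omega) (by omega) (by rw [clN_p6 hp] <;> omega)
  have he8 : Act m s (mk m s (p + 4) (1) (by omega)) := by
    apply act3 (a := mk m s (p + 5) (1) (by omega)) (b := mk m s (p + 4) (2) (by omega)) (c := mk m s (p + 3) (1) (by omega))
    · exact mk_ne_snd (by omega)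
    · exact mk_ne_fst (by omega) (by omega) (by omega)
    · exact mk_ne_snd (by omega)
    · exact (adjH' (by omega) (by omega) (by omega)).symm
    · exact (adjV' (by omega) (by omega) (by omega)).symm
    · exact adjH' (by omega) (by omega) (by omega)
    · exact he7
    · exact actS (by omega) (by omega) (by rw [clN_p4 hp] <;> omega)
    · exact actS (by omega) (by omega) (by rw [clN_low hp (show p + 3 ≤ p + 3 by omega)] <;> omega)
  have he9 : Act m s (mk m s (p + 4) (0) (by omega)) := by
    apply act3 (a := mk m s (p + 4) (1) (by omega)) (b := mk m s (p + 5) (0) (by omega)) (c := mk m s (p + 3) (0) (by omega))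
    · exact mk_ne_snd (by omega)
    · exact mk_ne_snd (by omega)
    · exact mk_ne_fst (by omega) (by omega) (by omega)
    · exact (adjV' (by omega) (by omega) (by omega)).symm
    · exact (adjH' (by omega) (by omega) (by omega)).symm
    · exact adjH' (by omega) (by omega) (by omega)
    · exact he8
    · exact actS (by omega) (by omega) (by rw [clN_p5 hp] <;> omega)
    · exact actX1 hp
  exact ⟨he1, he2, he3, he4, he5, he6, he7, he8, he9⟩

lemma aChain2 : ∀ u, ∀ hu : u ≤ w, ∀ i, ∀ hi : i ≤ p + 3, Act m s (mk m s i (6 * u + 5) (by omega)) := by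
  have key : ∀ d u, ∀ hd : u + d = w, ∀ i, ∀ hi : i ≤ p + 3, Act m s (mk m s i (6 * u + 5) (by omega)) := by
    intro d
    induction d with
    | zero =>
      intro u hu i hi
      obtain rfl : u = w := by omega
      exact aRow2 hp hpe hw le_rfl (aFS5 hp hpe hw) i hi
    | succ d ihd =>
      intro u hu i hi
      have hrows := ihd (u + 1) (by omega)
      have hst := aStair2 hp hpe hw (z := u) (by omega)
        (fun j hj => act_congr rfl (by omega) (hrows j hj))
      exact aRow2 hp hpe hw (by omega) hst.2.2.2.2.2.2.2.2.2.2 i hi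
  intro u hu i hi
  exact key (w - u) u (by omega) i hi


lemma aAll (a b : ℕ) (ha : a < m) (hb : b < 3 * s) : Act m s (mk m s a b hb) := by
  by_cases hseed : b % 3 = clN m a
  · exact actS ha hb hseed
  have CH1 := aChain1 hp hpe hw
  have CH2 := aChain2 hp hpe hw
  have ROWS5 : ∀ i ≤ p + 3, Act m s (mk m s i 5 (by omega)) :=
    fun i hi => act_congr rfl (by omega) (CH2 0 (by omega) i hi)
  have FIN := aFinal hp hpe hw ROWS5
  have ST1 := fun (k : ℕ) (hk : k ≤ w) => aStair1 hp hpe hw hk (CH1 k (by omega))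
  have ST2 := fun (z : ℕ) (hz : z + 1 ≤ w) => aStair2 hp hpe hw hz
    (fun j hj => act_congr rfl (by omega) (CH2 (z + 1) (by omega) j hj))
  have h6 : b % 6 = 0 ∨ b % 6 = 1 ∨ b % 6 = 2 ∨ b % 6 = 3 ∨ b % 6 = 4 ∨ b % 6 = 5 := by omega
  by_cases ha3 : a ≤ p + 3
  · -- alternating region (includes column 0)
    rw [clN_low hp ha3] at hseed
    rcases h6 with h6 | h6 | h6 | h6 | h6 | h6
    -- b % 6 = 0 : a must be odd
    · have hodd : a % 2 = 1 := by omega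
      by_cases hap : a ≤ p + 1
      · obtain ⟨c, rfl⟩ : ∃ c, a = c + 1 := ⟨a - 1, by omega⟩
        exact aI2 hp hpe hw (c := c) (by omega) (by omega) (by omega) hb
      · obtain rfl : a = p + 3 := by omega
        by_cases hb0 : b = 0
        · subst hb0; exact act_congr rfl rfl (actX1 hp)
        · by_cases hbw : b = 6 * w + 6
          · exact act_congr rfl (by omega) (aFS4 hp hpe hw)
          · exact act_congr rfl (by omega) ((ST2 (b / 6 - 1) (by omega)).2.2.2.2.2.2.2.2.2.1)
    -- b % 6 = 1 : a must be even
    · have hev : a % 2 = 0 := by omega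
      by_cases ha0 : a = 0
      · subst ha0
        by_cases hb1 : b = 1
        · subst hb1; exact act_congr rfl rfl (aA0 hp hpe hw)
        · exact act_congr rfl (by omega) ((ST1 ((b - 7) / 6) (by omega)).2.2.2.2.2.2.2.2.2.1)
      · obtain ⟨c, rfl⟩ : ∃ c, a = c + 1 := ⟨a - 1, by omega⟩
        obtain ⟨b', rfl⟩ : ∃ b', b = b' + 1 := ⟨b - 1, by omega⟩
        exact aI1 hp hpe hw (c := c) (b := b') (by omega) (by omega) (by omega) hb
    -- b % 6 = 2 : chain-1 row
    · exact act_congr rfl (by omega) (CH1 (b / 6) (by omega) a ha3)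
    -- b % 6 = 3 : a odd
    · have hodd : a % 2 = 1 := by omega
      by_cases hap : a ≤ p + 1
      · obtain ⟨c, rfl⟩ : ∃ c, a = c + 1 := ⟨a - 1, by omega⟩
        exact aI2 hp hpe hw (c := c) (by omega) (by omega) (by omega) hb
      · obtain rfl : a = p + 3 := by omega
        exact act_congr rfl (by omega) ((ST1 (b / 6) (by omega)).1)
    -- b % 6 = 4 : a even
    · have hev : a % 2 = 0 := by omega
      by_cases ha0 : a = 0
      · subst ha0
        by_cases hb4 : b = 4
        · subst hb4; exact act_congr rfl rfl FIN.1
        · exact act_congr rfl (by omega) ((ST2 ((b - 10) / 6) (by omega)).1)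
      · obtain ⟨c, rfl⟩ : ∃ c, a = c + 1 := ⟨a - 1, by omega⟩
        obtain ⟨b', rfl⟩ : ∃ b', b = b' + 1 := ⟨b - 1, by omega⟩
        exact aI1 hp hpe hw (c := c) (b := b') (by omega) (by omega) (by omega) hb
    -- b % 6 = 5 : chain-2 row
    · exact act_congr rfl (by omega) (CH2 (b / 6) (by omega) a ha3)
  · have ha4 : a = p + 4 ∨ a = p + 5 ∨ a = p + 6 ∨ a = p + 7 := by omega
    rcases ha4 with rfl | rfl | rfl | rfl
    · -- column p+4, clN = 2, nonseed b % 3 ∈ {0,1}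
      rw [clN_p4 hp] at hseed
      rcases h6 with h6 | h6 | h6 | h6 | h6 | h6
      · by_cases hb0 : b = 0
        · subst hb0; exact act_congr rfl rfl FIN.2.2.2.2.2.2.2.2
        · by_cases hbw : b = 6 * w + 6
          · exact act_congr rfl (by omega) (aFS3 hp hpe hw)
          · exact act_congr rfl (by omega) ((ST2 (b / 6 - 1) (by omega)).2.2.2.2.2.2.2.2.1)
      · by_cases hb1 : b = 1
        · subst hb1; exact act_congr rfl rfl FIN.2.2.2.2.2.2.2.1
        · by_cases hbw : b = 6 * w + 7
          · exact act_congr rfl (by omega) (aFS2 hp hpe hw)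
          · exact act_congr rfl (by omega) ((ST2 ((b - 7) / 6) (by omega)).2.2.2.2.2.2.2.1)
      · omega
      · exact act_congr rfl (by omega) ((ST1 (b / 6) (by omega)).2.1)
      · exact act_congr rfl (by omega) ((ST1 (b / 6) (by omega)).2.2.1)
      · omega
    · -- column p+5, clN = 0, nonseed b % 3 ∈ {1,2}
      rw [clN_p5 hp] at hseed
      rcases h6 with h6 | h6 | h6 | h6 | h6 | h6
      · omega
      · by_cases hb1 : b = 1
        · subst hb1; exact act_congr rfl rfl FIN.2.2.2.2.2.2.1
        · by_cases hbw : b = 6 * w + 7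
          · exact act_congr rfl (by omega) (aFS1 hp hpe hw)
          · exact act_congr rfl (by omega) ((ST2 ((b - 7) / 6) (by omega)).2.2.2.2.2.2.1)
      · by_cases hb2 : b = 2
        · subst hb2; exact act_congr rfl rfl FIN.2.2.2.2.2.1
        · by_cases hbw : b = 6 * w + 8
          · exact act_congr rfl (by omega) (aB0 hp hpe hw)
          · exact act_congr rfl (by omega) ((ST2 ((b - 8) / 6) (by omega)).2.2.2.2.2.1)
      · omega
      · exact act_congr rfl (by omega) ((ST1 (b / 6) (by omega)).2.2.2.1)
      · exact act_congr rfl (by omega) ((ST1 (b / 6) (by omega)).2.2.2.2.1)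
    · -- column p+6, clN = 1, nonseed b % 3 ∈ {0,2}
      rw [clN_p6 hp] at hseed
      rcases h6 with h6 | h6 | h6 | h6 | h6 | h6
      · by_cases hb0 : b = 0
        · subst hb0; exact act_congr rfl rfl (aG1 hp hpe hw)
        · exact act_congr rfl (by omega) ((ST1 (b / 6 - 1) (by omega)).2.2.2.2.2.2.1)
      · omega
      · by_cases hb2 : b = 2
        · subst hb2; exact act_congr rfl rfl FIN.2.2.2.2.1
        · by_cases hbw : b = 6 * w + 8
          · exact act_congr rfl (by omega) (aG2 hp hpe hw)
          · exact act_congr rfl (by omega) ((ST2 ((b - 8) / 6) (by omega)).2.2.2.2.1)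
      · by_cases hb3 : b = 3
        · subst hb3; exact act_congr rfl rfl FIN.2.2.2.1
        · exact act_congr rfl (by omega) ((ST2 ((b - 9) / 6) (by omega)).2.2.2.1)
      · omega
      · exact act_congr rfl (by omega) ((ST1 (b / 6) (by omega)).2.2.2.2.2.1)
    · -- column p+7, clN = 2, nonseed b % 3 ∈ {0,1}
      rw [clN_p7 hp] at hseed
      rcases h6 with h6 | h6 | h6 | h6 | h6 | h6
      · by_cases hb0 : b = 0
        · subst hb0; exact act_congr rfl rfl (actX2 hp)
        · exact act_congr rfl (by omega) ((ST1 (b / 6 - 1) (by omega)).2.2.2.2.2.2.2.1)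
      · by_cases hb1 : b = 1
        · subst hb1; exact act_congr rfl rfl (aG3 hp hpe hw)
        · exact act_congr rfl (by omega) ((ST1 ((b - 7) / 6) (by omega)).2.2.2.2.2.2.2.2.1)
      · omega
      · by_cases hb3 : b = 3
        · subst hb3; exact act_congr rfl rfl FIN.2.2.1
        · exact act_congr rfl (by omega) ((ST2 ((b - 9) / 6) (by omega)).2.2.1)
      · by_cases hb4 : b = 4
        · subst hb4; exact act_congr rfl rfl FIN.2.1
        · exact act_congr rfl (by omega) ((ST2 ((b - 10) / 6) (by omega)).2.1)
      · omega

lemma percolates : ∀ v : ZMod m × Fin (3 * s), Act m s v := by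
  rintro ⟨x, j⟩
  have hv : (x, j) = mk m s x.val j.val j.isLt := by
    refine Prod.ext ?_ rfl
    exact (ZMod.natCast_rightInverse x).symm
  rw [hv]
  exact aAll hp hpe hw x.val j.val (ZMod.val_lt x) j.isLt

end Constr


end TCAux

open TCAux in
/-- If `m ≥ 8` is even and `s ≥ 2` is odd, then
`ms + 1 ≤ min-seed(C_m ⊘ C_{3s}, 3) ≤ ms + 2`. -/
theorem minSeed_torusCordalis_even_odd (m s : ℕ) [NeZero m] (hm : 8 ≤ m)
    (hmeven : Even m) (hs : 2 ≤ s) (hsodd : Odd s) :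
    m * s + 1 ≤ minSeed (torusCordalis m (3 * s)) (fun _ => 3) ∧
    minSeed (torusCordalis m (3 * s)) (fun _ => 3) ≤ m * s + 2 := by
  classical
  haveI : NeZero s := ⟨by omega⟩
  obtain ⟨w', hw'⟩ := hsodd
  have hm2 : m % 2 = 0 := Nat.even_iff.1 hmeven
  have hp : m = (m - 8) + 8 := by omega
  have hpe : (m - 8) % 2 = 0 := by omega
  have hw : s = 2 * (w' - 1) + 3 := by omega
  haveI : DecidableRel (torusCordalis m (3 * s)).Adj := Classical.decRel _
  have hup : (m * s + 2) ∈ {k | ∃ S : Finset (ZMod m × Fin (3 * s)), S.card = k ∧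
      ∀ v, Activated (torusCordalis m (3 * s)) (fun _ => 3) (↑S) v} :=
    ⟨seedAll m s, card_seedAll hp hpe, percolates hp hpe hw⟩
  have hcardV : Fintype.card (ZMod m × Fin (3 * s)) = 3 * (m * s) := by
    rw [Fintype.card_prod, ZMod.card, Fintype.card_fin]; ring
  constructor
  · apply le_csInf ⟨_, hup⟩
    rintro k ⟨S, rfl, hperc⟩
    have hdeg : ∀ v, ((torusCordalis m (3 * s)).neighborFinset v).card = 4 :=
      deg_four (by omega) (by omega)
    have hms : 1 ≤ m * s := Nat.one_le_iff_ne_zero.2 (by positivity)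
    rcases perc_lower _ hdeg S hperc with h | rfl
    · rw [hcardV] at h
      omega
    · rw [Finset.card_univ, hcardV]
      omega
  · exact Nat.sInf_le hup
end

section
/- For the torus cordalis C_m ⊘ C_n (m, n ≥ 3), min-seed(C_m ⊘ C_n, 3) ≥ ⌈(mn+1)/3⌉ and min-seed(C_m ⊘ C_n, 3) ≤ ⌈m/3⌉(n+1). -/
set_option linter.unusedSectionVars false
set_option linter.unnecessarySimpa false
set_option linter.unusedVariables false

open Finset

section Stage

variable {V : Type*} (G : SimpleGraph V) (θ : V → ℕ) (S : Set V)

/-- Stages of the activation process. -/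
def actStage : ℕ → Set V
  | 0 => S
  | (k+1) => actStage k ∪ {v | ∃ T : Finset V, (∀ u ∈ T, G.Adj u v) ∧ θ v ≤ T.card ∧
      ∀ u ∈ T, u ∈ actStage k}

lemma actStage_mono {k l : ℕ} (h : k ≤ l) : actStage G θ S k ⊆ actStage G θ S l := by
  induction l with
  | zero => simp_all
  | succ l ih =>
    rcases Nat.eq_or_lt_of_le h with rfl | h'
    · rfl
    · exact (ih (Nat.lt_succ_iff.mp h')).trans (Set.subset_union_left)

lemma activated_iff_stage {v : V} :
    Activated G θ S v ↔ ∃ k, v ∈ actStage G θ S k := by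
  constructor
  · intro h
    induction h with
    | base h => exact ⟨0, h⟩
    | step T hadj hcard hact ih =>
      classical
      choose! g hg using ih
      refine ⟨T.sup g + 1, Or.inr ⟨T, hadj, hcard, fun u hu => ?_⟩⟩
      exact actStage_mono G θ S (Finset.le_sup hu) (hg u hu)
  · rintro ⟨k, hk⟩
    induction k generalizing v with
    | zero => exact Activated.base hk
    | succ k ih =>
      rcases hk with hk | ⟨T, hadj, hcard, hT⟩
      · exact ih hk
      · exact Activated.step T hadj hcard (fun u hu => ih (hT u hu))

end Stage
section TC

variable (m n : ℕ) [NeZero m]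

/-- The base relation of the torus cordalis. -/
def tcRel (a b : ZMod m × Fin n) : Prop :=
  (b.1 = a.1 + 1 ∧ b.2 = a.2) ∨
  (a.1 = b.1 ∧ (b.2 : ℕ) = (a.2 : ℕ) + 1) ∨
  ((a.2 : ℕ) = n - 1 ∧ (b.2 : ℕ) = 0 ∧ b.1 = a.1 + 1)

instance : DecidableEq (ZMod m × Fin n) := instDecidableEqProd

instance tcRel_dec : ∀ a b, Decidable (tcRel m n a b) := fun a b => by
  unfold tcRel; infer_instance

lemma tc_adj (a b : ZMod m × Fin n) :
    (torusCordalis m n).Adj a b ↔ a ≠ b ∧ (tcRel m n a b ∨ tcRel m n b a) :=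
  SimpleGraph.fromRel_adj _ a b

/-- Direction marker of an oriented edge. -/
def tcDir (a b : ZMod m × Fin n) : Bool := decide (b.2 = a.2)

/-- Canonical slot of an edge. -/
def tcSlot (p : (ZMod m × Fin n) × (ZMod m × Fin n)) : (ZMod m × Fin n) × Bool :=
  if tcRel m n p.1 p.2 then (p.1, tcDir m n p.1 p.2) else (p.2, tcDir m n p.2 p.1)

variable {m n}

lemma rel_determines (hn : 3 ≤ n) {a b b' : ZMod m × Fin n}
    (h : tcRel m n a b) (h' : tcRel m n a b')
    (hd : tcDir m n a b = tcDir m n a b') : b = b' := by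
  have hlt := b.2.isLt
  have hlt' := b'.2.isLt
  have halt := a.2.isLt
  rcases h with ⟨h1, h2⟩ | ⟨h1, h2⟩ | ⟨h1, h2, h3⟩ <;>
    rcases h' with ⟨h1', h2'⟩ | ⟨h1', h2'⟩ | ⟨h1', h2', h3'⟩ <;>
      simp only [tcDir, decide_eq_decide] at hd
  · exact Prod.ext (h1.trans h1'.symm) (h2.trans h2'.symm)
  · exfalso; have := hd.mp h2; have := congrArg Fin.val this; omega
  · exfalso; have := hd.mp h2; have := congrArg Fin.val this; omega
  · exfalso; have := hd.mpr h2'; have := congrArg Fin.val this; omega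
  · refine Prod.ext (h1.symm.trans h1') (Fin.ext ?_); omega
  · exfalso; omega
  · exfalso; have := hd.mpr h2'; have := congrArg Fin.val this; omega
  · exfalso; omega
  · refine Prod.ext (h3.trans h3'.symm) (Fin.ext ?_); omega

lemma slot_spec {u v : ZMod m × Fin n} (h : (torusCordalis m n).Adj u v) :
    ∃ a b, tcSlot m n (u, v) = (a, tcDir m n a b) ∧ tcRel m n a b ∧
      ((a = u ∧ b = v) ∨ (a = v ∧ b = u)) := by
  rw [tc_adj] at h
  by_cases hr : tcRel m n u v
  · exact ⟨u, v, by simp [tcSlot, hr], hr, Or.inl ⟨rfl, rfl⟩⟩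
  · refine ⟨v, u, by simp [tcSlot, hr], ?_, Or.inr ⟨rfl, rfl⟩⟩
    exact h.2.resolve_left hr

lemma slot_inj (hn : 3 ≤ n) {u v u' v' : ZMod m × Fin n}
    (h : (torusCordalis m n).Adj u v) (h' : (torusCordalis m n).Adj u' v')
    (he : tcSlot m n (u, v) = tcSlot m n (u', v')) :
    (u = u' ∧ v = v') ∨ (u = v' ∧ v = u') := by
  obtain ⟨a, b, hab, hrel, hor⟩ := slot_spec h
  obtain ⟨a', b', hab', hrel', hor'⟩ := slot_spec h'
  rw [hab, hab'] at he
  have ha : a = a' := congrArg Prod.fst he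
  have hd : tcDir m n a b = tcDir m n a' b' := congrArg Prod.snd he
  subst ha
  have hb : b = b' := rel_determines hn hrel hrel' hd
  subst hb
  rcases hor with ⟨rfl, rfl⟩ | ⟨rfl, rfl⟩ <;> rcases hor' with ⟨h1, h2⟩ | ⟨h1, h2⟩ <;> tauto

end TC
section Lower

variable {m n : ℕ} [NeZero m]

lemma tc_lower (hm : 3 ≤ m) (hn : 3 ≤ n) (S : Finset (ZMod m × Fin n))
    (hall : ∀ v, Activated (torusCordalis m n) (fun _ => 3) (↑S) v) :
    (m * n + 3) / 3 ≤ S.card := by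
  classical
  haveI : Fact (1 < m) := ⟨by omega⟩
  set G := torusCordalis m n with hG
  have hcardV : Fintype.card (ZMod m × Fin n) = m * n := by
    simp [ZMod.card]
  have h9 : 9 ≤ m * n := by nlinarith
  have onez : (1 : ZMod m) ≠ 0 := one_ne_zero
  have haddone : ∀ i : ZMod m, i + 1 ≠ i := by
    intro i h
    have h' : i + 1 = i + 0 := by simpa using h
    exact onez (add_left_cancel h')
  have htwo : ∀ i : ZMod m, i ≠ i + 2 := by
    intro i h
    have h' : i + 0 = i + 2 := by simpa using h
    have h2 : ((2 : ℕ) : ZMod m) = 0 := by exact_mod_cast (add_left_cancel h').symm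
    rw [ZMod.natCast_eq_zero_iff] at h2
    have := Nat.le_of_dvd (by norm_num) h2
    omega
  have hex : ∀ v : ZMod m × Fin n, ∃ k, v ∈ actStage G (fun _ => 3) (↑S) k :=
    fun v => (activated_iff_stage G (fun _ => 3) (↑S)).mp (hall v)
  set rank : ZMod m × Fin n → ℕ := fun v => Nat.find (hex v) with hrank
  have hrank_mem : ∀ v, v ∈ actStage G (fun _ => 3) (↑S) (rank v) :=
    fun v => Nat.find_spec (hex v)
  have hrank_le : ∀ v k, v ∈ actStage G (fun _ => 3) (↑S) k → rank v ≤ k :=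
    fun v k h => Nat.find_min' (hex v) h
  have hrank0 : ∀ v, rank v = 0 → v ∈ S := by
    intro v h0
    have hmem0 := hrank_mem v
    rw [h0] at hmem0
    have : v ∈ (↑S : Set (ZMod m × Fin n)) := hmem0
    exact Finset.mem_coe.mp this
  by_cases hSV : ∀ v : ZMod m × Fin n, v ∈ S
  · have hS : S = Finset.univ := Finset.eq_univ_iff_forall.mpr hSV
    rw [hS, Finset.card_univ, hcardV]
    omega
  push_neg at hSV
  obtain ⟨v₀, hv₀⟩ := hSV
  -- witnesses
  have hWex : ∀ v : ZMod m × Fin n, ∃ W : Finset (ZMod m × Fin n), v ∉ S →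
      W.card = 3 ∧ ∀ u ∈ W, G.Adj u v ∧ rank u < rank v := by
    intro v
    by_cases hv : v ∈ S
    · exact ⟨∅, fun h => absurd hv h⟩
    · have hr0 : rank v ≠ 0 := fun h0 => hv (hrank0 v h0)
      obtain ⟨k, hk⟩ : ∃ k, rank v = k + 1 := ⟨rank v - 1, by omega⟩
      have hmem := hrank_mem v
      rw [hk] at hmem
      rcases hmem with hmem | ⟨T, hadj, hcard, hT⟩
      · exact absurd (hrank_le v k hmem) (by omega)
      · obtain ⟨T', hT'sub, hT'card⟩ := Finset.exists_subset_card_eq hcard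
        refine ⟨T', fun _ => ⟨hT'card, fun u hu => ⟨hadj u (hT'sub hu), ?_⟩⟩⟩
        have := hrank_le u k (hT u (hT'sub hu))
        omega
  choose W hW using hWex
  set C : Finset (ZMod m × Fin n) := Finset.univ \ S with hC
  have hCmem : ∀ v ∈ C, v ∉ S := by
    intro v hv; rw [hC, Finset.mem_sdiff] at hv; exact hv.2
  set D := C.sigma (fun v => W v) with hD
  have hDcard : D.card = 3 * C.card := by
    rw [hD, Finset.card_sigma]
    rw [Finset.sum_congr rfl (fun v hv => (hW v (hCmem v hv)).1)]
    rw [Finset.sum_const, smul_eq_mul, mul_comm]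
  -- max rank vertex
  obtain ⟨w, -, hwmax⟩ := Finset.exists_max_image Finset.univ rank ⟨v₀, Finset.mem_univ _⟩
  have hwmax' : ∀ v, rank v ≤ rank w := fun v => hwmax v (Finset.mem_univ v)
  have hwS : w ∉ S := by
    intro hw
    have hrw : rank w = 0 := Nat.le_zero.mp (hrank_le w 0 hw)
    have h0 : rank v₀ = 0 := Nat.le_zero.mp (hrw ▸ hwmax' v₀)
    exact hv₀ (hrank0 v₀ h0)
  -- the four slots at w
  have npos : 0 < n := by omega
  set b1 : ZMod m × Fin n := (w.1 + 1, w.2) with hb1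
  have hrel1 : tcRel m n w b1 := Or.inl ⟨rfl, rfl⟩
  have hne1 : w ≠ b1 := fun h => haddone w.1 (congrArg Prod.fst h).symm
  have hadj1 : G.Adj w b1 := (tc_adj m n w b1).mpr ⟨hne1, Or.inl hrel1⟩
  have hs1 : tcSlot m n (w, b1) = (w, true) := by
    simp [tcSlot, hrel1, tcDir, hb1, show tcRel m n w (w.1 + 1, w.2) from hrel1]
  set b3 : ZMod m × Fin n := (w.1 - 1, w.2) with hb3
  have hrel3 : tcRel m n b3 w := Or.inl ⟨by rw [hb3]; ring, rfl⟩
  have hne3 : w ≠ b3 := by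
    intro h
    have h1 : w.1 = w.1 - 1 := congrArg Prod.fst h
    have : w.1 + 1 = w.1 := by linear_combination h1
    exact haddone w.1 this
  have hnrel3 : ¬ tcRel m n w b3 := by
    rintro (⟨h1, -⟩ | ⟨h1, -⟩ | ⟨-, -, h1⟩)
    · exact htwo w.1 (by linear_combination h1)
    · exact hne3 (Prod.ext h1 rfl)
    · exact htwo w.1 (by linear_combination h1)
  have hadj3 : G.Adj w b3 := (tc_adj m n w b3).mpr ⟨hne3, Or.inr hrel3⟩
  have hs3 : tcSlot m n (w, b3) = (b3, true) := by
    simp [tcSlot, hnrel3, tcDir, hb3, show ¬ tcRel m n w (w.1 - 1, w.2) from hnrel3]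
  -- b2 : spiral successor
  obtain ⟨b2, hrel2, hsnd2⟩ : ∃ b2 : ZMod m × Fin n,
      tcRel m n w b2 ∧ (w.2 : ℕ) ≠ (b2.2 : ℕ) := by
    by_cases h2 : (w.2 : ℕ) + 1 < n
    · exact ⟨(w.1, ⟨(w.2 : ℕ) + 1, h2⟩), Or.inr (Or.inl ⟨rfl, rfl⟩), by simp⟩
    · have hw2 : (w.2 : ℕ) = n - 1 := by have := w.2.isLt; omega
      refine ⟨(w.1 + 1, ⟨0, npos⟩), Or.inr (Or.inr ⟨hw2, rfl, rfl⟩), ?_⟩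
      show (w.2 : ℕ) ≠ (0 : ℕ)
      omega
  have hne2 : w ≠ b2 := fun h => hsnd2 (congrArg (fun p : ZMod m × Fin n => (p.2 : ℕ)) h)
  have hadj2 : G.Adj w b2 := (tc_adj m n w b2).mpr ⟨hne2, Or.inl hrel2⟩
  have hs2 : tcSlot m n (w, b2) = (w, false) := by
    simp only [tcSlot, if_pos hrel2, tcDir, Prod.mk.injEq, true_and]
    rw [decide_eq_false_iff_not]
    exact fun h => hsnd2 (congrArg Fin.val h).symm
  -- b4 : spiral predecessor
  obtain ⟨b4, hrel4, hnrel4, hsnd4⟩ : ∃ b4 : ZMod m × Fin n, tcRel m n b4 w ∧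
      ¬ tcRel m n w b4 ∧ (b4.2 : ℕ) ≠ (w.2 : ℕ) := by
    by_cases h4 : (w.2 : ℕ) = 0
    · refine ⟨(w.1 - 1, ⟨n - 1, by omega⟩),
        Or.inr (Or.inr ⟨by show (n - 1 : ℕ) = n - 1; rfl, h4, by show w.1 = w.1 - 1 + 1; ring⟩),
        ?_, by show (n - 1 : ℕ) ≠ (w.2 : ℕ); omega⟩
      rintro (⟨hx, -⟩ | ⟨hx, -⟩ | ⟨-, hx, -⟩)
      · exact htwo w.1 (by linear_combination hx)
      · exact haddone w.1 (by linear_combination hx)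
      · have : (n - 1 : ℕ) = 0 := hx
        omega
    · refine ⟨(w.1, ⟨(w.2 : ℕ) - 1, by have := w.2.isLt; omega⟩),
        Or.inr (Or.inl ⟨rfl, by show (w.2 : ℕ) = (w.2 : ℕ) - 1 + 1; omega⟩),
        ?_, by show (w.2 : ℕ) - 1 ≠ (w.2 : ℕ); omega⟩
      rintro (⟨hx, -⟩ | ⟨-, hx⟩ | ⟨-, -, hx⟩)
      · exact haddone w.1 (show w.1 + 1 = w.1 from hx.symm)
      · have : (w.2 : ℕ) - 1 = (w.2 : ℕ) + 1 := hx
        omega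
      · exact haddone w.1 (show w.1 + 1 = w.1 from hx.symm)
  have hne4 : w ≠ b4 := fun h => hsnd4 (congrArg (fun p : ZMod m × Fin n => (p.2 : ℕ)) h).symm
  have hadj4 : G.Adj w b4 := (tc_adj m n w b4).mpr ⟨hne4, Or.inr hrel4⟩
  have hs4 : tcSlot m n (w, b4) = (b4, false) := by
    simp only [tcSlot, if_neg hnrel4, tcDir, Prod.mk.injEq, true_and]
    rw [decide_eq_false_iff_not]
    exact fun h => hsnd4 (congrArg Fin.val h).symm
  -- the four slots form a 4-element set
  set fours : Finset ((ZMod m × Fin n) × Bool) := {(w, true), (w, false), (b3, true), (b4, false)}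
    with hfours
  have hfourscard : fours.card = 4 := by
    rw [hfours]
    rw [Finset.card_insert_of_notMem, Finset.card_insert_of_notMem,
      Finset.card_insert_of_notMem, Finset.card_singleton]
    · simp [Prod.ext_iff, hne3, hne4]
    · simp [Prod.ext_iff, hne3, hne4]
    · simp [Prod.ext_iff, hne3, hne4]
  -- image of the witness set of w
  set img3 := (W w).image (fun u => tcSlot m n (u, w)) with himg3
  have himg3card : img3.card ≤ 3 := by
    rw [himg3]
    exact le_trans Finset.card_image_le (le_of_eq (hW w hwS).1)
  have hexσ : ∃ σ ∈ fours, σ ∉ img3 := by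
    by_contra h
    push_neg at h
    have := Finset.card_le_card h
    omega
  obtain ⟨σ, hσ4, hσimg⟩ := hexσ
  have hσform : ∃ b, G.Adj w b ∧ σ = tcSlot m n (w, b) := by
    rw [hfours] at hσ4
    rcases Finset.mem_insert.mp hσ4 with h | h4
    · exact ⟨b1, hadj1, h.trans hs1.symm⟩
    rcases Finset.mem_insert.mp h4 with h | h4
    · exact ⟨b2, hadj2, h.trans hs2.symm⟩
    rcases Finset.mem_insert.mp h4 with h | h4
    · exact ⟨b3, hadj3, h.trans hs3.symm⟩
    · exact ⟨b4, hadj4, (Finset.mem_singleton.mp h4).trans hs4.symm⟩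
  obtain ⟨bσ, hadjσ, hσeq⟩ := hσform
  -- injection into univ.erase σ
  have hmap : ∀ p ∈ D, tcSlot m n (p.2, p.1) ∈ (Finset.univ.erase σ) := by
    intro p hp
    rw [hD, Finset.mem_sigma] at hp
    obtain ⟨hp1, hp2⟩ := hp
    obtain ⟨hadjp, hrankp⟩ := (hW _ (hCmem _ hp1)).2 _ hp2
    refine Finset.mem_erase.mpr ⟨?_, Finset.mem_univ _⟩
    intro hpe
    rw [hσeq] at hpe
    rcases slot_inj hn hadjp hadjσ hpe with ⟨h1, -⟩ | ⟨h1, h2⟩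
    · rw [h1] at hrankp
      exact absurd hrankp (not_lt.mpr (hwmax' p.1))
    · have hmem2 : p.2 ∈ W w := by rw [← h2]; exact hp2
      refine hσimg ?_
      rw [himg3]
      refine Finset.mem_image.mpr ⟨p.2, hmem2, ?_⟩
      calc tcSlot m n (p.2, w) = tcSlot m n (p.2, p.1) := by rw [h2]
        _ = tcSlot m n (w, bσ) := hpe
        _ = σ := hσeq.symm
  have hinj : Set.InjOn (fun p : (Σ _ : ZMod m × Fin n, ZMod m × Fin n) =>
      tcSlot m n (p.2, p.1)) ↑D := by
    intro p hp q hq hpq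
    rw [Finset.mem_coe, hD, Finset.mem_sigma] at hp hq
    obtain ⟨hadjp, hrankp⟩ := (hW _ (hCmem _ hp.1)).2 _ hp.2
    obtain ⟨hadjq, hrankq⟩ := (hW _ (hCmem _ hq.1)).2 _ hq.2
    rcases slot_inj hn hadjp hadjq hpq with ⟨h1, h2⟩ | ⟨h1, h2⟩
    · exact Sigma.ext h2 (heq_of_eq h1)
    · exfalso
      rw [h2] at hrankp
      rw [← h1] at hrankq
      omega
  have hcount := Finset.card_le_card_of_injOn _ hmap hinj
  have herase : ((Finset.univ : Finset ((ZMod m × Fin n) × Bool)).erase σ).card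
      = m * n * 2 - 1 := by
    rw [Finset.card_erase_of_mem (Finset.mem_univ σ), Finset.card_univ]
    simp [hcardV]
  have hCcard : C.card = m * n - S.card := by
    rw [hC, Finset.card_sdiff_of_subset (Finset.subset_univ S), Finset.card_univ, hcardV]
  have hSle : S.card ≤ m * n := by
    have := Finset.card_le_card (Finset.subset_univ S)
    rwa [Finset.card_univ, hcardV] at this
  rw [hDcard, hCcard, herase] at hcount
  omega

end Lower
section Upper

variable {m n : ℕ} [NeZero m]

/-- Spiral coordinates. -/
def tcPos (m : ℕ) [NeZero m] (n : ℕ) (hn : 0 < n) (x : ℕ) : ZMod m × Fin n :=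
  (↑(x / n), ⟨x % n, Nat.mod_lt x hn⟩)

lemma tcPos_period (hn : 0 < n) (x : ℕ) :
    tcPos m n hn (x + m * n) = tcPos m n hn x := by
  unfold tcPos
  refine Prod.ext ?_ (Fin.ext ?_)
  · show ((((x + m * n) / n : ℕ)) : ZMod m) = _
    have h1 : (x + m * n) / n = x / n + m := by
      rw [Nat.add_mul_div_right _ _ hn]
    rw [h1, Nat.cast_add, ZMod.natCast_self, add_zero]
  · show (x + m * n) % n = x % n
    simp [Nat.add_mul_mod_self_right, Nat.add_mul_mod_self_left]

lemma tcPos_adj_succ (hm : 3 ≤ m) (hn3 : 3 ≤ n) (hn : 0 < n) (x : ℕ) :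
    (torusCordalis m n).Adj (tcPos m n hn x) (tcPos m n hn (x + 1)) := by
  haveI : Fact (1 < m) := ⟨by omega⟩
  rw [tc_adj]
  have hxd : x = n * (x / n) + x % n := (Nat.div_add_mod x n).symm
  by_cases hc : x % n + 1 < n
  · have hxd1 : x + 1 = n * (x / n) + (x % n + 1) := by omega
    have hdiv : (x + 1) / n = x / n := by
      rw [hxd1, Nat.mul_add_div hn, Nat.div_eq_of_lt hc, add_zero]
    have hmod : (x + 1) % n = x % n + 1 := by
      rw [hxd1, Nat.mul_add_mod, Nat.mod_eq_of_lt hc]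
    constructor
    · intro h
      have := congrArg (fun p : ZMod m × Fin n => (p.2 : ℕ)) h
      simp [tcPos, hmod] at this
    · refine Or.inl (Or.inr (Or.inl ⟨?_, ?_⟩))
      · show ((x / n : ℕ) : ZMod m) = (((x+1) / n : ℕ) : ZMod m)
        rw [hdiv]
      · show (x + 1) % n = x % n + 1
        exact hmod
  · have hx : x % n = n - 1 := by have := Nat.mod_lt x hn; omega
    have hxe : x + 1 = n * (x / n + 1) := by
      rw [Nat.mul_add, Nat.mul_one]
      omega
    have hdiv : (x + 1) / n = x / n + 1 := by
      rw [hxe, Nat.mul_div_cancel_left _ hn]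
    have hmod : (x + 1) % n = 0 := by
      rw [hxe, Nat.mul_mod_right]
    constructor
    · intro h
      have := congrArg (fun p : ZMod m × Fin n => (p.2 : ℕ)) h
      simp [tcPos, hmod, hx] at this
      omega
    · refine Or.inl (Or.inr (Or.inr ⟨hx, hmod, ?_⟩))
      show ((((x + 1) / n : ℕ)) : ZMod m) = ((x / n : ℕ) : ZMod m) + 1
      rw [hdiv]
      push_cast
      ring

lemma tcPos_adj_chord (hm : 3 ≤ m) (hn : 0 < n) (x : ℕ) :
    (torusCordalis m n).Adj (tcPos m n hn x) (tcPos m n hn (x + n)) := by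
  haveI : Fact (1 < m) := ⟨by omega⟩
  have hdiv : (x + n) / n = x / n + 1 := Nat.add_div_right x hn
  have hmod : (x + n) % n = x % n := Nat.add_mod_right x n
  rw [tc_adj]
  constructor
  · intro h
    have h1 := congrArg (fun p : ZMod m × Fin n => p.1) h
    simp only [tcPos, hdiv] at h1
    push_cast at h1
    have h' : ((x / n : ℕ) : ZMod m) + 0 = ((x / n : ℕ) : ZMod m) + 1 := by
      rw [add_zero]; exact h1
    exact one_ne_zero (add_left_cancel h').symm
  · refine Or.inl (Or.inl ⟨?_, ?_⟩)
    · show ((((x + n) / n : ℕ)) : ZMod m) = ((x / n : ℕ) : ZMod m) + 1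
      rw [hdiv]; push_cast; ring
    · exact Fin.ext hmod

lemma tcPos_ne_mod (hn : 0 < n) {x y : ℕ} (hxy : x ≤ y) (hd : (y - x) % n ≠ 0) :
    tcPos m n hn x ≠ tcPos m n hn y := by
  intro h
  have hcol : x % n = y % n := congrArg (fun p : ZMod m × Fin n => (p.2 : ℕ)) h
  have hmodeq : x ≡ y [MOD n] := hcol
  have := (Nat.modEq_iff_dvd' hxy).mp hmodeq
  exact hd ((Nat.mod_eq_zero_of_dvd this))

lemma tcPos_ne_row2 (hm : 3 ≤ m) (hn : 0 < n) (x : ℕ) :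
    tcPos m n hn x ≠ tcPos m n hn (x + 2 * n) := by
  intro h
  have hrow := congrArg (fun p : ZMod m × Fin n => p.1) h
  have hdiv : (x + 2 * n) / n = x / n + 2 := by
    rw [two_mul, ← add_assoc, Nat.add_div_right _ hn, Nat.add_div_right _ hn]
  simp only [tcPos, hdiv] at hrow
  push_cast at hrow
  have h' : ((x / n : ℕ) : ZMod m) + 0 = ((x / n : ℕ) : ZMod m) + 2 := by
    rw [add_zero]; exact hrow
  have h2 : ((2 : ℕ) : ZMod m) = 0 := by exact_mod_cast (add_left_cancel h').symm
  rw [ZMod.natCast_eq_zero_iff] at h2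
  have := Nat.le_of_dvd (by norm_num) h2
  omega

end Upper
section Upper2

variable {m n : ℕ} [NeZero m]

lemma act3 {V : Type*} (G : SimpleGraph V) (S : Set V) {v a b c : V}
    (hab : a ≠ b) (hac : a ≠ c) (hbc : b ≠ c)
    (h1 : G.Adj a v) (h2 : G.Adj b v) (h3 : G.Adj c v)
    (ha : Activated G (fun _ => 3) S a) (hb : Activated G (fun _ => 3) S b)
    (hc : Activated G (fun _ => 3) S c) :
    Activated G (fun _ => 3) S v := by
  classical
  refine Activated.step {a, b, c} ?_ ?_ ?_
  · intro u hu
    rcases Finset.mem_insert.mp hu with rfl | hu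
    · exact h1
    rcases Finset.mem_insert.mp hu with rfl | hu
    · exact h2
    · rw [Finset.mem_singleton.mp hu]; exact h3
  · show 3 ≤ _
    rw [Finset.card_insert_of_notMem (by simp [hab, hac]),
      Finset.card_insert_of_notMem (by simp [hbc]), Finset.card_singleton]
  · intro u hu
    rcases Finset.mem_insert.mp hu with rfl | hu
    · exact ha
    rcases Finset.mem_insert.mp hu with rfl | hu
    · exact hb
    · rw [Finset.mem_singleton.mp hu]; exact hc

section Helpers

variable {S : Set (ZMod m × Fin n)} {hn : 0 < n}

local notation "Act" x => Activated (torusCordalis m n) (fun _ => 3) S (tcPos m n hn x)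

lemma hd2 (hn3 : 3 ≤ n) : (2 : ℕ) % n ≠ 0 := by
  rw [Nat.mod_eq_of_lt (by omega)]; omega

lemma hdn1 (hn3 : 3 ≤ n) : (n - 1) % n ≠ 0 := by
  rw [Nat.mod_eq_of_lt (by omega)]; omega

lemma hdn2 (hn3 : 3 ≤ n) : (n + 1) % n ≠ 0 := by
  have : n + 1 = 1 + n := by omega
  rw [this, Nat.add_mod_right, Nat.mod_eq_of_lt (by omega)]
  omega

/-- target y+1, witnesses y, y+2, y+1+n -/
lemma helperA (hm : 3 ≤ m) (hn3 : 3 ≤ n) (y : ℕ)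
    (h1 : Act y) (h2 : Act (y + 2)) (h3 : Act (y + 1 + n)) : Act (y + 1) := by
  refine act3 _ _ ?_ ?_ ?_ (tcPos_adj_succ hm hn3 hn y) ?_ ?_ h1 h2 h3
  · refine tcPos_ne_mod hn (by omega) ?_
    have : y + 2 - y = 2 := by omega
    rw [this]; exact hd2 hn3
  · refine tcPos_ne_mod hn (by omega) ?_
    have : y + 1 + n - y = n + 1 := by omega
    rw [this]; exact hdn2 hn3
  · refine tcPos_ne_mod hn (by omega) ?_
    have : y + 1 + n - (y + 2) = n - 1 := by omega
    rw [this]; exact hdn1 hn3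
  · have : y + 2 = (y + 1) + 1 := by omega
    rw [this]
    exact (tcPos_adj_succ hm hn3 hn (y+1)).symm
  · exact (tcPos_adj_chord hm hn (y+1)).symm

/-- target y+n+1, witnesses y+n, y+n+2, y+1 -/
lemma helperD (hm : 3 ≤ m) (hn3 : 3 ≤ n) (y : ℕ)
    (h1 : Act (y + n)) (h2 : Act (y + n + 2)) (h3 : Act (y + 1)) : Act (y + n + 1) := by
  refine act3 _ _ ?_ ?_ ?_ (tcPos_adj_succ hm hn3 hn (y+n)) ?_ ?_ h1 h2 h3
  · refine tcPos_ne_mod hn (by omega) ?_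
    have : y + n + 2 - (y + n) = 2 := by omega
    rw [this]; exact hd2 hn3
  · refine (tcPos_ne_mod hn (by omega) ?_).symm
    have : y + n - (y + 1) = n - 1 := by omega
    rw [this]; exact hdn1 hn3
  · refine (tcPos_ne_mod hn (by omega) ?_).symm
    have : y + n + 2 - (y + 1) = n + 1 := by omega
    rw [this]; exact hdn2 hn3
  · have : y + n + 2 = (y + n + 1) + 1 := by omega
    rw [this]
    exact (tcPos_adj_succ hm hn3 hn (y+n+1)).symm
  · have h := tcPos_adj_chord hm hn (y+1)
    have : y + 1 + n = y + n + 1 := by omega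
    rw [this] at h
    exact h

/-- target y+n, witnesses y, y+(n-1), y+2n -/
lemma helperE (hm : 3 ≤ m) (hn3 : 3 ≤ n) (y : ℕ)
    (h1 : Act y) (h2 : Act (y + (n - 1))) (h3 : Act (y + 2 * n)) : Act (y + n) := by
  refine act3 _ _ ?_ ?_ ?_ (tcPos_adj_chord hm hn y) ?_ ?_ h1 h2 h3
  · refine tcPos_ne_mod hn (by omega) ?_
    have : y + (n - 1) - y = n - 1 := by omega
    rw [this]; exact hdn1 hn3
  · exact tcPos_ne_row2 hm hn y
  · refine tcPos_ne_mod hn (by omega) ?_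
    have : y + 2 * n - (y + (n - 1)) = n + 1 := by omega
    rw [this]; exact hdn2 hn3
  · have : y + n = (y + (n - 1)) + 1 := by omega
    rw [this]
    exact tcPos_adj_succ hm hn3 hn (y + (n-1))
  · have h := tcPos_adj_chord hm hn (y + n)
    have : y + n + n = y + 2 * n := by omega
    rw [this] at h
    exact h.symm

/-- target x+n+1, witnesses x+n, x+1, x+2n+1 (gap eating) -/
lemma helperC (hm : 3 ≤ m) (hn3 : 3 ≤ n) (x : ℕ)
    (h1 : Act (x + n)) (h2 : Act (x + 1)) (h3 : Act (x + 2 * n + 1)) : Act (x + n + 1) := by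
  refine act3 _ _ ?_ ?_ ?_ (tcPos_adj_succ hm hn3 hn (x+n)) ?_ ?_ h1 h2 h3
  · refine (tcPos_ne_mod hn (by omega) ?_).symm
    have : x + n - (x + 1) = n - 1 := by omega
    rw [this]; exact hdn1 hn3
  · refine tcPos_ne_mod hn (by omega) ?_
    have : x + 2 * n + 1 - (x + n) = n + 1 := by omega
    rw [this]; exact hdn2 hn3
  · have h := tcPos_ne_row2 hm hn (x + 1)
    have : x + 1 + 2 * n = x + 2 * n + 1 := by omega
    rw [this] at h
    exact h
  · have h := tcPos_adj_chord hm hn (x+1)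
    have : x + 1 + n = x + n + 1 := by omega
    rw [this] at h
    exact h
  · have h := tcPos_adj_chord hm hn (x + n + 1)
    have : x + n + 1 + n = x + 2 * n + 1 := by omega
    rw [this] at h
    exact h.symm

end Helpers

end Upper2
section Upper3

/-- Seed offsets within a window. -/
def fOff (n k : ℕ) : ℕ :=
  if n % 2 = 1 then 2 * k
  else if k = 0 then 0 else if k ≤ n / 2 then 2 * k - 1 else 2 * k

/-- The seed set. -/
def tcSeeds (m : ℕ) [NeZero m] (n : ℕ) (hn : 0 < n) : Finset (ZMod m × Fin n) :=
  ((Finset.range ((m + 2) / 3)) ×ˢ (Finset.range (n + 1))).image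
    (fun p => tcPos m n hn (3 * p.1 * n + fOff n p.2))

variable {m n : ℕ} [NeZero m]

lemma tcSeeds_card (hn : 0 < n) : (tcSeeds m n hn).card ≤ (m + 2) / 3 * (n + 1) := by
  refine le_trans Finset.card_image_le ?_
  rw [Finset.card_product, Finset.card_range, Finset.card_range]

lemma seed_act (hn : 0 < n) (t k : ℕ) (ht : t < (m + 2) / 3) (hk : k ≤ n) :
    Activated (torusCordalis m n) (fun _ => 3) (↑(tcSeeds m n hn))
      (tcPos m n hn (3 * t * n + fOff n k)) := by
  refine Activated.base ?_
  rw [Finset.mem_coe]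
  exact Finset.mem_image.mpr ⟨(t, k), Finset.mem_product.mpr
    ⟨Finset.mem_range.mpr ht, Finset.mem_range.mpr (by omega)⟩, rfl⟩

lemma fill (hm : 3 ≤ m) (hn3 : 3 ≤ n) (hn : 0 < n) (t : ℕ) (ht : t < (m + 2) / 3) :
    ∀ o, o ≤ 2 * n → Activated (torusCordalis m n) (fun _ => 3) (↑(tcSeeds m n hn))
      (tcPos m n hn (3 * t * n + o)) := by
  set G := torusCordalis m n
  set S : Set (ZMod m × Fin n) := ↑(tcSeeds m n hn) with hS
  set B := 3 * t * n with hB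
  have seedk : ∀ k, k ≤ n → Activated G (fun _ => 3) S (tcPos m n hn (B + fOff n k)) :=
    fun k hk => seed_act hn t k ht hk
  rcases Nat.even_or_odd n with hne | hno
  · -- n even
    have hpar : n % 2 = 0 := Nat.even_iff.mp hne
    have seed0 : Activated G (fun _ => 3) S (tcPos m n hn (B + 0)) := by
      have h := seedk 0 (by omega)
      rwa [show fOff n 0 = 0 by unfold fOff; rw [if_neg (by omega)]; simp] at h
    have seedOdd : ∀ o, o % 2 = 1 → o ≤ n - 1 →
        Activated G (fun _ => 3) S (tcPos m n hn (B + o)) := by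
      intro o ho hle
      have h := seedk ((o + 1) / 2) (by omega)
      rwa [show fOff n ((o + 1) / 2) = o by
        unfold fOff; rw [if_neg (by omega), if_neg (by omega), if_pos (by omega)]; omega] at h
    have seedEv : ∀ o, o % 2 = 0 → n + 2 ≤ o → o ≤ 2 * n →
        Activated G (fun _ => 3) S (tcPos m n hn (B + o)) := by
      intro o ho h1 h2
      have h := seedk (o / 2) (by omega)
      rwa [show fOff n (o / 2) = o by
        unfold fOff; rw [if_neg (by omega), if_neg (by omega), if_neg (by omega)]; omega] at h
    -- the o = n case, needed twice
    have actn : Activated G (fun _ => 3) S (tcPos m n hn (B + n)) := by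
      refine helperE hm hn3 B seed0 ?_ ?_
      · have h := seedOdd (n - 1) (by omega) (by omega)
        rwa [show B + (n - 1) = B + (n - 1) from rfl] at h
      · exact seedEv (2 * n) (by omega) (by omega) (by omega)
    intro o ho
    rcases (by omega : o % 2 = 0 ∨ o % 2 = 1) with hop | hop
    · -- even offsets
      rcases (by omega : o = 0 ∨ (2 ≤ o ∧ o ≤ n - 2) ∨ o = n ∨ (n + 2 ≤ o ∧ o ≤ 2 * n))
        with rfl | ⟨h1, h2⟩ | rfl | ⟨h1, h2⟩
      · exact seed0
      · -- helperA with y = B + (o-1)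
        have hA := helperA (S := S) hm hn3 (B + (o - 1)) (seedOdd (o - 1) (by omega) (by omega))
          (by rw [show B + (o - 1) + 2 = B + (o + 1) by omega]
              exact seedOdd (o + 1) (by omega) (by omega))
          (by rw [show B + (o - 1) + 1 + n = B + (o + n) by omega]
              exact seedEv (o + n) (by omega) (by omega) (by omega))
        rwa [show B + (o - 1) + 1 = B + o by omega] at hA
      · exact actn
      · exact seedEv o hop h1 h2
    · -- odd offsets
      rcases (by omega : (1 ≤ o ∧ o ≤ n - 1) ∨ o = n + 1 ∨ (n + 3 ≤ o ∧ o ≤ 2 * n - 1))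
        with ⟨h1, h2⟩ | rfl | ⟨h1, h2⟩
      · exact seedOdd o hop h2
      · -- helperD with y = B
        have hD := helperD (S := S) hm hn3 B actn
          (seedEv (n + 2) (by omega) (by omega) (by omega))
          (seedOdd 1 (by omega) (by omega))
        rwa [show B + n + 1 = B + (n + 1) by omega] at hD
      · -- helperD with y = B + (o - n - 1)
        have hD := helperD (S := S) hm hn3 (B + (o - n - 1))
          (by rw [show B + (o - n - 1) + n = B + (o - 1) by omega]
              exact seedEv (o - 1) (by omega) (by omega) (by omega))
          (by rw [show B + (o - n - 1) + n + 2 = B + (o + 1) by omega]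
              exact seedEv (o + 1) (by omega) (by omega) (by omega))
          (by rw [show B + (o - n - 1) + 1 = B + (o - n) by omega]
              exact seedOdd (o - n) (by omega) (by omega))
        rwa [show B + (o - n - 1) + n + 1 = B + o by omega] at hD
  · -- n odd
    have hpar : n % 2 = 1 := Nat.odd_iff.mp hno
    have seedE : ∀ o, o % 2 = 0 → o ≤ 2 * n →
        Activated G (fun _ => 3) S (tcPos m n hn (B + o)) := by
      intro o ho hle
      have h := seedk (o / 2) (by omega)
      rwa [show fOff n (o / 2) = o by unfold fOff; rw [if_pos hpar]; omega] at h
    intro o ho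
    rcases (by omega : o % 2 = 0 ∨ o % 2 = 1) with hop | hop
    · exact seedE o hop ho
    · rcases (by omega : o ≤ n ∨ (n + 1 ≤ o ∧ o ≤ 2 * n - 1)) with h1 | ⟨h1, h2⟩
      · -- helperA with y = B + (o-1)
        have hA := helperA (S := S) hm hn3 (B + (o - 1)) (seedE (o - 1) (by omega) (by omega))
          (by rw [show B + (o - 1) + 2 = B + (o + 1) by omega]
              exact seedE (o + 1) (by omega) (by omega))
          (by rw [show B + (o - 1) + 1 + n = B + (o + n) by omega]
              exact seedE (o + n) (by omega) (by omega))
        rwa [show B + (o - 1) + 1 = B + o by omega] at hA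
      · -- helperD with y = B + (o - n - 1)
        have hD := helperD (S := S) hm hn3 (B + (o - n - 1))
          (by rw [show B + (o - n - 1) + n = B + (o - 1) by omega]
              exact seedE (o - 1) (by omega) (by omega))
          (by rw [show B + (o - n - 1) + n + 2 = B + (o + 1) by omega]
              exact seedE (o + 1) (by omega) (by omega))
          (by rw [show B + (o - n - 1) + 1 = B + (o - n) by omega]
              exact seedE (o - n) (by omega) (by omega))
        rwa [show B + (o - n - 1) + n + 1 = B + o by omega] at hD

end Upper3
section Upper4

variable {m n : ℕ} [NeZero m]

lemma gapL (hm : 3 ≤ m) (hn3 : 3 ≤ n) (hn : 0 < n) {S : Set (ZMod m × Fin n)} (t : ℕ)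
    (hfill : ∀ o, o ≤ 2 * n → Activated (torusCordalis m n) (fun _ => 3) S
      (tcPos m n hn (3 * t * n + o)))
    (hnext : ∀ j, j < n → Activated (torusCordalis m n) (fun _ => 3) S
      (tcPos m n hn (3 * (t + 1) * n + j))) :
    ∀ j, j < n → Activated (torusCordalis m n) (fun _ => 3) S
      (tcPos m n hn (3 * t * n + 2 * n + j)) := by
  have hB3 : 3 * (t + 1) * n = 3 * t * n + 3 * n := by ring
  intro j
  induction j with
  | zero =>
    intro _
    rw [show 3 * t * n + 2 * n + 0 = 3 * t * n + 2 * n by omega]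
    exact hfill (2 * n) le_rfl
  | succ j ih =>
    intro hj
    have h1 := ih (by omega)
    have h2 := hfill (n + (j + 1)) (by omega)
    have h3 := hnext (j + 1) hj
    rw [hB3] at h3
    have hC := helperC (S := S) hm hn3 (3 * t * n + n + j)
      (by rwa [show 3 * t * n + n + j + n = 3 * t * n + 2 * n + j by omega])
      (by rwa [show 3 * t * n + n + j + 1 = 3 * t * n + (n + (j + 1)) by omega])
      (by rwa [show 3 * t * n + n + j + 2 * n + 1 = 3 * t * n + 3 * n + (j + 1) by omega])
    rwa [show 3 * t * n + n + j + n + 1 = 3 * t * n + 2 * n + (j + 1) by omega] at hC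

lemma tc_upper (hm : 3 ≤ m) (hn3 : 3 ≤ n) :
    ∃ S : Finset (ZMod m × Fin n), S.card ≤ (m + 2) / 3 * (n + 1) ∧
      ∀ v, Activated (torusCordalis m n) (fun _ => 3) (↑S) v := by
  have hn : 0 < n := by omega
  refine ⟨tcSeeds m n hn, tcSeeds_card hn, ?_⟩
  set G := torusCordalis m n
  set S : Set (ZMod m × Fin n) := ↑(tcSeeds m n hn) with hS
  set q := (m + 2) / 3 with hq
  have hq1 : 1 ≤ q := by omega
  have hqm : m ≤ 3 * q := by omega
  have hq3 : 3 * q ≤ m + 2 := by omega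
  have fillL : ∀ t, t < q → ∀ o, o ≤ 2 * n →
      Activated G (fun _ => 3) S (tcPos m n hn (3 * t * n + o)) :=
    fun t ht => fill hm hn3 hn t ht
  have periodL : ∀ x, tcPos m n hn (x + m * n) = tcPos m n hn x := tcPos_period hn
  have next0 : ∀ j, j < n → Activated G (fun _ => 3) S (tcPos m n hn (3 * 1 * n + j)) := by
    intro j hj
    by_cases hq2 : 2 ≤ q
    · exact fillL 1 (by omega) j (by omega)
    · have hm3 : m = 3 := by omega
      rw [show 3 * 1 * n + j = j + m * n by rw [hm3]; ring, periodL]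
      have h := fillL 0 (by omega) j (by omega)
      rwa [show 3 * 0 * n + j = j by ring] at h
  have gap0 : ∀ j, j < n → Activated G (fun _ => 3) S
      (tcPos m n hn (3 * 0 * n + 2 * n + j)) := by
    refine gapL hm hn3 hn 0 (fillL 0 (by omega)) ?_
    intro j hj
    rw [show 3 * (0 + 1) * n = 3 * 1 * n by norm_num]
    exact next0 j hj
  have nextL : ∀ t, t < q → ∀ j, j < n →
      Activated G (fun _ => 3) S (tcPos m n hn (3 * (t + 1) * n + j)) := by
    intro t ht j hj
    by_cases h : t + 1 < q
    · exact fillL (t + 1) h j (by omega)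
    · have ht1 : t + 1 = q := by omega
      have hred : 3 * (t + 1) * n + j = (3 * q - m) * n + j + m * n := by
        rw [ht1]
        have h1 : (3 * q - m) + m = 3 * q := by omega
        calc 3 * q * n + j = ((3 * q - m) + m) * n + j := by rw [h1]
          _ = (3 * q - m) * n + j + m * n := by ring
      rw [hred, periodL]
      rcases (by omega : 3 * q - m = 0 ∨ 3 * q - m = 1 ∨ 3 * q - m = 2) with h0 | h0 | h0
      · rw [h0]
        have h := fillL 0 (by omega) j (by omega)
        rwa [show 3 * 0 * n + j = 0 * n + j by ring] at h
      · rw [h0]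
        have h := fillL 0 (by omega) (n + j) (by omega)
        rwa [show 3 * 0 * n + (n + j) = 1 * n + j by ring] at h
      · rw [h0]
        have h := gap0 j hj
        rwa [show 3 * 0 * n + 2 * n + j = 2 * n + j by ring] at h
  have gapT : ∀ t, t < q → ∀ j, j < n →
      Activated G (fun _ => 3) S (tcPos m n hn (3 * t * n + 2 * n + j)) :=
    fun t ht => gapL hm hn3 hn t (fillL t ht) (nextL t ht)
  -- every position below m*n is activated
  have hall : ∀ x, x < m * n → Activated G (fun _ => 3) S (tcPos m n hn x) := by
    intro x hx
    have hρ : x / n < m := Nat.div_lt_of_lt_mul (Nat.lt_of_lt_of_eq hx (mul_comm m n))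
    have hj : x % n < n := Nat.mod_lt _ hn
    have hx' : x = n * (x / n) + x % n := (Nat.div_add_mod x n).symm
    set ρ := x / n with hρdef
    set j := x % n with hjdef
    set t := ρ / 3 with htdef
    have ht : t < q := by omega
    have hρ' : ρ = 3 * t + ρ % 3 := by omega
    rcases (by omega : ρ % 3 = 0 ∨ ρ % 3 = 1 ∨ ρ % 3 = 2) with h0 | h0 | h0
    · have hxeq : x = 3 * t * n + j := by
        rw [hx', hρ', h0]; ring
      rw [hxeq]
      exact fillL t ht j (by omega)
    · have hxeq : x = 3 * t * n + (n + j) := by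
        rw [hx', hρ', h0]; ring
      rw [hxeq]
      exact fillL t ht (n + j) (by omega)
    · have hxeq : x = 3 * t * n + 2 * n + j := by
        rw [hx', hρ', h0]; ring
      rw [hxeq]
      exact gapT t ht j hj
  intro v
  have hvx : v = tcPos m n hn (n * v.1.val + v.2.val) := by
    have hv2 := v.2.isLt
    unfold tcPos
    have hdiv : (n * v.1.val + v.2.val) / n = v.1.val := by
      rw [Nat.mul_add_div hn, Nat.div_eq_of_lt hv2, add_zero]
    have hmod : (n * v.1.val + v.2.val) % n = v.2.val := by
      rw [Nat.mul_add_mod, Nat.mod_eq_of_lt hv2]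
    refine Prod.ext ?_ (Fin.ext ?_)
    · show v.1 = _
      rw [hdiv, ZMod.natCast_val, ZMod.cast_id]
    · show (v.2 : ℕ) = _
      exact hmod.symm
  rw [hvx]
  refine hall _ ?_
  have h1 : v.1.val < m := ZMod.val_lt v.1
  have h2 : v.2.val < n := v.2.isLt
  calc n * v.1.val + v.2.val < n * v.1.val + n := by omega
    _ = n * (v.1.val + 1) := by ring
    _ ≤ n * m := Nat.mul_le_mul_left n (by omega)
    _ = m * n := mul_comm n m

end Upper4
/-- For `m, n ≥ 3`,
`⌈(mn+1)/3⌉ ≤ min-seed(C_m ⊘ C_n, 3) ≤ ⌈m/3⌉(n+1)`. -/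
theorem minSeed_torusCordalis_bounds (m n : ℕ) [NeZero m] (hm : 3 ≤ m) (hn : 3 ≤ n) :
    (m * n + 3) / 3 ≤ minSeed (torusCordalis m n) (fun _ => 3) ∧
    minSeed (torusCordalis m n) (fun _ => 3) ≤ (m + 2) / 3 * (n + 1) := by
  obtain ⟨S, hcard, hall⟩ := tc_upper hm hn
  have hmem : S.card ∈ {k | ∃ S' : Finset (ZMod m × Fin n), S'.card = k ∧
      ∀ v, Activated (torusCordalis m n) (fun _ => 3) (↑S') v} := ⟨S, rfl, hall⟩
  constructor
  · refine le_csInf ⟨S.card, hmem⟩ ?_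
    rintro b ⟨S', rfl, hall'⟩
    exact tc_lower hm hn S' hall'
  · exact le_trans (Nat.sInf_le hmem) hcard
end

section
/- For the toroidal mesh C_m □ C_n (the Cartesian product of cycles, m, n ≥ 3), min-seed(C_m □ C_n, 3) ≥ ⌈(mn+1)/3⌉ and min-seed(C_m □ C_n, 3) ≤ min{⌈m/3⌉(n+1), ⌈n/3⌉(m+1)}. -/
open Finset

set_option linter.unusedSectionVars false

def toroidalMesh (m n : ℕ) [NeZero m] [NeZero n] : SimpleGraph (ZMod m × ZMod n) :=
  SimpleGraph.fromRel (fun a b =>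
    (b.1 = a.1 + 1 ∧ b.2 = a.2) ∨ (a.1 = b.1 ∧ b.2 = a.2 + 1))

lemma ne_of_sub' {α : Type*} [AddCommGroup α] {x y c : α} (h : x - y = c) (hc : c ≠ 0) :
    x ≠ y := fun e => hc (by rw [← h, e, sub_self])

section Adj
variable {m n : ℕ} [NeZero m] [NeZero n]

lemma two_ne_zero_zmod (hm : 3 ≤ m) : (2 : ZMod m) ≠ 0 := by
  intro h
  have h2 : ((2:ℕ) : ZMod m) = ((0:ℕ) : ZMod m) := by push_cast; exact h
  have := congrArg ZMod.val h2
  rw [ZMod.val_cast_of_lt (by omega), ZMod.val_cast_of_lt (by omega)] at this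
  omega

lemma one_ne_zero_zmod (hm : 3 ≤ m) : (1 : ZMod m) ≠ 0 := by
  intro h
  have h2 : ((1:ℕ) : ZMod m) = ((0:ℕ) : ZMod m) := by push_cast; exact h
  have := congrArg ZMod.val h2
  rw [ZMod.val_cast_of_lt (by omega), ZMod.val_cast_of_lt (by omega)] at this
  omega

variable (hm : 3 ≤ m) (hn : 3 ≤ n)
include hm hn

lemma tm_adj_up (a : ZMod m × ZMod n) : (toroidalMesh m n).Adj a (a.1 + 1, a.2) := by
  rw [toroidalMesh, SimpleGraph.fromRel_adj]
  refine ⟨fun h => ?_, Or.inl (Or.inl ⟨rfl, rfl⟩)⟩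
  exact ne_of_sub' (show a.1 - (a.1 + 1) = -1 by ring)
    (by simpa using one_ne_zero_zmod hm) (congrArg Prod.fst h)

lemma tm_adj_right (a : ZMod m × ZMod n) : (toroidalMesh m n).Adj a (a.1, a.2 + 1) := by
  rw [toroidalMesh, SimpleGraph.fromRel_adj]
  refine ⟨fun h => ?_, Or.inl (Or.inr ⟨rfl, rfl⟩)⟩
  exact ne_of_sub' (show a.2 - (a.2 + 1) = -1 by ring)
    (by simpa using one_ne_zero_zmod hn) (congrArg Prod.snd h)

lemma tm_adj_down (a : ZMod m × ZMod n) : (toroidalMesh m n).Adj a (a.1 - 1, a.2) := by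
  have := ((toroidalMesh m n).adj_comm _ _).1 (tm_adj_up hm hn (a.1 - 1, a.2))
  simpa using this

lemma tm_adj_left (a : ZMod m × ZMod n) : (toroidalMesh m n).Adj a (a.1, a.2 - 1) := by
  have := ((toroidalMesh m n).adj_comm _ _).1 (tm_adj_right hm hn (a.1, a.2 - 1))
  simpa using this

lemma tm_adj (a b : ZMod m × ZMod n) :
    (toroidalMesh m n).Adj a b ↔
      b = (a.1 + 1, a.2) ∨ b = (a.1 - 1, a.2) ∨ b = (a.1, a.2 + 1) ∨ b = (a.1, a.2 - 1) := by
  constructor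
  · rw [toroidalMesh, SimpleGraph.fromRel_adj]
    rintro ⟨hne, (⟨h1, h2⟩ | ⟨h1, h2⟩) | (⟨h1, h2⟩ | ⟨h1, h2⟩)⟩
    · exact Or.inl (Prod.ext h1 h2)
    · exact Or.inr (Or.inr (Or.inl (Prod.ext h1.symm h2)))
    · exact Or.inr (Or.inl (Prod.ext (by rw [h1]; ring) h2.symm))
    · exact Or.inr (Or.inr (Or.inr (Prod.ext h1 (by rw [h2]; ring))))
  · rintro (rfl | rfl | rfl | rfl)
    · exact tm_adj_up hm hn a
    · exact tm_adj_down hm hn a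
    · exact tm_adj_right hm hn a
    · exact tm_adj_left hm hn a

lemma tm_deg (a : ZMod m × ZMod n) [DecidablePred ((toroidalMesh m n).Adj a)] :
    (univ.filter ((toroidalMesh m n).Adj a)).card = 4 := by
  classical
  have hm2 := two_ne_zero_zmod hm
  have hn2 := two_ne_zero_zmod hn
  have hm1 := one_ne_zero_zmod hm
  have hn1 := one_ne_zero_zmod hn
  have e1 : a.1 + 1 ≠ a.1 - 1 := ne_of_sub' (by ring) hm2
  have e2 : a.2 + 1 ≠ a.2 - 1 := ne_of_sub' (by ring) hn2
  have f1 : a.1 + 1 ≠ a.1 := ne_of_sub' (by ring) hm1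
  have f2 : a.1 - 1 ≠ a.1 := ne_of_sub' (show a.1 - 1 - a.1 = -1 by ring) (by simpa using hm1)
  have g1 : a.2 + 1 ≠ a.2 := ne_of_sub' (by ring) hn1
  have g2 : a.2 - 1 ≠ a.2 := ne_of_sub' (show a.2 - 1 - a.2 = -1 by ring) (by simpa using hn1)
  have h1 : (univ.filter ((toroidalMesh m n).Adj a)) =
      {(a.1 + 1, a.2), (a.1 - 1, a.2), (a.1, a.2 + 1), (a.1, a.2 - 1)} := by
    ext b
    simp only [mem_filter, mem_univ, true_and, tm_adj hm hn, mem_insert, mem_singleton]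
  rw [h1]
  rw [card_insert_of_notMem (by
    simp only [mem_insert, mem_singleton, Prod.ext_iff]; push_neg
    exact ⟨fun h => absurd h e1, fun h => absurd h f1, fun h => absurd h f1⟩)]
  rw [card_insert_of_notMem (by
    simp only [mem_insert, mem_singleton, Prod.ext_iff]; push_neg
    exact ⟨fun h => absurd h f2, fun h => absurd h f2⟩)]
  rw [card_insert_of_notMem (by
    simp only [mem_singleton, Prod.ext_iff]; push_neg
    exact fun _ h => absurd h e2)]
  simp

end Adj


section Lower
variable {V : Type*} [Fintype V] [DecidableEq V] (G : SimpleGraph V)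

open scoped Classical in
/-- number of neighbors of `v` inside `A` -/
noncomputable def nbc (A : Finset V) (v : V) : ℕ := (A.filter (G.Adj v)).card

open scoped Classical in
noncomputable def E2 (A : Finset V) : ℕ := ∑ v ∈ A, nbc G A v

open scoped Classical in
noncomputable def bstep (A : Finset V) : Finset V :=
  A ∪ univ.filter (fun v => 3 ≤ nbc G A v)

lemma subset_bstep (A : Finset V) : A ⊆ bstep G A := subset_union_left

open scoped Classical in
lemma nbc_mono {A B : Finset V} (h : A ⊆ B) (v : V) : nbc G A v ≤ nbc G B v := by
  classical
  unfold nbc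
  convert card_le_card (filter_subset_filter _ h)

open scoped Classical in
lemma double_count (X Y : Finset V) : ∑ v ∈ X, nbc G Y v = ∑ v ∈ Y, nbc G X v := by
  classical
  unfold nbc
  simp only [card_filter]
  rw [Finset.sum_comm]
  apply Finset.sum_congr rfl
  intro y _
  apply Finset.sum_congr rfl
  intro x _
  simp [G.adj_comm]

open scoped Classical in
lemma nbc_union {A B : Finset V} (h : Disjoint A B) (v : V) :
    nbc G (A ∪ B) v = nbc G A v + nbc G B v := by
  classical
  unfold nbc
  rw [filter_union, card_union_of_disjoint (disjoint_filter_filter h)]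

open scoped Classical in
lemma E2_split {A D : Finset V} (h : Disjoint A D) :
    E2 G (A ∪ D) = E2 G A + (∑ v ∈ A, nbc G D v + (∑ v ∈ D, nbc G A v + ∑ v ∈ D, nbc G D v)) := by
  classical
  unfold E2
  rw [sum_union h]
  simp only [nbc_union G h]
  rw [sum_add_distrib, sum_add_distrib]
  ring

open scoped Classical in
lemma key_step (A : Finset V) :
    E2 G A + 6 * (bstep G A \ A).card ≤ E2 G (bstep G A) := by
  classical
  set D := bstep G A \ A with hD
  have hdisj : Disjoint A D := disjoint_sdiff
  have hunion : bstep G A = A ∪ D := by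
    rw [hD, union_sdiff_self_eq_union]
    exact (union_eq_right.2 (subset_bstep G A)).symm
  have hmem : ∀ v ∈ D, 3 ≤ nbc G A v := by
    intro v hv
    rw [hD, mem_sdiff] at hv
    obtain ⟨hv1, hv2⟩ := hv
    rw [bstep, mem_union] at hv1
    rcases hv1 with h | h
    · exact absurd h hv2
    · exact (mem_filter.1 h).2
  have hsum : 3 * D.card ≤ ∑ v ∈ D, nbc G A v := by
    calc 3 * D.card = ∑ _v ∈ D, 3 := by rw [sum_const]; ring
    _ ≤ _ := sum_le_sum hmem
  have hdc : ∑ v ∈ A, nbc G D v = ∑ v ∈ D, nbc G A v := double_count G A D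
  rw [hunion, E2_split G hdisj, hdc]
  omega

open scoped Classical in
lemma last_step (hdeg : ∀ v, nbc G univ v = 4) {A : Finset V}
    (hstep : bstep G A = univ) (hne : A ≠ univ) :
    E2 G A + 6 * (univ \ A).card + 1 ≤ E2 G univ := by
  classical
  set D := univ \ A with hD
  have hdisj : Disjoint A D := disjoint_sdiff
  have hunion : A ∪ D = univ := by
    rw [hD, union_sdiff_of_subset (subset_univ A)]
  have hmem : ∀ v ∈ D, 3 ≤ nbc G A v := by
    intro v hv
    rw [hD, mem_sdiff] at hv
    have hv1 : v ∈ bstep G A := hstep ▸ mem_univ v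
    rw [bstep, mem_union] at hv1
    rcases hv1 with h | h
    · exact absurd h hv.2
    · exact (mem_filter.1 h).2
  have hper : ∀ v ∈ D, 7 ≤ 2 * nbc G A v + nbc G D v := by
    intro v hv
    have h4 : nbc G A v + nbc G D v = 4 := by
      rw [← nbc_union G hdisj, hunion, hdeg]
    have := hmem v hv
    omega
  have hDpos : 1 ≤ D.card := by
    rw [Nat.one_le_iff_ne_zero, ← Nat.pos_iff_ne_zero, card_pos, hD, sdiff_nonempty]
    intro h
    exact hne (univ_subset_iff.1 h)
  have hsum : 7 * D.card ≤ 2 * ∑ v ∈ D, nbc G A v + ∑ v ∈ D, nbc G D v := by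
    calc 7 * D.card = ∑ _v ∈ D, 7 := by rw [sum_const]; ring
    _ ≤ ∑ v ∈ D, (2 * nbc G A v + nbc G D v) := sum_le_sum hper
    _ = _ := by rw [sum_add_distrib, mul_sum]
  have hdc : ∑ v ∈ A, nbc G D v = ∑ v ∈ D, nbc G A v := double_count G A D
  have hsplit := E2_split G hdisj
  rw [hunion] at hsplit
  rw [hsplit, hdc]
  omega

open scoped Classical in
lemma bstep_invariant (S : Finset V) (t : ℕ) :
    6 * ((bstep G)^[t] S).card ≤ E2 G ((bstep G)^[t] S) + 6 * S.card := by
  induction t with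
  | zero => simp
  | succ t ih =>
    rw [Function.iterate_succ_apply']
    set A := (bstep G)^[t] S
    have hsub : A ⊆ bstep G A := subset_bstep G A
    have hcard : (bstep G A \ A).card + A.card = (bstep G A).card :=
      card_sdiff_add_card_eq_card hsub
    have hkey := key_step G A
    omega

open scoped Classical in
lemma iter_mono (S : Finset V) {s t : ℕ} (h : s ≤ t) :
    (bstep G)^[s] S ⊆ (bstep G)^[t] S := by
  induction t with
  | zero => simp_all
  | succ t ih =>
    rcases Nat.lt_or_ge s (t+1) with h' | h'
    · rw [Function.iterate_succ_apply']
      exact (ih (by omega)).trans (subset_bstep G _)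
    · have : s = t + 1 := by omega
      subst this; rfl

open scoped Classical in
lemma exists_uniform (S : Finset V) (T : Finset V)
    (h : ∀ u ∈ T, ∃ t, u ∈ (bstep G)^[t] S) : ∃ t0, ∀ u ∈ T, u ∈ (bstep G)^[t0] S := by
  classical
  induction T using Finset.induction with
  | empty => exact ⟨0, by simp⟩
  | insert x s hx ih =>
    obtain ⟨t1, h1⟩ := ih (fun u hu => h u (mem_insert_of_mem hu))
    obtain ⟨t2, h2⟩ := h x (mem_insert_self x s)
    refine ⟨max t1 t2, fun u hu => ?_⟩
    rcases mem_insert.1 hu with rfl | hu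
    · exact iter_mono G S (le_max_right t1 t2) h2
    · exact iter_mono G S (le_max_left t1 t2) (h1 u hu)

open scoped Classical in
lemma activated_in_iter (S : Finset V) {v : V}
    (h : Activated G (fun _ => 3) ↑S v) : ∃ t, v ∈ (bstep G)^[t] S := by
  induction h with
  | base hv => exact ⟨0, by simpa using hv⟩
  | step T hadj hcard hact ih =>
    rename_i v'
    obtain ⟨t0, h0⟩ := exists_uniform G S T ih
    refine ⟨t0 + 1, ?_⟩
    rw [Function.iterate_succ_apply']
    rw [bstep, mem_union]
    refine Or.inr (mem_filter.2 ⟨mem_univ _, ?_⟩)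
    refine le_trans hcard (card_le_card ?_)
    intro u hu
    exact mem_filter.2 ⟨h0 u hu, (G.adj_comm _ _).1 (hadj u hu)⟩

open scoped Classical in
lemma lower_core (hdeg : ∀ v, nbc G univ v = 4) (S : Finset V)
    (hall : ∀ v, Activated G (fun _ => 3) ↑S v) :
    Fintype.card V + 1 ≤ 3 * S.card ∨ S = univ := by
  classical
  have hex : ∃ t, (bstep G)^[t] S = univ := by
    obtain ⟨t0, h0⟩ := exists_uniform G S univ (fun v _ => activated_in_iter G S (hall v))
    exact ⟨t0, eq_univ_iff_forall.2 (fun v => h0 v (mem_univ v))⟩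
  rcases Nat.eq_zero_or_pos (Nat.find hex) with h0 | hpos
  · right
    have := Nat.find_spec hex
    rw [h0] at this
    simpa using this
  · left
    obtain ⟨t, ht⟩ : ∃ t, Nat.find hex = t + 1 := ⟨Nat.find hex - 1, by omega⟩
    set A := (bstep G)^[t] S with hA
    have hAne : A ≠ univ := Nat.find_min hex (by omega)
    have hstep : bstep G A = univ := by
      have := Nat.find_spec hex
      rw [ht, Function.iterate_succ_apply'] at this
      exact this
    have hinv := bstep_invariant G S t
    have hlast := last_step G hdeg hstep hAne
    have hcards : (univ \ A).card + A.card = (univ : Finset V).card :=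
      card_sdiff_add_card_eq_card (subset_univ A)
    have hE2univ : E2 G univ = 4 * Fintype.card V := by
      rw [E2]
      rw [sum_congr rfl (fun v _ => hdeg v), sum_const, card_univ]
      ring
    have hcu : (univ : Finset V).card = Fintype.card V := card_univ
    rw [← hA] at hinv
    omega

end Lower
section Upper
open Finset
variable (m n : ℕ) [NeZero m] [NeZero n]

def vx (i j : ℕ) : ZMod m × ZMod n := (((i : ℕ) : ZMod m), ((j : ℕ) : ZMod n))

def seedSet : Finset (ZMod m × ZMod n) :=
  univ.filter (fun v => (v.2.val % 3 = 0 ∧ v.1.val % 2 = 0) ∨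
    (v.2.val % 3 = 1 ∧ v.1.val % 2 = 1) ∨ (v.2.val % 3 = 2 ∧ v.1 = 0))

variable {m n}

lemma vx_up (i j : ℕ) : vx m n (i+1) j = ((vx m n i j).1 + 1, (vx m n i j).2) := by
  simp [vx]

lemma vx_right (i j : ℕ) : vx m n i (j+1) = ((vx m n i j).1, (vx m n i j).2 + 1) := by
  simp [vx]

variable (hm : 3 ≤ m) (hn : 3 ≤ n)
include hm hn

lemma adj_vx_up (i j : ℕ) : (toroidalMesh m n).Adj (vx m n i j) (vx m n (i+1) j) := by
  rw [vx_up]; exact tm_adj_up hm hn _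

lemma adj_vx_right (i j : ℕ) : (toroidalMesh m n).Adj (vx m n i j) (vx m n i (j+1)) := by
  rw [vx_right]; exact tm_adj_right hm hn _

omit hm hn

lemma cast_inj_of_lt {a b : ℕ} (ha : a < m) (hb : b < m) (h : (a : ZMod m) = b) : a = b := by
  have := congrArg ZMod.val h
  rwa [ZMod.val_cast_of_lt ha, ZMod.val_cast_of_lt hb] at this

lemma vx_ne_fst {i i' j j' : ℕ} (hi : i < m) (hi' : i' < m) (h : i ≠ i') :
    vx m n i j ≠ vx m n i' j' := fun e => h (cast_inj_of_lt hi hi' (congrArg Prod.fst e))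

lemma vx_ne_snd {i i' j j' : ℕ} (hj : j < n) (hj' : j' < n) (h : j ≠ j') :
    vx m n i j ≠ vx m n i' j' := fun e => h (cast_inj_of_lt hj hj' (congrArg Prod.snd e))

lemma mem_seed {i j : ℕ} (hi : i < m) (hj : j < n)
    (h : (j % 3 = 0 ∧ i % 2 = 0) ∨ (j % 3 = 1 ∧ i % 2 = 1) ∨ (j % 3 = 2 ∧ i = 0)) :
    vx m n i j ∈ seedSet m n := by
  rw [seedSet, mem_filter]
  refine ⟨mem_univ _, ?_⟩
  have h1 : (vx m n i j).1.val = i := ZMod.val_cast_of_lt hi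
  have h2 : (vx m n i j).2.val = j := ZMod.val_cast_of_lt hj
  rw [h1, h2]
  rcases h with h | h | ⟨ha, hb⟩
  · exact Or.inl h
  · exact Or.inr (Or.inl h)
  · subst hb
    exact Or.inr (Or.inr ⟨ha, by simp [vx]⟩)

/-- shorthand -/
def actv (v : ZMod m × ZMod n) : Prop :=
  Activated (toroidalMesh m n) (fun _ => 3) (↑(seedSet m n)) v

lemma actv_seed {v : ZMod m × ZMod n} (h : v ∈ seedSet m n) : actv v :=
  Activated.base (Finset.mem_coe.2 h)

lemma act3_s17 {v a b c : ZMod m × ZMod n}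
    (ha : (toroidalMesh m n).Adj a v) (hb : (toroidalMesh m n).Adj b v)
    (hc : (toroidalMesh m n).Adj c v)
    (hab : a ≠ b) (hac : a ≠ c) (hbc : b ≠ c)
    (Ha : actv a) (Hb : actv b) (Hc : actv c) : actv v := by
  refine Activated.step ({a, b, c} : Finset _) ?_ ?_ ?_
  · intro u hu
    rcases Finset.mem_insert.1 hu with rfl | hu
    · exact ha
    rcases Finset.mem_insert.1 hu with rfl | hu
    · exact hb
    · rw [Finset.mem_singleton] at hu; subst hu; exact hc
  · rw [Finset.card_insert_of_notMem (by simp [hab, hac]),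
      Finset.card_insert_of_notMem (by simp [hbc]), Finset.card_singleton]
  · intro u hu
    rcases Finset.mem_insert.1 hu with rfl | hu
    · exact Ha
    rcases Finset.mem_insert.1 hu with rfl | hu
    · exact Hb
    · rw [Finset.mem_singleton] at hu; subst hu; exact Hc

include hm hn

lemma stage1_zero {j : ℕ} (hj : j < n) (hj3 : j % 3 = 1) : actv (vx m n 0 j) := by
  have hj1 : 1 ≤ j := by omega
  -- neighbor a = vx 0 (j-1), seed
  have hadja : (toroidalMesh m n).Adj (vx m n 0 (j-1)) (vx m n 0 j) := by
    have := adj_vx_right hm hn 0 (j-1)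
    rwa [show j - 1 + 1 = j by omega] at this
  have hsa : vx m n 0 (j-1) ∈ seedSet m n :=
    mem_seed (by omega) (by omega) (Or.inl ⟨by omega, by omega⟩)
  -- neighbor b = vx 1 j, seed
  have hadjb : (toroidalMesh m n).Adj (vx m n 1 j) (vx m n 0 j) :=
    ((toroidalMesh m n).adj_comm _ _).1 (adj_vx_up hm hn 0 j)
  have hsb : vx m n 1 j ∈ seedSet m n :=
    mem_seed (by omega) hj (Or.inr (Or.inl ⟨hj3, by omega⟩))
  -- neighbor c = vx 0 (j+1), seed (two cases)
  have hadjc : (toroidalMesh m n).Adj (vx m n 0 (j+1)) (vx m n 0 j) :=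
    ((toroidalMesh m n).adj_comm _ _).1 (adj_vx_right hm hn 0 j)
  have hsc : vx m n 0 (j+1) ∈ seedSet m n := by
    rcases Nat.lt_or_ge (j+1) n with h | h
    · exact mem_seed (by omega) h (Or.inr (Or.inr ⟨by omega, rfl⟩))
    · have hjn : j + 1 = n := by omega
      have : vx m n 0 (j+1) = vx m n 0 0 := by
        rw [vx, vx, hjn]; simp
      rw [this]
      exact mem_seed (by omega) (by omega) (Or.inl ⟨by omega, by omega⟩)
  refine act3_s17 hadja hadjb hadjc ?_ ?_ ?_ (actv_seed hsa) (actv_seed hsb) (actv_seed hsc)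
  · exact vx_ne_fst (by omega) (by omega) (by omega)
  · rcases Nat.lt_or_ge (j+1) n with h | h
    · exact vx_ne_snd (by omega) h (by omega)
    · have hjn : j + 1 = n := by omega
      have hc0 : vx m n 0 (j+1) = vx m n 0 0 := by rw [vx, vx, hjn]; simp
      rw [hc0]
      exact vx_ne_snd (by omega) (by omega) (by omega)
  · exact vx_ne_fst (by omega) (by omega) (by omega)

lemma stage1 {i j : ℕ} (hi : i < m) (hj : j < n) (hj3 : j % 3 = 1) : actv (vx m n i j) := by
  rcases Nat.eq_zero_or_pos i with rfl | hipos
  · exact stage1_zero hm hn hj hj3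
  rcases Nat.even_or_odd i with hie | hio
  swap
  · exact actv_seed (mem_seed hi hj (Or.inr (Or.inl ⟨hj3, Nat.odd_iff.1 hio⟩)))
  have hie2 : i % 2 = 0 := Nat.even_iff.1 hie
  have hj1 : 1 ≤ j := by omega
  -- a = vx i (j-1) seed
  have hadja : (toroidalMesh m n).Adj (vx m n i (j-1)) (vx m n i j) := by
    have := adj_vx_right hm hn i (j-1)
    rwa [show j - 1 + 1 = j by omega] at this
  have hsa : vx m n i (j-1) ∈ seedSet m n :=
    mem_seed hi (by omega) (Or.inl ⟨by omega, hie2⟩)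
  -- b = vx (i-1) j seed
  have hadjb : (toroidalMesh m n).Adj (vx m n (i-1) j) (vx m n i j) := by
    have := adj_vx_up hm hn (i-1) j
    rwa [show i - 1 + 1 = i by omega] at this
  have hsb : vx m n (i-1) j ∈ seedSet m n :=
    mem_seed (by omega) hj (Or.inr (Or.inl ⟨hj3, by omega⟩))
  -- c = vx (i+1) j : seed if i+1<m, else actv via stage1_zero
  have hadjc : (toroidalMesh m n).Adj (vx m n (i+1) j) (vx m n i j) :=
    ((toroidalMesh m n).adj_comm _ _).1 (adj_vx_up hm hn i j)
  rcases Nat.lt_or_ge (i+1) m with h | h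
  · have hsc : vx m n (i+1) j ∈ seedSet m n :=
      mem_seed h hj (Or.inr (Or.inl ⟨hj3, by omega⟩))
    refine act3_s17 hadja hadjb hadjc ?_ ?_ ?_ (actv_seed hsa) (actv_seed hsb) (actv_seed hsc)
    · exact vx_ne_snd (by omega) hj (by omega)
    · exact vx_ne_snd (by omega) hj (by omega)
    · exact vx_ne_fst (by omega) h (by omega)
  · have him : i + 1 = m := by omega
    have hc0 : vx m n (i+1) j = vx m n 0 j := by rw [vx, vx, him]; simp
    have hc : actv (vx m n (i+1) j) := by rw [hc0]; exact stage1_zero hm hn hj hj3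
    refine act3_s17 hadja hadjb hadjc ?_ ?_ ?_ (actv_seed hsa) (actv_seed hsb) hc
    · exact vx_ne_snd (by omega) hj (by omega)
    · rw [hc0]; exact vx_ne_snd (by omega) hj (by omega)
    · rw [hc0]; exact vx_ne_fst (by omega) (by omega) (by omega)

end Upper
section Upper2
open Finset
variable {m n : ℕ} [NeZero m] [NeZero n] (hm : 3 ≤ m) (hn : 3 ≤ n)
include hm hn

lemma stage1' (i : ℕ) {j : ℕ} (hj : j < n) (hj3 : j % 3 = 1) : actv (vx m n i j) := by
  have hcast : ((i : ℕ) : ZMod m) = ((i % m : ℕ) : ZMod m) := (ZMod.natCast_mod i m).symm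
  have : vx m n i j = vx m n (i % m) j := by rw [vx, vx, hcast]
  rw [this]
  exact stage1 hm hn (Nat.mod_lt i (by omega)) hj hj3

lemma stage2a {i j : ℕ} (hi : i < m) (hj : j + 1 < n) (hj3 : j % 3 = 0) :
    actv (vx m n i j) := by
  rcases Nat.even_or_odd i with hie | hio
  · exact actv_seed (mem_seed hi (by omega) (Or.inl ⟨hj3, Nat.even_iff.1 hie⟩))
  have hio2 : i % 2 = 1 := Nat.odd_iff.1 hio
  -- a = vx (i-1) j seed (i-1 even)
  have hadja : (toroidalMesh m n).Adj (vx m n (i-1) j) (vx m n i j) := by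
    have := adj_vx_up hm hn (i-1) j
    rwa [show i - 1 + 1 = i by omega] at this
  have hsa : vx m n (i-1) j ∈ seedSet m n :=
    mem_seed (by omega) (by omega) (Or.inl ⟨hj3, by omega⟩)
  -- b = vx (i+1) j seed (i+1 even, possibly wrapping)
  have hadjb : (toroidalMesh m n).Adj (vx m n (i+1) j) (vx m n i j) :=
    ((toroidalMesh m n).adj_comm _ _).1 (adj_vx_up hm hn i j)
  -- c = vx i (j+1) : stage1
  have hadjc : (toroidalMesh m n).Adj (vx m n i (j+1)) (vx m n i j) :=
    ((toroidalMesh m n).adj_comm _ _).1 (adj_vx_right hm hn i j)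
  have hc : actv (vx m n i (j+1)) := stage1 hm hn hi hj (by omega)
  have hac : vx m n (i-1) j ≠ vx m n i (j+1) := vx_ne_snd (by omega) hj (by omega)
  have hbc : vx m n (i+1) j ≠ vx m n i (j+1) := vx_ne_snd (by omega) hj (by omega)
  rcases Nat.lt_or_ge (i+1) m with h | h
  · have hsb : vx m n (i+1) j ∈ seedSet m n :=
      mem_seed h (by omega) (Or.inl ⟨hj3, by omega⟩)
    exact act3_s17 hadja hadjb hadjc (vx_ne_fst (by omega) h (by omega)) hac hbc
      (actv_seed hsa) (actv_seed hsb) hc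
  · have him : i + 1 = m := by omega
    have hb0 : vx m n (i+1) j = vx m n 0 j := by rw [vx, vx, him]; simp
    have hsb : vx m n (i+1) j ∈ seedSet m n := by
      rw [hb0]; exact mem_seed (by omega) (by omega) (Or.inl ⟨hj3, by omega⟩)
    refine act3_s17 hadja hadjb hadjc ?_ hac hbc (actv_seed hsa) (actv_seed hsb) hc
    rw [hb0]
    exact vx_ne_fst (by omega) (by omega) (by omega)

lemma stage2 {i j : ℕ} (hi : i < m) (hj : j < n) (hj3 : j % 3 = 0) :
    actv (vx m n i j) := by
  rcases Nat.lt_or_ge (j+1) n with hjn | hjn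
  · exact stage2a hm hn hi hjn hj3
  have hjn' : j + 1 = n := by omega
  rcases Nat.even_or_odd i with hie | hio
  · exact actv_seed (mem_seed hi hj (Or.inl ⟨hj3, Nat.even_iff.1 hie⟩))
  have hio2 : i % 2 = 1 := Nat.odd_iff.1 hio
  have hadja : (toroidalMesh m n).Adj (vx m n (i-1) j) (vx m n i j) := by
    have := adj_vx_up hm hn (i-1) j
    rwa [show i - 1 + 1 = i by omega] at this
  have hsa : vx m n (i-1) j ∈ seedSet m n :=
    mem_seed (by omega) hj (Or.inl ⟨hj3, by omega⟩)
  have hadjb : (toroidalMesh m n).Adj (vx m n (i+1) j) (vx m n i j) :=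
    ((toroidalMesh m n).adj_comm _ _).1 (adj_vx_up hm hn i j)
  have hadjc : (toroidalMesh m n).Adj (vx m n i (j+1)) (vx m n i j) :=
    ((toroidalMesh m n).adj_comm _ _).1 (adj_vx_right hm hn i j)
  have hc0 : vx m n i (j+1) = vx m n i 0 := by rw [vx, vx, hjn']; simp
  have hc : actv (vx m n i (j+1)) := by
    rw [hc0]
    exact stage2a hm hn hi (by omega) (by omega)
  have hac : vx m n (i-1) j ≠ vx m n i (j+1) := by
    rw [hc0]; exact vx_ne_snd hj (by omega) (by omega)
  have hbc : vx m n (i+1) j ≠ vx m n i (j+1) := by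
    rw [hc0]; exact vx_ne_snd hj (by omega) (by omega)
  rcases Nat.lt_or_ge (i+1) m with h | h
  · have hsb : vx m n (i+1) j ∈ seedSet m n :=
      mem_seed h hj (Or.inl ⟨hj3, by omega⟩)
    exact act3_s17 hadja hadjb hadjc (vx_ne_fst (by omega) h (by omega)) hac hbc
      (actv_seed hsa) (actv_seed hsb) hc
  · have him : i + 1 = m := by omega
    have hb0 : vx m n (i+1) j = vx m n 0 j := by rw [vx, vx, him]; simp
    have hsb : vx m n (i+1) j ∈ seedSet m n := by
      rw [hb0]; exact mem_seed (by omega) hj (Or.inl ⟨hj3, by omega⟩)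
    refine act3_s17 hadja hadjb hadjc ?_ hac hbc (actv_seed hsa) (actv_seed hsb) hc
    rw [hb0]
    exact vx_ne_fst (by omega) (by omega) (by omega)

lemma stage2' (i : ℕ) {j : ℕ} (hj : j < n) (hj3 : j % 3 = 0) : actv (vx m n i j) := by
  have hcast : ((i : ℕ) : ZMod m) = ((i % m : ℕ) : ZMod m) := (ZMod.natCast_mod i m).symm
  have : vx m n i j = vx m n (i % m) j := by rw [vx, vx, hcast]
  rw [this]
  exact stage2 hm hn (Nat.mod_lt i (by omega)) hj hj3

lemma stage3 {j : ℕ} (hj : j < n) (hj3 : j % 3 = 2) (k : ℕ) : actv (vx m n k j) := by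
  induction k with
  | zero => exact actv_seed (mem_seed (by omega) hj (Or.inr (Or.inr ⟨hj3, rfl⟩)))
  | succ k ih =>
    have hadja : (toroidalMesh m n).Adj (vx m n k j) (vx m n (k+1) j) := adj_vx_up hm hn k j
    have hadjb : (toroidalMesh m n).Adj (vx m n (k+1) (j-1)) (vx m n (k+1) j) := by
      have := adj_vx_right hm hn (k+1) (j-1)
      rwa [show j - 1 + 1 = j by omega] at this
    have hb : actv (vx m n (k+1) (j-1)) := stage1' hm hn (k+1) (by omega) (by omega)
    have hadjc : (toroidalMesh m n).Adj (vx m n (k+1) (j+1)) (vx m n (k+1) j) :=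
      ((toroidalMesh m n).adj_comm _ _).1 (adj_vx_right hm hn (k+1) j)
    rcases Nat.lt_or_ge (j+1) n with h | h
    · have hc : actv (vx m n (k+1) (j+1)) := stage2' hm hn (k+1) h (by omega)
      exact act3_s17 hadja hadjb hadjc (vx_ne_snd hj (by omega) (by omega))
        (vx_ne_snd hj h (by omega)) (vx_ne_snd (by omega) h (by omega)) ih hb hc
    · have hjn' : j + 1 = n := by omega
      have hc0 : vx m n (k+1) (j+1) = vx m n (k+1) 0 := by rw [vx, vx, hjn']; simp
      have hc : actv (vx m n (k+1) (j+1)) := by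
        rw [hc0]
        exact stage2' hm hn (k+1) (by omega) (by omega)
      refine act3_s17 hadja hadjb hadjc (vx_ne_snd hj (by omega) (by omega)) ?_ ?_ ih hb hc
      · rw [hc0]; exact vx_ne_snd hj (by omega) (by omega)
      · rw [hc0]; exact vx_ne_snd (by omega) (by omega) (by omega)

lemma seed_percolates : ∀ v : ZMod m × ZMod n,
    Activated (toroidalMesh m n) (fun _ => 3) (↑(seedSet m n)) v := by
  intro v
  have hv : v = vx m n v.1.val v.2.val := by
    rw [vx, ZMod.natCast_rightInverse v.1, ZMod.natCast_rightInverse v.2]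
  rw [hv]
  have hj := ZMod.val_lt v.2
  have hi := ZMod.val_lt v.1
  rcases h3 : v.2.val % 3 with _ | c
  · exact stage2 hm hn hi hj h3
  · rcases c with _ | c
    · exact stage1 hm hn hi hj h3
    · have : v.2.val % 3 = 2 := by omega
      exact stage3 hm hn hj this v.1.val

end Upper2
section Card
open Finset

lemma card_zmod_filter (m : ℕ) [NeZero m] (p : ℕ → Prop) [DecidablePred p] :
    (univ.filter (fun i : ZMod m => p i.val)).card = ((range m).filter p).card := by
  apply card_bij (fun i _ => i.val)
  · intro a ha
    exact mem_filter.2 ⟨mem_range.2 (ZMod.val_lt a), (mem_filter.1 ha).2⟩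
  · intro a _ b _ h
    exact ZMod.val_injective m h
  · intro b hb
    have hb1 := mem_range.1 (mem_filter.1 hb).1
    refine ⟨(b : ZMod m), mem_filter.2 ⟨mem_univ _, ?_⟩, ?_⟩
    · rw [ZMod.val_cast_of_lt hb1]; exact (mem_filter.1 hb).2
    · rw [ZMod.val_cast_of_lt hb1]

lemma card_range_even (M : ℕ) : ((range M).filter (fun a => a % 2 = 0)).card = (M+1)/2 := by
  induction M with
  | zero => simp
  | succ M ih =>
    rw [range_add_one, filter_insert]
    by_cases h : M % 2 = 0
    · rw [if_pos h, card_insert_of_notMem (by simp)]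
      omega
    · rw [if_neg h]
      omega

lemma card_range_odd (M : ℕ) : ((range M).filter (fun a => a % 2 = 1)).card = M/2 := by
  induction M with
  | zero => simp
  | succ M ih =>
    rw [range_add_one, filter_insert]
    by_cases h : M % 2 = 1
    · rw [if_pos h, card_insert_of_notMem (by simp)]
      omega
    · rw [if_neg h]
      omega

variable {m n : ℕ} [NeZero m] [NeZero n]

lemma col_card (j : ZMod n) :
    (univ.filter (fun i : ZMod m => (j.val % 3 = 0 ∧ i.val % 2 = 0) ∨
      (j.val % 3 = 1 ∧ i.val % 2 = 1) ∨ (j.val % 3 = 2 ∧ i = 0))).card =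
    (if j.val % 3 = 0 then (m+1)/2 else if j.val % 3 = 1 then m/2 else 1) := by
  by_cases h0 : j.val % 3 = 0
  · rw [if_pos h0,
      filter_congr (fun i _ => by simp [h0] : ∀ i ∈ univ, _ ↔ (fun i : ZMod m => i.val % 2 = 0) i),
      card_zmod_filter m (fun a => a % 2 = 0), card_range_even]
  by_cases h1 : j.val % 3 = 1
  · rw [if_neg h0, if_pos h1,
      filter_congr (fun i _ => by simp [h1, (by omega : ¬ (1:ℕ) = 0)] :
        ∀ i ∈ univ, _ ↔ (fun i : ZMod m => i.val % 2 = 1) i),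
      card_zmod_filter m (fun a => a % 2 = 1), card_range_odd]
  · have h2 : j.val % 3 = 2 := by omega
    rw [if_neg h0, if_neg h1,
      filter_congr (fun i _ => by simp [h2] : ∀ i ∈ univ, _ ↔ (fun i : ZMod m => i = 0) i),
      filter_eq' univ (0 : ZMod m), if_pos (mem_univ _), card_singleton]

lemma seedSet_fiber (j : ZMod n) :
    (seedSet m n).filter (fun v => v.2 = j) =
      (univ.filter (fun i : ZMod m => (j.val % 3 = 0 ∧ i.val % 2 = 0) ∨
        (j.val % 3 = 1 ∧ i.val % 2 = 1) ∨ (j.val % 3 = 2 ∧ i = 0))).image (fun i => (i, j)) := by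
  ext ⟨x, y⟩
  simp only [seedSet, mem_filter, mem_univ, true_and, mem_image]
  constructor
  · rintro ⟨hp, rfl⟩
    exact ⟨x, hp, rfl⟩
  · rintro ⟨i, hi, heq⟩
    obtain ⟨rfl, rfl⟩ : i = x ∧ j = y := by
      have h1 := congrArg Prod.fst heq
      have h2 := congrArg Prod.snd heq
      exact ⟨h1, h2⟩
    exact ⟨hi, rfl⟩

lemma seedSet_card : (seedSet m n).card =
    ∑ j : ZMod n, (if j.val % 3 = 0 then (m+1)/2 else if j.val % 3 = 1 then m/2 else 1) := by
  rw [card_eq_sum_card_fiberwise (f := Prod.snd) (t := univ) (fun x _ => mem_univ x.2)]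
  apply Finset.sum_congr rfl
  intro j _
  rw [seedSet_fiber j, card_image_of_injective _ (fun a b h => congrArg Prod.fst h),
    col_card]

end Card
section Final
open Finset

lemma sum_zmod_to_range (n : ℕ) [NeZero n] (g : ℕ → ℕ) :
    ∑ j : ZMod n, g j.val = ∑ a ∈ range n, g a := by
  apply sum_bij (fun j _ => j.val)
  · intro a _; exact mem_range.2 (ZMod.val_lt a)
  · intro a _ b _ h; exact ZMod.val_injective n h
  · intro b hb
    exact ⟨(b : ZMod n), mem_univ _, ZMod.val_cast_of_lt (mem_range.1 hb)⟩
  · intro a _; rfl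

lemma sum_col_bound (m N : ℕ) :
    (∑ a ∈ range N, (if a % 3 = 0 then (m+1)/2 else if a % 3 = 1 then m/2 else 1)) ≤
      N/3*(m+1) + (if N % 3 = 0 then 0 else if N % 3 = 1 then (m+1)/2 else m) := by
  induction N with
  | zero => simp
  | succ N ih =>
    rw [sum_range_succ]
    by_cases h0 : N % 3 = 0
    · have e1 : (N+1) % 3 = 1 := by omega
      have e2 : (N+1)/3 = N/3 := by omega
      simp only [h0, e1, e2] at ih ⊢
      norm_num at ih ⊢
      omega
    by_cases h1 : N % 3 = 1
    · have e1 : (N+1) % 3 = 2 := by omega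
      have e2 : (N+1)/3 = N/3 := by omega
      simp only [h1, e1, e2] at ih ⊢
      norm_num at ih ⊢
      omega
    · have h2 : N % 3 = 2 := by omega
      have e1 : (N+1) % 3 = 0 := by omega
      have e3 : (N+1)/3 = N/3 + 1 := by omega
      simp only [h2, e1, e3, Nat.add_mul, one_mul] at ih ⊢
      norm_num at ih ⊢
      omega

lemma seedSet_card_le (m n : ℕ) [NeZero m] [NeZero n] :
    (seedSet m n).card ≤ (n+2)/3*(m+1) := by
  rw [seedSet_card, sum_zmod_to_range n
    (fun a => if a % 3 = 0 then (m+1)/2 else if a % 3 = 1 then m/2 else 1)]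
  have h1 := sum_col_bound m n
  have h2 : n/3*(m+1) + (if n % 3 = 0 then 0 else if n % 3 = 1 then (m+1)/2 else m) ≤
      (n+2)/3*(m+1) := by
    split_ifs with g0 g1
    · have e : (n+2)/3 = n/3 := by omega
      rw [e]
      omega
    · have e : (n+2)/3 = n/3 + 1 := by omega
      rw [e, Nat.add_mul, one_mul]
      omega
    · have e : (n+2)/3 = n/3 + 1 := by omega
      rw [e, Nat.add_mul, one_mul]
      omega
  omega

lemma upper_tm (m n : ℕ) [NeZero m] [NeZero n] (hm : 3 ≤ m) (hn : 3 ≤ n) :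
    minSeed (toroidalMesh m n) (fun _ => 3) ≤ (n+2)/3*(m+1) := by
  refine le_trans (Nat.sInf_le ?_) (seedSet_card_le m n)
  exact ⟨seedSet m n, rfl, seed_percolates hm hn⟩

lemma tm_adj_swap {m n : ℕ} [NeZero m] [NeZero n] {a b : ZMod n × ZMod m}
    (h : (toroidalMesh n m).Adj a b) : (toroidalMesh m n).Adj a.swap b.swap := by
  rw [toroidalMesh, SimpleGraph.fromRel_adj] at h ⊢
  obtain ⟨hne, hr⟩ := h
  refine ⟨fun e => hne (Prod.swap_injective e), ?_⟩
  simp only [Prod.fst_swap, Prod.snd_swap]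
  rcases hr with (⟨u1, u2⟩ | ⟨u1, u2⟩) | (⟨u1, u2⟩ | ⟨u1, u2⟩)
  · exact Or.inl (Or.inr ⟨u2.symm, u1⟩)
  · exact Or.inl (Or.inl ⟨u2, u1.symm⟩)
  · exact Or.inr (Or.inr ⟨u2.symm, u1⟩)
  · exact Or.inr (Or.inl ⟨u2, u1.symm⟩)

lemma act_swap {m n : ℕ} [NeZero m] [NeZero n] (S : Finset (ZMod n × ZMod m))
    {v : ZMod n × ZMod m} (h : Activated (toroidalMesh n m) (fun _ => 3) ↑S v) :
    Activated (toroidalMesh m n) (fun _ => 3) ↑(S.image Prod.swap) v.swap := by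
  induction h with
  | base hv =>
    refine Activated.base ?_
    rw [Finset.coe_image]
    exact Set.mem_image_of_mem _ hv
  | step T hadj hcard hact ih =>
    refine Activated.step (T.image Prod.swap) ?_ ?_ ?_
    · intro u hu
      obtain ⟨u', hu', rfl⟩ := Finset.mem_image.1 hu
      exact tm_adj_swap (hadj u' hu')
    · rw [Finset.card_image_of_injective _ Prod.swap_injective]
      exact hcard
    · intro u hu
      obtain ⟨u', hu', rfl⟩ := Finset.mem_image.1 hu
      exact ih u' hu'

/-- For `m, n ≥ 3`,
`⌈(mn+1)/3⌉ ≤ min-seed(C_m □ C_n, 3) ≤ min{⌈m/3⌉(n+1), ⌈n/3⌉(m+1)}`. -/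
theorem minSeed_toroidalMesh_bounds (m n : ℕ) [NeZero m] [NeZero n]
    (hm : 3 ≤ m) (hn : 3 ≤ n) :
    (m * n + 3) / 3 ≤ minSeed (toroidalMesh m n) (fun _ => 3) ∧
    minSeed (toroidalMesh m n) (fun _ => 3) ≤
      min ((m + 2) / 3 * (n + 1)) ((n + 2) / 3 * (m + 1)) := by
  classical
  have hcardV : Fintype.card (ZMod m × ZMod n) = m * n := by
    rw [Fintype.card_prod, ZMod.card, ZMod.card]
  constructor
  · apply le_csInf
    · exact ⟨(univ : Finset (ZMod m × ZMod n)).card, univ, rfl,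
        fun v => Activated.base (by simp)⟩
    · rintro k ⟨S, rfl, hall⟩
      have hdeg : ∀ v, nbc (toroidalMesh m n) univ v = 4 := by
        intro v
        rw [nbc]
        exact tm_deg hm hn v
      rcases lower_core (toroidalMesh m n) hdeg S hall with h | rfl
      · rw [hcardV] at h
        obtain ⟨N, hN⟩ : ∃ N, m * n = N := ⟨_, rfl⟩
        rw [hN] at h ⊢
        omega
      · rw [card_univ, hcardV]
        have h9 : 9 ≤ m * n := by
          calc 9 = 3 * 3 := rfl
          _ ≤ m * n := Nat.mul_le_mul hm hn
        obtain ⟨N, hN⟩ : ∃ N, m * n = N := ⟨_, rfl⟩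
        rw [hN] at h9 ⊢
        omega
  · refine le_min ?_ (upper_tm m n hm hn)
    have hmem : ((seedSet n m).image Prod.swap).card ∈
        {k | ∃ S : Finset (ZMod m × ZMod n), S.card = k ∧
          ∀ v, Activated (toroidalMesh m n) (fun _ => 3) (↑S) v} := by
      refine ⟨(seedSet n m).image Prod.swap, rfl, fun v => ?_⟩
      have := act_swap (seedSet n m) (seed_percolates hn hm v.swap)
      simpa using this
    refine le_trans (Nat.sInf_le hmem) ?_
    rw [Finset.card_image_of_injective _ Prod.swap_injective]
    exact seedSet_card_le n m

end Final
end

section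
/- For the n-cycle C_n (n ≥ 3) with constant threshold 2, the minimum size of a target set activating all of C_n equals ⌈n/2⌉. -/
/-- The `n`-cycle on vertices `ZMod n`, with edges between consecutive elements. -/
def cycleGraph (n : ℕ) [NeZero n] : SimpleGraph (ZMod n) :=
  SimpleGraph.fromRel (fun a b => b = a + 1)

lemma activated_subset_closed {V : Type*} {G : SimpleGraph V} {θ : V → ℕ} {S : Set V}
    {A : Set V} (hSA : S ⊆ A)
    (hclosed : ∀ v (T : Finset V), (∀ u ∈ T, G.Adj u v) → θ v ≤ T.card →
      (∀ u ∈ T, u ∈ A) → v ∈ A) :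
    ∀ v, Activated G θ S v → v ∈ A := by
  intro v h
  induction h with
  | base h => exact hSA h
  | step T hadj hcard hact ih => exact hclosed _ T hadj hcard ih

lemma cycleGraph_adj (n : ℕ) [NeZero n] {u v : ZMod n} :
    (cycleGraph n).Adj u v ↔ u ≠ v ∧ (v = u + 1 ∨ u = v + 1) := by
  simp [cycleGraph, SimpleGraph.fromRel_adj]

lemma two_ne_zero_zmod_s19 (n : ℕ) (hn : 3 ≤ n) [NeZero n] : (2 : ZMod n) ≠ 0 := by
  intro h
  have h2 : ((2 : ℕ) : ZMod n) = 0 := by push_cast; exact h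
  have := ZMod.val_cast_of_lt (show 2 < n by omega)
  rw [h2] at this
  simp [ZMod.val_zero] at this

lemma one_ne_zero_zmod_s19 (n : ℕ) (hn : 3 ≤ n) [NeZero n] : (1 : ZMod n) ≠ 0 := by
  intro h
  have h2 : ((1 : ℕ) : ZMod n) = 0 := by push_cast; exact h
  have := ZMod.val_cast_of_lt (show 1 < n by omega)
  rw [h2] at this
  simp [ZMod.val_zero] at this

lemma sub_one_ne_add_one (n : ℕ) (hn : 3 ≤ n) [NeZero n] (v : ZMod n) :
    v - 1 ≠ v + 1 := by
  intro h
  exact two_ne_zero_zmod_s19 n hn (by linear_combination -h)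

lemma cycleGraph_neighbors (n : ℕ) (hn : 3 ≤ n) [NeZero n] {u v : ZMod n}
    (h : (cycleGraph n).Adj u v) : u = v - 1 ∨ u = v + 1 := by
  rw [cycleGraph_adj] at h
  rcases h.2 with h1 | h1
  · left; exact eq_sub_of_add_eq h1.symm
  · right; exact h1

lemma adj_sub_one (n : ℕ) (hn : 3 ≤ n) [NeZero n] (v : ZMod n) :
    (cycleGraph n).Adj (v - 1) v := by
  rw [cycleGraph_adj]
  refine ⟨?_, Or.inl (by ring)⟩
  intro h
  exact one_ne_zero_zmod_s19 n hn (by linear_combination -h)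

lemma adj_add_one (n : ℕ) (hn : 3 ≤ n) [NeZero n] (v : ZMod n) :
    (cycleGraph n).Adj (v + 1) v := by
  rw [cycleGraph_adj]
  refine ⟨?_, Or.inr rfl⟩
  intro h
  exact one_ne_zero_zmod_s19 n hn (by linear_combination h)

/-- If `T` witnesses an activation step at `v`, then `T = {v-1, v+1}`. -/
lemma step_T_eq (n : ℕ) (hn : 3 ≤ n) [NeZero n] {v : ZMod n} {T : Finset (ZMod n)}
    (hadj : ∀ u ∈ T, (cycleGraph n).Adj u v) (hcard : 2 ≤ T.card) :
    v - 1 ∈ T ∧ v + 1 ∈ T := by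
  have hsub : T ⊆ {v - 1, v + 1} := by
    intro u hu
    rcases cycleGraph_neighbors n hn (hadj u hu) with h | h <;> simp [h]
  have hc2 : ({v - 1, v + 1} : Finset (ZMod n)).card = 2 :=
    Finset.card_pair (sub_one_ne_add_one n hn v)
  have := Finset.eq_of_subset_of_card_le hsub (by omega)
  rw [this]
  simp

/-- For `n ≥ 3`, `min-seed(C_n, 2) = ⌈n/2⌉`. -/
theorem minSeed_cycleGraph (n : ℕ) [NeZero n] (hn : 3 ≤ n) :
    minSeed (cycleGraph n) (fun _ => 2) = (n + 1) / 2 := by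
  classical
  have hnpos : 0 < n := by omega
  -- the seed set of even residues
  set S : Finset (ZMod n) :=
    (Finset.range ((n + 1) / 2)).image (fun k => ((2 * k : ℕ) : ZMod n)) with hS
  have hval : ∀ k ∈ Finset.range ((n + 1) / 2), ((2 * k : ℕ) : ZMod n).val = 2 * k := by
    intro k hk
    rw [Finset.mem_range] at hk
    exact ZMod.val_cast_of_lt (by omega)
  have hScard : S.card = (n + 1) / 2 := by
    rw [hS, Finset.card_image_of_injOn, Finset.card_range]
    intro a ha b hb hab
    have h1 := hval a ha
    have h2 := hval b hb
    have hab' : ((2 * a : ℕ) : ZMod n) = ((2 * b : ℕ) : ZMod n) := hab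
    rw [hab'] at h1
    omega
  have hmemS : ∀ v : ZMod n, v ∈ S ↔ v.val % 2 = 0 := by
    intro v
    constructor
    · intro hv
      rw [hS, Finset.mem_image] at hv
      obtain ⟨k, hk, rfl⟩ := hv
      rw [hval k hk]
      omega
    · intro hv
      rw [hS, Finset.mem_image]
      have hlt : v.val < n := ZMod.val_lt v
      refine ⟨v.val / 2, ?_, ?_⟩
      · rw [Finset.mem_range]
        omega
      · have h2 : 2 * (v.val / 2) = v.val := by omega
        rw [h2, ZMod.natCast_val, ZMod.cast_id]
  -- every vertex is activated from S
  have hact : ∀ v : ZMod n, Activated (cycleGraph n) (fun _ => 2) (↑S) v := by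
    intro v
    by_cases hv : v ∈ S
    · exact Activated.base hv
    · -- v has odd val; both neighbors are in S
      have hvodd : v.val % 2 = 1 := by
        have h0 : ¬ (v.val % 2 = 0) := fun h0 => hv ((hmemS v).mpr h0)
        omega
      have hvlt := ZMod.val_lt v
      have hveq : ((v.val : ℕ) : ZMod n) = v := by rw [ZMod.natCast_val, ZMod.cast_id]
      have hm1 : v - 1 ∈ S := by
        rw [hmemS]
        have h1 : ((v.val - 1 : ℕ) : ZMod n) = v - 1 := by
          push_cast [Nat.cast_sub (show 1 ≤ v.val by omega)]
          rw [hveq]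
        rw [← h1, ZMod.val_cast_of_lt (by omega)]
        omega
      have hp1 : v + 1 ∈ S := by
        rw [hmemS]
        have h1 : ((v.val + 1 : ℕ) : ZMod n) = v + 1 := by
          push_cast
          rw [hveq]
        by_cases htop : v.val + 1 = n
        · have h0 : v + 1 = 0 := by
            rw [← h1, htop, ZMod.natCast_self]
          rw [h0, ZMod.val_zero]
        · rw [← h1, ZMod.val_cast_of_lt (by omega)]
          omega
      refine Activated.step {v - 1, v + 1} ?_ ?_ ?_
      · intro u hu
        rcases Finset.mem_insert.mp hu with rfl | hu
        · exact adj_sub_one n hn v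
        · rw [Finset.mem_singleton] at hu
          subst hu
          exact adj_add_one n hn v
      · rw [Finset.card_pair (sub_one_ne_add_one n hn v)]
      · intro u hu
        rcases Finset.mem_insert.mp hu with rfl | hu
        · exact Activated.base hm1
        · rw [Finset.mem_singleton] at hu
          subst hu
          exact Activated.base hp1
  have hmem : (n + 1) / 2 ∈ {k | ∃ S : Finset (ZMod n), S.card = k ∧
      ∀ v, Activated (cycleGraph n) (fun _ => 2) (↑S) v} := ⟨S, hScard, hact⟩
  refine le_antisymm (Nat.sInf_le hmem) (le_csInf ⟨_, hmem⟩ ?_)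
  rintro k ⟨W, rfl, hW⟩
  -- lower bound: W meets every adjacent pair
  have hpair : ∀ v : ZMod n, v ∈ W ∨ v + 1 ∈ W := by
    intro v
    by_contra hcon
    push_neg at hcon
    obtain ⟨h1, h2⟩ := hcon
    set A : Set (ZMod n) := {u | u ≠ v ∧ u ≠ v + 1} with hA
    have hvA : v ∈ A :=
      activated_subset_closed (A := A)
        (by intro u hu; exact ⟨fun h => h1 (h ▸ hu), fun h => h2 (h ▸ hu)⟩)
        (by
          intro u T hadj hcard hTA
          by_contra huA
          have hu : u = v ∨ u = v + 1 := by
            by_contra h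
            push_neg at h
            exact huA ⟨h.1, h.2⟩
          obtain ⟨hT1, hT2⟩ := step_T_eq n hn hadj hcard
          rcases hu with rfl | rfl
          · exact (hTA _ hT2).2 rfl
          · have heq : v + 1 - 1 = v := by ring
            rw [heq] at hT1
            exact (hTA _ hT1).1 rfl)
        v (hW v)
    exact hvA.1 rfl
  -- counting: map each v to an element of W among {v, v+1}
  set f : ZMod n → ZMod n := fun v => if v ∈ W then v else v + 1 with hf
  have hmaps : ∀ v ∈ (Finset.univ : Finset (ZMod n)), f v ∈ W := by
    intro v _
    rw [hf]
    by_cases hv : v ∈ W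
    · simpa [hv]
    · rcases hpair v with h | h
      · exact absurd h hv
      · simpa [hv]
  have hfib : ∀ b ∈ W, (Finset.univ.filter fun v => f v = b).card ≤ 2 := by
    intro b _
    have hsub : (Finset.univ.filter fun v => f v = b) ⊆ {b, b - 1} := by
      intro v hv
      rw [Finset.mem_filter] at hv
      rw [hf] at hv
      by_cases hvW : v ∈ W
      · simp only [hvW, if_pos] at hv
        simp [hv.2]
      · simp only [hvW, if_neg, if_false] at hv
        have : v = b - 1 := by
          have := hv.2
          rw [← this]; ring
        simp [this]
    calc (Finset.univ.filter fun v => f v = b).card ≤ ({b, b - 1} : Finset (ZMod n)).card :=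
          Finset.card_le_card hsub
      _ ≤ 2 := Finset.card_insert_le _ _ |>.trans (by simp)
  have hcount := Finset.card_le_mul_card_image_of_maps_to hmaps 2 (by
    intro b hb
    by_cases hbW : b ∈ W
    · exact hfib b hbW
    ·
      have : (Finset.univ.filter fun v => f v = b) = ∅ := by
        rw [Finset.filter_eq_empty_iff]
        intro v _
        intro hfv
        exact hbW (hfv ▸ hmaps v (Finset.mem_univ v))
      rw [this]; simp)
  have himg : (Finset.univ.image f).card ≤ W.card :=
    Finset.card_le_card (by
      intro b hb
      rw [Finset.mem_image] at hb
      obtain ⟨v, _, rfl⟩ := hb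
      exact hmaps v (Finset.mem_univ v))
  have hcardV : (Finset.univ : Finset (ZMod n)).card = n := by
    rw [Finset.card_univ, ZMod.card]
  omega
end
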